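/- arXiv:2112.12732 — 9 statements merged into one kernel-verified Lean document; each statement's English description precedes it below -/
import Mathlib

section
/- For any prime p > 2 and integer j with 0 ≤ j ≤ (p-1)/2, one has C(3j, j) · C(p+2j, 3j+1) ≡ (p·(-1)^j/(3j+1)) · (1 + p·H_{2j} - p·H_j) (mod p^3). -/
open Finset

section S0

variable {p : ℕ} [hp : Fact p.Prime]

lemma norm_int_eq_one (n : ℤ) (h : ¬ (p:ℤ) ∣ n) : ‖(n : ℚ_[p])‖ = 1 := by
  have h1 : ‖(n : ℚ_[p])‖ ≤ 1 := Padic.norm_int_le_one n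
  have h2 : ¬ ‖(n : ℚ_[p])‖ < 1 := fun hc => h ((Padic.norm_intCast_lt_one_iff (k := n)).mp hc)
  linarith [lt_or_ge (‖(n : ℚ_[p])‖) 1]

lemma norm_nat_eq_one (n : ℕ) (h : ¬ p ∣ n) : ‖(n : ℚ_[p])‖ = 1 := by
  have := norm_int_eq_one (p := p) n (by exact_mod_cast h)
  push_cast at this; exact this

-- rationals with norm ≤ 1 have denominator prime to p
lemma den_not_dvd (q : ℚ) (h : ‖(q : ℚ_[p])‖ ≤ 1) : ¬ p ∣ q.den := by
  intro hd
  have hnum : ¬ (p:ℤ) ∣ q.num := by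
    intro hn
    have hpd : (p:ℕ) ∣ q.num.natAbs := Int.natCast_dvd_natCast.mp (Int.dvd_natAbs.mpr hn)
    have : p ∣ 1 := q.reduced ▸ Nat.dvd_gcd hpd hd
    exact hp.out.one_lt.ne' (Nat.dvd_one.mp this)
  have hone : ‖((q.num : ℚ_[p]))‖ = 1 := norm_int_eq_one _ hnum
  have hden : ‖((q.den : ℤ) : ℚ_[p])‖ < 1 := by
    rw [Padic.norm_intCast_lt_one_iff]; exact_mod_cast hd
  have hdnz : ((q.den : ℚ)) ≠ 0 := by
    exact_mod_cast q.den_pos.ne'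
  have hq' : q * (q.den : ℚ) = (q.num : ℚ) :=
    ((div_eq_iff hdnz).mp (Rat.num_div_den q)).symm
  have hq : (q : ℚ_[p]) * ((q.den:ℕ) : ℚ_[p]) = ((q.num:ℤ) : ℚ_[p]) := by
    exact_mod_cast congrArg (fun x : ℚ => (x : ℚ_[p])) hq'
  have hnn := congrArg norm hq
  rw [norm_mul, hone] at hnn
  push_cast at hden hnn
  nlinarith [norm_nonneg ((q.den : ℚ_[p]))]
end S0

section S1

variable {p : ℕ} [hp : Fact p.Prime]

section ProdExpand

variable (u : ℕ → ℚ_[p])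

local notation "ε" => ((p:ℝ))⁻¹

lemma eps_pos : (0:ℝ) < ε := by
  have := hp.out.pos; positivity

lemma eps_le_one : ε ≤ (1:ℝ) := by
  have h1 : (1:ℝ) ≤ (p:ℝ) := by exact_mod_cast hp.out.one_lt.le
  rw [inv_le_one_iff₀]; right; exact h1

lemma norm_p' : ‖((p:ℕ) : ℚ_[p])‖ = ε := by
  exact_mod_cast Padic.norm_p (p := p)

lemma nonarch (a b : ℚ_[p]) : ‖a + b‖ ≤ max ‖a‖ ‖b‖ := Padic.nonarchimedean a b

lemma nonarch3 {a b c : ℚ_[p]} {C : ℝ} (ha : ‖a‖ ≤ C) (hb : ‖b‖ ≤ C) (hc : ‖c‖ ≤ C) :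
    ‖a + b + c‖ ≤ C := by
  refine le_trans (nonarch _ _) (max_le (le_trans (nonarch _ _) (max_le ha hb)) hc)

lemma L0 (s : Finset ℕ) (hu : ∀ i ∈ s, ‖u i‖ ≤ 1) :
    ‖∏ i ∈ s, (1 + p * u i)‖ ≤ 1 ∧ ‖(∏ i ∈ s, (1 + p * u i)) - 1‖ ≤ ε := by
  classical
  induction s using Finset.cons_induction with
  | empty => simp [eps_pos (p:=p), le_of_lt, (eps_pos (p:=p)).le]
  | cons a s ha ih =>
    have hua : ‖u a‖ ≤ 1 := hu a (mem_cons_self a s)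
    obtain ⟨ih1, ih2⟩ := ih (fun i hi => hu i (mem_cons_of_mem hi))
    have hpu : ‖(p:ℚ_[p]) * u a‖ ≤ ε := by
      rw [norm_mul, norm_p']
      nlinarith [norm_nonneg (u a), eps_pos (p := p)]
    constructor
    · rw [prod_cons, norm_mul]
      have h1 : ‖1 + (p:ℚ_[p]) * u a‖ ≤ 1 := by
        refine le_trans (nonarch _ _) (max_le (by simp) (le_trans hpu (eps_le_one)))
      nlinarith [norm_nonneg (∏ i ∈ s, (1 + (p:ℚ_[p]) * u i)), norm_nonneg (1 + (p:ℚ_[p]) * u a)]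
    · rw [prod_cons]
      have key : (1 + (p:ℚ_[p]) * u a) * ∏ i ∈ s, (1 + p * u i) - 1
          = ((∏ i ∈ s, (1 + p * u i)) - 1) + (p * u a) * ∏ i ∈ s, (1 + p * u i) := by ring
      rw [key]
      refine le_trans (nonarch _ _) (max_le ih2 ?_)
      rw [norm_mul]
      nlinarith [norm_nonneg ((p:ℚ_[p]) * u a), eps_pos (p:=p)]

lemma L1 (s : Finset ℕ) (hu : ∀ i ∈ s, ‖u i‖ ≤ 1) :
    ‖(∏ i ∈ s, (1 + p * u i)) - 1 - p * ∑ i ∈ s, u i‖ ≤ ε^2 := by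
  classical
  induction s using Finset.cons_induction with
  | empty => simp
  | cons a s ha ih =>
    have hua : ‖u a‖ ≤ 1 := hu a (mem_cons_self a s)
    have ih' := ih (fun i hi => hu i (mem_cons_of_mem hi))
    obtain ⟨_, h0⟩ := L0 u s (fun i hi => hu i (mem_cons_of_mem hi))
    rw [prod_cons, sum_cons]
    have key : (1 + (p:ℚ_[p]) * u a) * ∏ i ∈ s, (1 + p * u i) - 1 - p * (u a + ∑ i ∈ s, u i)
        = ((∏ i ∈ s, (1 + p * u i)) - 1 - p * ∑ i ∈ s, u i)
          + (p * u a) * ((∏ i ∈ s, (1 + p * u i)) - 1) := by ring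
    rw [key]
    refine le_trans (nonarch _ _) (max_le ih' ?_)
    rw [norm_mul, norm_mul, norm_p']
    have h2 : ε * ‖u a‖ * ‖(∏ i ∈ s, (1 + (p:ℚ_[p]) * u i)) - 1‖ ≤ ε * 1 * ε := by
      gcongr <;> first | exact hua | exact h0 | positivity
    exact le_of_le_of_eq h2 (by ring)

lemma L2 (s : Finset ℕ) (hu : ∀ i ∈ s, ‖u i‖ ≤ 1) :
    ‖(∏ i ∈ s, (1 + p * u i)) - 1 - p * ∑ i ∈ s, u i
      - p^2 * (((∑ i ∈ s, u i)^2 - ∑ i ∈ s, (u i)^2)/2)‖ ≤ ε^3 := by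
  classical
  induction s using Finset.cons_induction with
  | empty => simp
  | cons a s ha ih =>
    have hua : ‖u a‖ ≤ 1 := hu a (mem_cons_self a s)
    have ih' := ih (fun i hi => hu i (mem_cons_of_mem hi))
    have h1 := L1 u s (fun i hi => hu i (mem_cons_of_mem hi))
    rw [prod_cons, sum_cons, sum_cons]
    have key : (1 + (p:ℚ_[p]) * u a) * ∏ i ∈ s, (1 + p * u i) - 1 - p * (u a + ∑ i ∈ s, u i)
        - p^2 * (((u a + ∑ i ∈ s, u i)^2 - (u a^2 + ∑ i ∈ s, (u i)^2))/2)
        = ((∏ i ∈ s, (1 + p * u i)) - 1 - p * ∑ i ∈ s, u i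
            - p^2 * (((∑ i ∈ s, u i)^2 - ∑ i ∈ s, (u i)^2)/2))
          + (p * u a) * ((∏ i ∈ s, (1 + p * u i)) - 1 - p * ∑ i ∈ s, u i) := by ring
    rw [key]
    refine le_trans (nonarch _ _) (max_le ih' ?_)
    rw [norm_mul, norm_mul, norm_p']
    have h2 : ε * ‖u a‖ * ‖(∏ i ∈ s, (1 + (p:ℚ_[p]) * u i)) - 1 - p * ∑ i ∈ s, u i‖
        ≤ ε * 1 * ε^2 := by
      gcongr <;> first | exact hua | exact h1 | positivity
    exact le_of_le_of_eq h2 (by ring)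

end ProdExpand
end S1

section S2

lemma fact_aux (n : ℕ) : ∀ m : ℕ, (n + m).factorial = n.factorial * ∏ k ∈ range m, (n + 1 + k)
  | 0 => by simp
  | (m+1) => by
    rw [prod_range_succ, ← Nat.add_assoc, Nat.factorial_succ, fact_aux n m]
    ring

lemma lemA (p : ℕ) (hp3 : 3 ≤ p) (j : ℕ) (hj : 2 * j ≤ p - 1) :
    (((3*j).choose j : ℚ)) * ((p + 2*j).choose (3*j+1) : ℚ)
      = (p:ℚ) / (3*j+1) * ((∏ k ∈ range j, (((p:ℚ) - (k+1)) / (k+1)))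
          * ∏ k ∈ range (2*j), (((p:ℚ) + (k+1)) / (k+1))) := by
  have hj1 : j + 1 ≤ p := by omega
  have h1 : j ≤ 3*j := by omega
  have h2 : 3*j+1 ≤ p + 2*j := by omega
  rw [Nat.cast_choose ℚ h1, Nat.cast_choose ℚ h2]
  have hsub1 : 3*j - j = 2*j := by omega
  have hsub2 : p + 2*j - (3*j+1) = p - 1 - j := by omega
  rw [hsub1, hsub2]
  -- factorial expansion
  have hfact : (p + 2*j).factorial
      = (p - 1 - j).factorial * ∏ k ∈ range (3*j+1), ((p - 1 - j) + 1 + k) := by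
    have : (p - 1 - j) + (3*j + 1) = p + 2*j := by omega
    rw [← this, fact_aux]
  -- cast the product
  have hcastprod : ((∏ k ∈ range (3*j+1), ((p - 1 - j) + 1 + k) : ℕ) : ℚ)
      = ∏ k ∈ range (3*j+1), ((p:ℚ) - j + k) := by
    push_cast
    refine prod_congr rfl fun k _ => ?_
    have : ((p - 1 - j : ℕ) : ℚ) = (p:ℚ) - 1 - j := by
      have : ((p - 1 - j : ℕ) : ℚ) = ((p - (1 + j) : ℕ) : ℚ) := by norm_num [Nat.sub_sub]
      rw [this, Nat.cast_sub (by omega)]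
      push_cast; ring
    rw [this]; ring
  -- split the product
  have hsplit : (∏ k ∈ range (3*j+1), ((p:ℚ) - j + k))
      = (∏ k ∈ range j, ((p:ℚ) - (k+1))) * (p:ℚ) * ∏ k ∈ range (2*j), ((p:ℚ) + (k+1)) := by
    have e1 : 3*j+1 = j + (1 + 2*j) := by ring
    rw [e1, prod_range_add, prod_range_add]
    have e2 : (∏ k ∈ range j, ((p:ℚ) - j + k)) = ∏ k ∈ range j, ((p:ℚ) - (k+1)) := by
      rw [← prod_range_reflect (fun k => (p:ℚ) - j + k) j]
      refine prod_congr rfl fun k hk => ?_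
      have hk' : k < j := mem_range.mp hk
      have : ((j - 1 - k : ℕ) : ℚ) = (j:ℚ) - 1 - k := by
        rw [Nat.sub_sub, Nat.cast_sub (by omega)]
        push_cast; ring
      simp only [this]; ring
    rw [e2]
    simp only [prod_range_one]
    have e3 : (∏ x ∈ range (2*j), ((p:ℚ) - (j:ℚ) + ((j + (1 + x) : ℕ):ℚ))) = ∏ k ∈ range (2*j), ((p:ℚ) + (k+1)) := by
      refine prod_congr rfl fun k _ => by push_cast; ring
    have e4 : ((p:ℚ) - (j:ℚ) + ((j+0 : ℕ):ℚ)) = (p:ℚ) := by push_cast; ring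
    rw [e3, e4]
    ring
  -- now assemble
  have hfactq : ((p + 2*j).factorial : ℚ)
      = ((p - 1 - j).factorial : ℚ) * ((∏ k ∈ range j, ((p:ℚ) - (k+1))) * (p:ℚ)
          * ∏ k ∈ range (2*j), ((p:ℚ) + (k+1))) := by
    rw [hfact]; push_cast [hcastprod ▸ hsplit]
    rw [← hsplit, ← hcastprod]
  rw [hfactq]
  -- factorial of 3j+1
  have h3j : ((3*j+1).factorial : ℚ) = (3*j+1) * ((3*j).factorial : ℚ) := by
    rw [Nat.factorial_succ]; push_cast; ring
  rw [h3j]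
  -- products of (k+1) are factorials
  have hpj : (∏ k ∈ range j, ((k:ℚ)+1)) = (j.factorial : ℚ) := by
    exact_mod_cast congrArg (fun n : ℕ => (n:ℚ)) (prod_range_add_one_eq_factorial j)
  have hp2j : (∏ k ∈ range (2*j), ((k:ℚ)+1)) = ((2*j).factorial : ℚ) := by
    exact_mod_cast congrArg (fun n : ℕ => (n:ℚ)) (prod_range_add_one_eq_factorial (2*j))
  rw [prod_div_distrib, prod_div_distrib, hpj, hp2j]
  have hne1 : ((3*j).factorial : ℚ) ≠ 0 := by positivity
  have hne2 : (j.factorial : ℚ) ≠ 0 := by positivity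
  have hne3 : ((2*j).factorial : ℚ) ≠ 0 := by positivity
  have hne4 : ((p-1-j).factorial : ℚ) ≠ 0 := by positivity
  have hne5 : ((3:ℚ)*j+1) ≠ 0 := by positivity
  have hchoose : ((3*j).choose j : ℚ) = ((3*j).factorial : ℚ) / ((j.factorial : ℚ) * ((2*j).factorial : ℚ)) := by
    rw [Nat.cast_choose ℚ h1, hsub1]
  field_simp
end S2

section S3

variable {p : ℕ} [hp : Fact p.Prime]

lemma norm_int_eq_one' (n : ℤ) (h : ¬ (p:ℤ) ∣ n) : ‖(n : ℚ_[p])‖ = 1 := by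
  have h1 : ‖(n : ℚ_[p])‖ ≤ 1 := Padic.norm_int_le_one n
  have h2 : ¬ ‖(n : ℚ_[p])‖ < 1 := fun hc => h ((Padic.norm_intCast_lt_one_iff (k := n)).mp hc)
  linarith [lt_or_ge (‖(n : ℚ_[p])‖) 1]

lemma norm_nat_eq_one' (n : ℕ) (h : ¬ p ∣ n) : ‖(n : ℚ_[p])‖ = 1 := by
  have := norm_int_eq_one' (p := p) n (by exact_mod_cast h)
  push_cast at this; exact this

lemma helperQ (q : ℚ) (D : ℕ) (hD : ¬ p ∣ D) (m : ℤ) (hm : (m:ℚ) = D * q) :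
    ‖(q : ℚ_[p])‖ ≤ 1 ∧ ((m : ZMod p) = 0 → ‖(q:ℚ_[p])‖ ≤ (p:ℝ)⁻¹) := by
  have hmp : (m : ℚ_[p]) = (D : ℚ_[p]) * (q : ℚ_[p]) := by
    exact_mod_cast congrArg (fun x : ℚ => (x : ℚ_[p])) hm
  have hDn : ‖((D:ℕ) : ℚ_[p])‖ = 1 := norm_nat_eq_one' D hD
  have hqe : ‖(q : ℚ_[p])‖ = ‖(m : ℚ_[p])‖ := by
    rw [hmp, norm_mul, hDn, one_mul]
  constructor
  · rw [hqe]; exact Padic.norm_int_le_one m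
  · intro h0
    have hdvd : (p:ℤ) ∣ m := by
      exact_mod_cast (ZMod.intCast_zmod_eq_zero_iff_dvd m p).mp h0
    have : ‖(m : ℚ_[p])‖ ≤ (p:ℝ) ^ (-(1:ℕ) : ℤ) :=
      (Padic.norm_int_le_pow_iff_dvd m 1).mpr (by simpa using hdvd)
    rw [hqe]
    simpa [zpow_neg, zpow_one] using this

lemma mk_cast (K : Type*) [Field K] (s : Finset ℕ) (e D : ℕ)
    (hdvd : ∀ k ∈ s, (k+1)^e ∣ D) (hnz : ∀ k ∈ s, (((k+1:ℕ)):K) ≠ 0) :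
    ((∑ k ∈ s, D / (k+1)^e : ℕ) : K) = (D:K) * ∑ k ∈ s, ((((k+1:ℕ):K))⁻¹)^e := by
  push_cast
  rw [mul_sum]
  refine sum_congr rfl fun k hk => ?_
  have hnz' : (((k+1:ℕ)):K)^e ≠ 0 := pow_ne_zero e (hnz k hk)
  have : (((D / (k+1)^e : ℕ)):K) = (D:K) / (((k+1:ℕ)):K)^e := by
    rw [Nat.cast_div (hdvd k hk) (by push_cast at hnz' ⊢; exact hnz')]
    push_cast; ring
  push_cast at this
  rw [this, div_eq_mul_inv, inv_pow]
end S3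

section S4

variable {p : ℕ} [hp : Fact p.Prime]

lemma neg_cast_aux (j : ℕ) (hpj : p = 3*j+1) (x : ℕ) (hx : x < 3*j) :
    ((3*j - x : ℕ) : ZMod p) = - ((x+1 : ℕ) : ZMod p) := by
  have h1 : (3*j - x : ℕ) = p - (x+1) := by omega
  rw [h1, Nat.cast_sub (by omega), ZMod.natCast_self]
  ring

lemma Z1 (hp2 : 2 < p) (j : ℕ) (hpj : p = 3*j+1) :
    ∑ k ∈ Ico j (2*j), (((k+1:ℕ) : ZMod p))⁻¹ = 0 := by
  have hodd : ¬ 2 ∣ p := fun h => by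
    have := (Nat.prime_dvd_prime_iff_eq Nat.prime_two hp.out).mp h; omega
  refine sum_involution (fun k _ => 3*j - 1 - k) (fun k hk => ?_) (fun k hk _ => ?_)
    (fun k hk => ?_) (fun k hk => ?_) <;>
    [skip; (have hk' := mem_Ico.mp hk; omega);
     (have hk' := mem_Ico.mp hk; rw [mem_Ico]; omega);
     (have hk' := mem_Ico.mp hk; omega)]
  have hk' := mem_Ico.mp hk
  have h1 : 3*j - 1 - k + 1 = 3*j - k := by omega
  rw [h1, neg_cast_aux j hpj k (by omega), inv_neg]
  ring

lemma val_cast_eq (x : ZMod p) : ((x.val : ℕ) : ZMod p) = x := by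
  rw [ZMod.natCast_val, ZMod.cast_id]

lemma sum_range_erase {M : Type*} [AddCommMonoid M] (f : ZMod p → M) :
    ∑ k ∈ range (p-1), f ((k+1 : ℕ)) = ∑ x ∈ univ.erase (0 : ZMod p), f x := by
  have hp1 : 1 < p := hp.out.one_lt
  refine sum_nbij' (fun k => ((k+1 : ℕ) : ZMod p)) (fun x => (ZMod.val x) - 1) ?_ ?_ ?_ ?_ ?_
  · intro k hk
    have hk' := mem_range.mp hk
    rw [mem_erase]
    refine ⟨?_, mem_univ _⟩
    intro h0
    have := Nat.le_of_dvd (by omega) ((ZMod.natCast_eq_zero_iff (k+1) p).mp h0)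
    omega
  · intro x hx
    have hx0 : x ≠ 0 := (mem_erase.mp hx).1
    have hval : x.val < p := ZMod.val_lt x
    have hvalpos : 0 < x.val := Nat.pos_of_ne_zero (fun h => hx0 ((ZMod.val_eq_zero x).mp h))
    rw [mem_range]; omega
  · intro k hk
    have hk' := mem_range.mp hk
    have hv : ((k+1 : ℕ) : ZMod p).val = k+1 := ZMod.val_cast_of_lt (by omega)
    rw [hv]
    omega
  · intro x hx
    have hx0 : x ≠ 0 := (mem_erase.mp hx).1
    have hvalpos : 0 < x.val := Nat.pos_of_ne_zero (fun h => hx0 ((ZMod.val_eq_zero x).mp h))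
    have h2 : x.val - 1 + 1 = x.val := by omega
    rw [h2, val_cast_eq]
  · intro k hk; rfl

lemma full_sum_sq (hp3 : 3 < p) :
    ∑ k ∈ range (p-1), (((k+1:ℕ) : ZMod p))⁻¹^2 = 0 := by
  rw [sum_range_erase (fun x => x⁻¹^2)]
  have h1 : ∑ x ∈ univ.erase (0 : ZMod p), x⁻¹^2 = ∑ x ∈ univ.erase (0 : ZMod p), x^2 := by
    refine sum_nbij' (fun x => x⁻¹) (fun x => x⁻¹) ?_ ?_ ?_ ?_ ?_ <;> intro x hx
    · exact mem_erase.mpr ⟨inv_ne_zero (mem_erase.mp hx).1, mem_univ _⟩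
    · exact mem_erase.mpr ⟨inv_ne_zero (mem_erase.mp hx).1, mem_univ _⟩
    · exact inv_inv x
    · exact inv_inv x
    · rfl
  rw [h1, sum_erase _ (by norm_num)]
  exact FiniteField.sum_pow_lt_card_sub_one (K := ZMod p) 2 (by rw [ZMod.card]; omega)

lemma Z2 (hp2 : 2 < p) (j : ℕ) (hpj : p = 3*j+1) :
    (∑ k ∈ range (2*j), (((k+1:ℕ) : ZMod p))⁻¹^2)
      + ∑ k ∈ range j, (((k+1:ℕ) : ZMod p))⁻¹^2 = 0 := by
  have hodd : ¬ 2 ∣ p := fun h => by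
    have := (Nat.prime_dvd_prime_iff_eq Nat.prime_two hp.out).mp h; omega
  have hj2 : 2 ≤ j := by omega
  have hrefl : ∑ x ∈ range j, (((2*j + x + 1 : ℕ) : ZMod p))⁻¹^2
      = ∑ k ∈ range j, (((k+1:ℕ) : ZMod p))⁻¹^2 := by
    rw [← sum_range_reflect (fun x => (((2*j + x + 1 : ℕ) : ZMod p))⁻¹^2) j]
    refine sum_congr rfl fun x hx => ?_
    have hx' := mem_range.mp hx
    have h1 : 2*j + (j - 1 - x) + 1 = 3*j - x := by omega
    rw [h1, neg_cast_aux j hpj x (by omega), inv_neg, neg_pow]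
    norm_num
  have hsplit : ∑ k ∈ range (3*j), (((k+1:ℕ) : ZMod p))⁻¹^2
      = (∑ k ∈ range (2*j), (((k+1:ℕ) : ZMod p))⁻¹^2)
        + ∑ x ∈ range j, (((2*j + x + 1 : ℕ) : ZMod p))⁻¹^2 := by
    have e : 3*j = 2*j + j := by ring
    rw [e, sum_range_add]
  have hfull := full_sum_sq (p := p) (by omega)
  have hp1 : p - 1 = 3*j := by omega
  rw [hp1] at hfull
  rw [← hrefl, ← hsplit, hfull]
end S4


def pCong (p : ℕ) (m : ℕ) (a b : ℚ) : Prop :=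
  ∃ r : ℚ, a - b = (p : ℚ) ^ m * r ∧ ¬ (p ∣ r.den)

def H (n : ℕ) : ℚ := ∑ k ∈ Finset.range n, (1 : ℚ) / (k + 1)

section Central
variable {p : ℕ} [hp : Fact p.Prime]

lemma nonarch_sub (a b : ℚ_[p]) : ‖a - b‖ ≤ max ‖a‖ ‖b‖ := by
  rw [sub_eq_add_neg]
  simpa using nonarch a (-b)

lemma norm_two_eq_one (hp2 : 2 < p) : ‖(2 : ℚ_[p])‖ = 1 := by
  have h : ((2:ℕ) : ℚ_[p]) = (2 : ℚ_[p]) := by push_cast; ring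
  rw [← h]
  exact norm_nat_eq_one 2 (fun hd => by have := Nat.le_of_dvd (by norm_num) hd; omega)

lemma norm_e2_le (hp2 : 2 < p) (S q : ℚ_[p]) (C : ℝ) (hS : ‖S‖^2 ≤ C) (hq : ‖q‖ ≤ C) :
    ‖(S^2 - q)/2‖ ≤ C := by
  rw [norm_div, norm_two_eq_one hp2, div_one]
  refine le_trans (nonarch_sub _ _) (max_le ?_ hq)
  rw [norm_pow]; exact hS

lemma mkQ (K : Type*) [Field K] (s : Finset ℕ) (e D : ℕ)
    (hdvd : ∀ k ∈ s, (k+1)^e ∣ D) (hnz : ∀ k ∈ s, (((k+1:ℕ)):K) ≠ 0) :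
    ((∑ k ∈ s, D / (k+1)^e : ℕ) : K) = (D:K) * ∑ k ∈ s, (1/(((k+1:ℕ):K)))^e := by
  rw [mk_cast K s e D hdvd hnz]
  congr 1
  exact sum_congr rfl fun k _ => by rw [one_div, inv_pow]

lemma comb_id {R : Type*} [Field R] [CharZero R] (A B SA SB QA QB P : R) :
    A*B - 1 - P*(SA+SB) - P^2*(((SA+SB)^2 - (QA+QB))/2)
      = (A - 1 - P*SA - P^2*((SA^2-QA)/2)) * B
        + (1 + P*SA + P^2*((SA^2-QA)/2)) * (B - 1 - P*SB - P^2*((SB^2-QB)/2))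
        + (P^3*(SA*((SB^2-QB)/2) + ((SA^2-QA)/2)*SB)
        + P^4*(((SA^2-QA)/2)*((SB^2-QB)/2))) := by
  have h2 : (2:R) ≠ 0 := two_ne_zero
  field_simp
  ring

lemma sub_decomp {R : Type*} [Field R] (AB S Z : R) :
    AB - (1 + S) = (AB - 1 - S - Z) + Z := by ring

set_option maxHeartbeats 1000000 in
lemma central (hp2 : 2 < p) (j : ℕ) (hj2 : 2*j ≤ p - 1) :
    ‖((((∏ k ∈ range j, (1 - (p:ℚ)/((k:ℚ)+1))) * (∏ k ∈ range (2*j), (1 + (p:ℚ)/((k:ℚ)+1)))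
        - (1 + (p:ℚ) * H (2*j) - (p:ℚ) * H j)) : ℚ) : ℚ_[p])‖
      ≤ (if p = 3*j+1 then ((p:ℝ))⁻¹^3 else ((p:ℝ))⁻¹^2) := by
  have hppos : (0:ℝ) < (p:ℝ)⁻¹ := eps_pos
  have hple : ((p:ℝ))⁻¹ ≤ 1 := eps_le_one
  set ua : ℕ → ℚ_[p] := fun k => -(((k+1:ℕ) : ℚ_[p]))⁻¹ with hua_def
  set ub : ℕ → ℚ_[p] := fun k => (((k+1:ℕ) : ℚ_[p]))⁻¹ with hub_def
  have hknorm : ∀ k : ℕ, k + 1 ≤ 2*j → ‖(((k+1:ℕ) : ℚ_[p]))⁻¹‖ ≤ 1 := by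
    intro k hk
    rw [norm_inv, norm_nat_eq_one (k+1) (fun hd => by have := Nat.le_of_dvd (by omega) hd; omega)]
    norm_num
  have hua : ∀ i ∈ range j, ‖ua i‖ ≤ 1 := fun i hi => by
    rw [hua_def]; dsimp only; rw [norm_neg]
    exact hknorm i (by have := mem_range.mp hi; omega)
  have hub : ∀ i ∈ range (2*j), ‖ub i‖ ≤ 1 := fun i hi => by
    rw [hub_def]; dsimp only
    exact hknorm i (by have := mem_range.mp hi; omega)
  -- cast equalities for the products
  have hA : (((∏ k ∈ range j, (1 - (p:ℚ)/((k:ℚ)+1))) : ℚ) : ℚ_[p])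
      = ∏ k ∈ range j, (1 + (p:ℚ_[p]) * ua k) := by
    push_cast
    refine prod_congr rfl fun k _ => ?_
    rw [hua_def]; push_cast; ring
  have hB : (((∏ k ∈ range (2*j), (1 + (p:ℚ)/((k:ℚ)+1))) : ℚ) : ℚ_[p])
      = ∏ k ∈ range (2*j), (1 + (p:ℚ_[p]) * ub k) := by
    push_cast
    refine prod_congr rfl fun k _ => ?_
    rw [hub_def]; push_cast; ring
  -- abbreviations
  set SA : ℚ_[p] := -(((H j : ℚ)) : ℚ_[p]) with hSA_def
  set SB : ℚ_[p] := (((H (2*j) : ℚ)) : ℚ_[p]) with hSB_def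
  set qaQ : ℚ := ∑ k ∈ range j, (1/((k:ℚ)+1))^2 with hqaQ_def
  set qbQ : ℚ := ∑ k ∈ range (2*j), (1/((k:ℚ)+1))^2 with hqbQ_def
  set QA : ℚ_[p] := ((qaQ : ℚ) : ℚ_[p]) with hQA_def
  set QB : ℚ_[p] := ((qbQ : ℚ) : ℚ_[p]) with hQB_def
  -- sum cast equalities
  have hSa : ∑ k ∈ range j, ua k = SA := by
    rw [hSA_def, H]; push_cast
    rw [← Finset.sum_neg_distrib]
    refine sum_congr rfl fun k _ => ?_
    rw [hua_def]; push_cast; ring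
  have hSb : ∑ k ∈ range (2*j), ub k = SB := by
    rw [hSB_def, H]; push_cast
    refine sum_congr rfl fun k _ => ?_
    rw [hub_def]; push_cast; ring
  have hqa : ∑ k ∈ range j, (ua k)^2 = QA := by
    rw [hQA_def, hqaQ_def]; push_cast
    refine sum_congr rfl fun k _ => ?_
    rw [hua_def]; push_cast; ring
  have hqb : ∑ k ∈ range (2*j), (ub k)^2 = QB := by
    rw [hQB_def, hqbQ_def]; push_cast
    refine sum_congr rfl fun k _ => ?_
    rw [hub_def]; push_cast; ring
  -- norm facts for the sums
  have hDfac : ¬ p ∣ (2*j).factorial := fun hd => by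
    have := (Nat.Prime.dvd_factorial hp.out).mp hd; omega
  have hDfac2 : ¬ p ∣ ((2*j).factorial)^2 := fun hd => by
    exact hDfac (hp.out.dvd_of_dvd_pow hd)
  have hQnz : ∀ k ∈ range (2*j), (((k+1:ℕ)):ℚ) ≠ 0 := fun k _ => by positivity
  have hnormHj : ‖((H j : ℚ) : ℚ_[p])‖ ≤ 1 := by
    refine (helperQ (H j) ((2*j).factorial) hDfac
      ((∑ k ∈ range j, (2*j).factorial / (k+1)^1 : ℕ) : ℤ) ?_).1
    rw [Int.cast_natCast]
    rw [mkQ ℚ (range j) 1 ((2*j).factorial)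
      (fun k hk => by have := mem_range.mp hk; simpa using Nat.dvd_factorial (by omega) (by omega))
      (fun k _ => by positivity), H]
    congr 1
    exact sum_congr rfl fun k _ => by push_cast; ring
  have hnormH2j : ‖((H (2*j) : ℚ) : ℚ_[p])‖ ≤ 1 := by
    refine (helperQ (H (2*j)) ((2*j).factorial) hDfac
      ((∑ k ∈ range (2*j), (2*j).factorial / (k+1)^1 : ℕ) : ℤ) ?_).1
    rw [Int.cast_natCast]
    rw [mkQ ℚ (range (2*j)) 1 ((2*j).factorial)
      (fun k hk => by have := mem_range.mp hk; simpa using Nat.dvd_factorial (by omega) (by omega))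
      (fun k _ => by positivity), H]
    congr 1
    exact sum_congr rfl fun k _ => by push_cast; ring
  have hmq : ∀ (s : Finset ℕ), (∀ k ∈ s, k + 1 ≤ 2*j) →
      (((∑ k ∈ s, ((2*j).factorial)^2 / (k+1)^2 : ℕ) : ℚ)
        = (((2*j).factorial)^2 : ℚ) * ∑ k ∈ s, (1/((k:ℚ)+1))^2) := by
    intro s hs
    rw [mkQ ℚ s 2 (((2*j).factorial)^2)
      (fun k hk => pow_dvd_pow_of_dvd (Nat.dvd_factorial (by omega) (hs k hk)) 2)
      (fun k _ => by positivity)]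
    push_cast
    try rfl
    try (congr 1; exact sum_congr rfl fun k _ => by push_cast; ring)
  have hnormQA : ‖QA‖ ≤ 1 := by
    rw [hQA_def]
    refine (helperQ qaQ (((2*j).factorial)^2) hDfac2
      ((∑ k ∈ range j, ((2*j).factorial)^2 / (k+1)^2 : ℕ) : ℤ) ?_).1
    rw [Int.cast_natCast, hmq (range j) (fun k hk => by have := mem_range.mp hk; omega)]
    rw [hqaQ_def]; push_cast; ring
  have hnormQB : ‖QB‖ ≤ 1 := by
    rw [hQB_def]
    refine (helperQ qbQ (((2*j).factorial)^2) hDfac2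
      ((∑ k ∈ range (2*j), ((2*j).factorial)^2 / (k+1)^2 : ℕ) : ℤ) ?_).1
    rw [Int.cast_natCast, hmq (range (2*j)) (fun k hk => by have := mem_range.mp hk; omega)]
    rw [hqbQ_def]; push_cast; ring
  have hnormSA : ‖SA‖ ≤ 1 := by rw [hSA_def, norm_neg]; exact hnormHj
  have hnormSB : ‖SB‖ ≤ 1 := hnormH2j
  -- L2 estimates
  have h2a := L2 ua (range j) hua
  rw [hSa, hqa] at h2a
  have h2b := L2 ub (range (2*j)) hub
  rw [hSb, hqb] at h2b
  have h0b := (L0 ub (range (2*j)) hub).1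
  set P : ℚ_[p] := ((p:ℕ) : ℚ_[p]) with hP_def
  have hPnorm : ‖P‖ = (p:ℝ)⁻¹ := norm_p'
  set A : ℚ_[p] := ∏ k ∈ range j, (1 + P * ua k) with hA_def
  set B : ℚ_[p] := ∏ k ∈ range (2*j), (1 + P * ub k) with hB_def
  -- norms of the e2 pieces
  have he2a : ‖(SA^2 - QA)/2‖ ≤ 1 :=
    norm_e2_le hp2 _ _ _ (pow_le_one₀ (norm_nonneg _) hnormSA) hnormQA
  have he2b : ‖(SB^2 - QB)/2‖ ≤ 1 :=
    norm_e2_le hp2 _ _ _ (pow_le_one₀ (norm_nonneg _) hnormSB) hnormQB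
  have hA0 : ‖1 + P*SA + P^2*((SA^2-QA)/2)‖ ≤ 1 := by
    refine nonarch3 (by norm_num) ?_ ?_
    · rw [norm_mul, hPnorm]
      exact mul_le_one₀ hple (norm_nonneg _) hnormSA
    · rw [norm_mul, norm_pow, hPnorm]
      exact mul_le_one₀ (pow_le_one₀ hppos.le hple) (norm_nonneg _) he2a
  have comb := comb_id A B SA SB QA QB P
  have hterm1 : ‖(A - 1 - P*SA - P^2*((SA^2-QA)/2)) * B‖ ≤ (p:ℝ)⁻¹^3 := by
    rw [norm_mul]
    calc ‖A - 1 - P*SA - P^2*((SA^2-QA)/2)‖ * ‖B‖ ≤ (p:ℝ)⁻¹^3 * 1 :=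
          mul_le_mul h2a h0b (norm_nonneg _) (by positivity)
      _ = (p:ℝ)⁻¹^3 := mul_one _
  have hterm2 : ‖(1 + P*SA + P^2*((SA^2-QA)/2)) * (B - 1 - P*SB - P^2*((SB^2-QB)/2))‖
      ≤ (p:ℝ)⁻¹^3 := by
    rw [norm_mul]
    calc ‖1 + P*SA + P^2*((SA^2-QA)/2)‖ * ‖B - 1 - P*SB - P^2*((SB^2-QB)/2)‖
        ≤ 1 * ((p:ℝ)⁻¹^3) := mul_le_mul hA0 h2b (norm_nonneg _) (by norm_num)
      _ = (p:ℝ)⁻¹^3 := one_mul _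
  have hterm3 : ‖P^3*(SA*((SB^2-QB)/2) + ((SA^2-QA)/2)*SB)
      + P^4*(((SA^2-QA)/2)*((SB^2-QB)/2))‖ ≤ (p:ℝ)⁻¹^3 := by
    refine le_trans (nonarch _ _) (max_le ?_ ?_)
    · rw [norm_mul, norm_pow, hPnorm]
      have hT3 : ‖SA*((SB^2-QB)/2) + ((SA^2-QA)/2)*SB‖ ≤ 1 := by
        refine le_trans (nonarch _ _) (max_le ?_ ?_) <;> rw [norm_mul]
        · exact mul_le_one₀ hnormSA (norm_nonneg _) he2b
        · exact mul_le_one₀ he2a (norm_nonneg _) hnormSB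
      exact mul_le_of_le_one_right (by positivity) hT3
    · rw [norm_mul, norm_pow, hPnorm, norm_mul]
      calc (p:ℝ)⁻¹^4 * (‖(SA^2-QA)/2‖ * ‖(SB^2-QB)/2‖) ≤ (p:ℝ)⁻¹^4 :=
            mul_le_of_le_one_right (by positivity)
              (mul_le_one₀ he2a (norm_nonneg _) he2b)
        _ ≤ (p:ℝ)⁻¹^3 := pow_le_pow_of_le_one hppos.le hple (by norm_num)
  have hABfull : ‖A*B - 1 - P*(SA+SB) - P^2*(((SA+SB)^2 - (QA+QB))/2)‖ ≤ (p:ℝ)⁻¹^3 := by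
    rw [comb]; exact nonarch3 hterm1 hterm2 hterm3
  -- final: the cast of the LHS
  have hT : (((1 + (p:ℚ) * H (2*j) - (p:ℚ) * H j) : ℚ) : ℚ_[p]) = 1 + P*(SA+SB) := by
    rw [hSA_def, hSB_def, hP_def]; push_cast; ring
  have hcast : ((((∏ k ∈ range j, (1 - (p:ℚ)/((k:ℚ)+1))) * (∏ k ∈ range (2*j), (1 + (p:ℚ)/((k:ℚ)+1)))
        - (1 + (p:ℚ) * H (2*j) - (p:ℚ) * H j)) : ℚ) : ℚ_[p])
      = (A*B - 1 - P*(SA+SB) - P^2*(((SA+SB)^2 - (QA+QB))/2))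
        + P^2*(((SA+SB)^2 - (QA+QB))/2) := by
    rw [Rat.cast_sub, Rat.cast_mul, hA, hB, hT,
      sub_decomp (A*B) (P*(SA+SB)) (P^2*(((SA+SB)^2 - (QA+QB))/2))]
  rw [hcast]
  by_cases hsp : p = 3*j+1
  · rw [if_pos hsp]
    -- special case : second order term is small
    have hZ1 := Z1 hp2 j hsp
    have hZ2 := Z2 hp2 j hsp
    have hznz : ∀ k ∈ Ico j (2*j), (((k+1:ℕ)) : ZMod p) ≠ 0 := by
      intro k hk
      have hk' := mem_Ico.mp hk
      intro h0
      have := Nat.le_of_dvd (by omega) ((ZMod.natCast_eq_zero_iff (k+1) p).mp h0)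
      omega
    have hznz' : ∀ k ∈ range (2*j), (((k+1:ℕ)) : ZMod p) ≠ 0 := by
      intro k hk
      have hk' := mem_range.mp hk
      intro h0
      have := Nat.le_of_dvd (by omega) ((ZMod.natCast_eq_zero_iff (k+1) p).mp h0)
      omega
    have hznz'' : ∀ k ∈ range j, (((k+1:ℕ)) : ZMod p) ≠ 0 := by
      intro k hk
      have hk' := mem_range.mp hk
      exact hznz' k (mem_range.mpr (by omega))
    -- ‖SA + SB‖ ≤ 1/p
    have hSsum : ‖SA + SB‖ ≤ (p:ℝ)⁻¹ := by
      have hcastS : SA + SB = (((H (2*j) - H j : ℚ)) : ℚ_[p]) := by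
        rw [hSA_def, hSB_def]; push_cast; ring
      rw [hcastS]
      set m : ℤ := ((∑ k ∈ Ico j (2*j), (2*j).factorial / (k+1)^1 : ℕ) : ℤ) with hm_def
      refine (helperQ (H (2*j) - H j) ((2*j).factorial) hDfac m ?_).2 ?_
      · rw [hm_def]
        rw [Int.cast_natCast]
        rw [mkQ ℚ (Ico j (2*j)) 1 ((2*j).factorial)
          (fun k hk => by have := mem_Ico.mp hk; simpa using Nat.dvd_factorial (by omega) (by omega))
          (fun k _ => by positivity), H, H]
        rw [← sum_Ico_eq_sub _ (by omega : j ≤ 2*j)]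
        congr 1
        exact sum_congr rfl fun k _ => by push_cast; ring
      · rw [hm_def]
        rw [Int.cast_natCast]
        rw [mkQ (ZMod p) (Ico j (2*j)) 1 ((2*j).factorial)
          (fun k hk => by have := mem_Ico.mp hk; simpa using Nat.dvd_factorial (by omega) (by omega))
          hznz]
        have : ∑ k ∈ Ico j (2*j), (1/(((k+1:ℕ) : ZMod p)))^1 = 0 := by
          rw [← hZ1]
          exact sum_congr rfl fun k _ => by rw [pow_one, one_div]
        rw [this, mul_zero]
    have hQsum : ‖QA + QB‖ ≤ (p:ℝ)⁻¹ := by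
      have hcastQ : QA + QB = (((qaQ + qbQ : ℚ)) : ℚ_[p]) := by
        rw [hQA_def, hQB_def]; push_cast; ring
      rw [hcastQ]
      set m : ℤ := (((∑ k ∈ range j, ((2*j).factorial)^2 / (k+1)^2 : ℕ)
        + (∑ k ∈ range (2*j), ((2*j).factorial)^2 / (k+1)^2 : ℕ) : ℕ) : ℤ) with hm_def
      refine (helperQ (qaQ + qbQ) (((2*j).factorial)^2) hDfac2 m ?_).2 ?_
      · rw [hm_def]
        rw [Int.cast_natCast, Nat.cast_add,
          hmq (range j) (fun k hk => by have := mem_range.mp hk; omega),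
          hmq (range (2*j)) (fun k hk => by have := mem_range.mp hk; omega)]
        rw [hqaQ_def, hqbQ_def]; push_cast; ring
      · rw [hm_def]
        rw [Int.cast_natCast, Nat.cast_add]
        rw [mkQ (ZMod p) (range j) 2 (((2*j).factorial)^2)
          (fun k hk => pow_dvd_pow_of_dvd (Nat.dvd_factorial (by omega) (by have := mem_range.mp hk; omega)) 2)
          hznz'',
          mkQ (ZMod p) (range (2*j)) 2 (((2*j).factorial)^2)
          (fun k hk => pow_dvd_pow_of_dvd (Nat.dvd_factorial (by omega) (by have := mem_range.mp hk; omega)) 2)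
          hznz']
        have h1 : ∑ k ∈ range j, (1/(((k+1:ℕ) : ZMod p)))^2 = ∑ k ∈ range j, (((k+1:ℕ) : ZMod p))⁻¹^2 :=
          sum_congr rfl fun k _ => by rw [one_div]
        have h2 : ∑ k ∈ range (2*j), (1/(((k+1:ℕ) : ZMod p)))^2 = ∑ k ∈ range (2*j), (((k+1:ℕ) : ZMod p))⁻¹^2 :=
          sum_congr rfl fun k _ => by rw [one_div]
        rw [h1, h2]
        rw [← mul_add]
        rw [add_comm (∑ k ∈ range j, (((k+1:ℕ) : ZMod p))⁻¹^2)]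
        rw [hZ2, mul_zero]
    have hE2 : ‖((SA+SB)^2 - (QA+QB))/2‖ ≤ (p:ℝ)⁻¹ := by
      refine norm_e2_le hp2 _ _ _ ?_ hQsum
      calc ‖SA+SB‖^2 ≤ (p:ℝ)⁻¹^2 := pow_le_pow_left₀ (norm_nonneg _) hSsum 2
        _ ≤ (p:ℝ)⁻¹ := by nlinarith
    refine le_trans (nonarch _ _) (max_le hABfull ?_)
    rw [norm_mul, norm_pow, hPnorm]
    calc (p:ℝ)⁻¹^2 * ‖((SA+SB)^2 - (QA+QB))/2‖ ≤ (p:ℝ)⁻¹^2 * (p:ℝ)⁻¹ :=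
          mul_le_mul_of_nonneg_left hE2 (by positivity)
      _ = (p:ℝ)⁻¹^3 := by ring
  · rw [if_neg hsp]
    have hE2 : ‖((SA+SB)^2 - (QA+QB))/2‖ ≤ 1 := by
      refine norm_e2_le hp2 _ _ _ ?_ ?_
      · exact pow_le_one₀ (norm_nonneg _) (le_trans (nonarch SA SB) (max_le hnormSA hnormSB))
      · exact le_trans (nonarch QA QB) (max_le hnormQA hnormQB)
    have h32 : (p:ℝ)⁻¹^3 ≤ (p:ℝ)⁻¹^2 := pow_le_pow_of_le_one hppos.le hple (by norm_num)
    refine le_trans (nonarch _ _) (max_le (le_trans hABfull h32) ?_)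
    rw [norm_mul, norm_pow, hPnorm]
    exact mul_le_of_le_one_right (by positivity) hE2
end Central

theorem stmt_1 (p : ℕ) (hp : p.Prime) (hp2 : 2 < p) (j : ℕ) (hj : j ≤ (p - 1) / 2) :
    pCong p 3 (((3 * j).choose j : ℚ) * ((p + 2 * j).choose (3 * j + 1) : ℚ))
      ((p : ℚ) * (-1) ^ j / (3 * j + 1) * (1 + p * H (2 * j) - p * H j)) := by
  haveI fp : Fact p.Prime := ⟨hp⟩
  have hodd : ¬ 2 ∣ p := fun h => by
    have := (Nat.prime_dvd_prime_iff_eq Nat.prime_two hp).mp h; omega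
  have hj2 : 2*j ≤ p - 1 := by omega
  have hp0 : (p:ℚ) ≠ 0 := Nat.cast_ne_zero.mpr (by omega)
  have hppos : (0:ℝ) < (p:ℝ)⁻¹ := eps_pos
  -- exact identity
  have hX : (((3*j).choose j : ℚ)) * ((p + 2*j).choose (3*j+1) : ℚ)
      = ((p:ℚ) * (-1)^j / (3*(j:ℚ)+1)) *
        ((∏ k ∈ range j, (1 - (p:ℚ)/((k:ℚ)+1))) * ∏ k ∈ range (2*j), (1 + (p:ℚ)/((k:ℚ)+1))) := by
    rw [lemA p (by omega) j hj2]
    have hPa : (∏ k ∈ range j, (((p:ℚ) - ((k:ℚ)+1))/((k:ℚ)+1)))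
        = (-1:ℚ)^j * ∏ k ∈ range j, (1 - (p:ℚ)/((k:ℚ)+1)) := by
      calc (∏ k ∈ range j, (((p:ℚ) - ((k:ℚ)+1))/((k:ℚ)+1)))
          = ∏ k ∈ range j, ((-1) * (1 - (p:ℚ)/((k:ℚ)+1))) := by
            refine prod_congr rfl fun k _ => ?_
            have hk : ((k:ℚ)+1) ≠ 0 := by positivity
            field_simp
            ring
        _ = (-1:ℚ)^j * ∏ k ∈ range j, (1 - (p:ℚ)/((k:ℚ)+1)) := by
            rw [prod_mul_distrib, prod_const, card_range]
    have hPb : (∏ k ∈ range (2*j), (((p:ℚ) + ((k:ℚ)+1))/((k:ℚ)+1)))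
        = ∏ k ∈ range (2*j), (1 + (p:ℚ)/((k:ℚ)+1)) := by
      refine prod_congr rfl fun k _ => ?_
      have hk : ((k:ℚ)+1) ≠ 0 := by positivity
      field_simp
      ring
    rw [hPa, hPb]
    ring
  have hdiff : (((3*j).choose j : ℚ)) * ((p + 2*j).choose (3*j+1) : ℚ)
      - ((p : ℚ) * (-1) ^ j / (3 * (j:ℚ) + 1) * (1 + (p:ℚ) * H (2 * j) - (p:ℚ) * H j))
      = ((p:ℚ) * (-1)^j / (3*(j:ℚ)+1)) *
        (((∏ k ∈ range j, (1 - (p:ℚ)/((k:ℚ)+1))) * ∏ k ∈ range (2*j), (1 + (p:ℚ)/((k:ℚ)+1)))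
          - (1 + (p:ℚ) * H (2 * j) - (p:ℚ) * H j)) := by
    rw [hX]; ring
  -- main norm bound
  have hbound : ‖(((((3*j).choose j : ℚ)) * ((p + 2*j).choose (3*j+1) : ℚ)
      - ((p : ℚ) * (-1) ^ j / (3 * (j:ℚ) + 1) * (1 + (p:ℚ) * H (2 * j) - (p:ℚ) * H j)) : ℚ) : ℚ_[p])‖
      ≤ (p:ℝ)⁻¹^3 := by
    rw [hdiff, Rat.cast_mul, norm_mul]
    have hcnorm : ‖(((p:ℚ) * (-1)^j / (3*(j:ℚ)+1) : ℚ) : ℚ_[p])‖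
        = (p:ℝ)⁻¹ / ‖(((3*j+1:ℕ)) : ℚ_[p])‖ := by
      have hc : (((p:ℚ) * (-1)^j / (3*(j:ℚ)+1) : ℚ) : ℚ_[p])
          = ((p:ℕ):ℚ_[p]) * (-1)^j / (((3*j+1:ℕ)) : ℚ_[p]) := by push_cast; ring
      rw [hc, norm_div, norm_mul, norm_p', norm_pow, norm_neg, norm_one, one_pow, mul_one]
    have hcent := central hp2 j hj2
    rw [hcnorm]
    by_cases hsp : p = 3*j+1
    · rw [if_pos hsp] at hcent
      have h31 : (((3*j+1:ℕ)) : ℚ_[p]) = ((p:ℕ) : ℚ_[p]) := by rw [← hsp]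
      rw [h31, norm_p']
      have : (p:ℝ)⁻¹ / (p:ℝ)⁻¹ = 1 := div_self (ne_of_gt hppos)
      rw [this, one_mul]
      exact hcent
    · rw [if_neg hsp] at hcent
      have hnd : ¬ p ∣ (3*j+1) := by
        intro hd
        have h1 : p ≤ 3*j+1 := Nat.le_of_dvd (by omega) hd
        have h2 : p ∣ (3*j+1 - p) := Nat.dvd_sub hd dvd_rfl
        have h3 : 3*j+1 - p < p := by omega
        have h4 : 3*j+1 - p = 0 := Nat.eq_zero_of_dvd_of_lt h2 h3
        omega
      rw [norm_nat_eq_one _ hnd, div_one]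
      calc (p:ℝ)⁻¹ * ‖_‖ ≤ (p:ℝ)⁻¹ * (p:ℝ)⁻¹^2 := mul_le_mul_of_nonneg_left hcent hppos.le
        _ = (p:ℝ)⁻¹^3 := by ring
  -- conclude
  unfold pCong
  refine ⟨((((3*j).choose j : ℚ)) * ((p + 2*j).choose (3*j+1) : ℚ)
      - ((p : ℚ) * (-1) ^ j / (3 * (j:ℚ) + 1) * (1 + (p:ℚ) * H (2 * j) - (p:ℚ) * H j))) / (p:ℚ)^3,
      ?_, ?_⟩
  · rw [mul_div_cancel₀ _ (pow_ne_zero 3 hp0)]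
  · apply den_not_dvd
    have hcast : ((((((3*j).choose j : ℚ)) * ((p + 2*j).choose (3*j+1) : ℚ)
        - ((p : ℚ) * (-1) ^ j / (3 * (j:ℚ) + 1) * (1 + (p:ℚ) * H (2 * j) - (p:ℚ) * H j))) / (p:ℚ)^3 : ℚ) : ℚ_[p])
        = (((((3*j).choose j : ℚ)) * ((p + 2*j).choose (3*j+1) : ℚ)
        - ((p : ℚ) * (-1) ^ j / (3 * (j:ℚ) + 1) * (1 + (p:ℚ) * H (2 * j) - (p:ℚ) * H j)) : ℚ) : ℚ_[p])
          / (((p:ℕ)) : ℚ_[p])^3 := by push_cast; ring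
    rw [hcast, norm_div, norm_pow, norm_p', div_le_one (by positivity)]
    exact hbound
end

section
/- For any prime p > 2 and integer j with (p+1)/2 ≤ j ≤ p-1, one has C(3j, j) · C(p+2j, 3j+1) ≡ 2p·(-1)^j/(3j+1) (mod p^2). -/
open Finset Nat

lemma stmt2_prod_add_expand {R : Type*} [CommRing R] (x : R) (hx : x * x = 0)
    (s : Finset ℕ) (f : ℕ → R) :
    ∏ i ∈ s, (x + f i) = (∏ i ∈ s, f i) + x * ∑ i ∈ s, ∏ k ∈ s.erase i, f k := by
  classical
  induction s using Finset.induction_on with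
  | empty => simp
  | @insert a s ha ih =>
    have hcong : ∀ i ∈ s, ∏ k ∈ (insert a s).erase i, f k = f a * ∏ k ∈ s.erase i, f k := by
      intro i hi
      rw [Finset.erase_insert_of_ne (by rintro rfl; exact ha hi),
        Finset.prod_insert (fun h => ha (Finset.mem_of_mem_erase h))]
    rw [Finset.prod_insert ha, ih, Finset.prod_insert ha, Finset.sum_insert ha,
        Finset.erase_insert ha, Finset.sum_congr rfl hcong, ← Finset.mul_sum]
    linear_combination (∑ i ∈ s, ∏ k ∈ s.erase i, f k) * hx

lemma stmt2_negprod {R : Type*} [CommRing R] (j : ℕ) :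
    ∏ i ∈ Finset.range j, (-((i : R) + 1)) = (-1) ^ j * ((Nat.factorial j : ℕ) : R) := by
  induction j with
  | zero => simp
  | succ n ih => rw [Finset.prod_range_succ, ih, Nat.factorial_succ]; push_cast; ring

lemma stmt2_castfac {R : Type*} [Ring R] (p i : ℕ) (h : i + 1 ≤ p) :
    ((p - 1 - i : ℕ) : R) = (p : R) + (-((i : R) + 1)) := by
  have h1 : p - 1 - i = p - (i + 1) := by omega
  rw [h1, Nat.cast_sub h]
  push_cast
  rw [sub_eq_add_neg]

theorem stmt_2 (p : ℕ) (hp : p.Prime) (hp2 : 2 < p) (j : ℕ)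
    (hj1 : (p + 1) / 2 ≤ j) (hj2 : j ≤ p - 1) :
    pCong p 2 (((3 * j).choose j : ℚ) * ((p + 2 * j).choose (3 * j + 1) : ℚ))
      (2 * (p : ℚ) * (-1) ^ j / (3 * j + 1)) := by
  have hpodd : p % 2 = 1 := Nat.odd_iff.mp (hp.odd_of_ne_two (by omega))
  have h2j : p + 1 ≤ 2 * j := by omega
  have hjp : j + 1 ≤ p := by omega
  have hpmem : p ∈ Icc 1 (2 * j) := by rw [mem_Icc]; omega
  set S : Finset ℕ := (Icc 1 (2 * j)).erase p with hS
  have fact_prod : ∀ m : ℕ, p ! * ∏ i ∈ Icc 1 m, (p + i) = (p + m)! := by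
    intro m
    induction m with
    | zero => simp
    | succ n ih =>
      rw [Finset.prod_Icc_succ_top (Nat.succ_le_succ (Nat.zero_le n)), ← mul_assoc, ih,
        show p + (n + 1) = (p + n) + 1 from rfl, Nat.factorial_succ]
      ring
  have hD1 : (2 * j)! = p * ∏ i ∈ S, i := by
    rw [hS, Finset.mul_prod_erase _ (fun i => i) hpmem, ← Finset.Ico_add_one_right_eq_Icc,
      prod_Ico_id_eq_factorial]
  have hsplit : ∏ i ∈ Icc 1 (2 * j), (p + i) = 2 * p * ∏ i ∈ S, (p + i) := by
    rw [hS, ← Finset.mul_prod_erase _ (fun i => p + i) hpmem]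
    ring
  have hc1 : (∏ i ∈ S, i) * ((p + 2 * j).choose (2 * j)) = 2 * ∏ i ∈ S, (p + i) := by
    have h1 := Nat.choose_mul_factorial_mul_factorial (show 2 * j ≤ p + 2 * j by omega)
    have h2 : p + 2 * j - 2 * j = p := by omega
    rw [h2] at h1
    refine Nat.eq_of_mul_eq_mul_left (show 0 < p * (p !) by positivity) ?_
    calc p * (p !) * ((∏ i ∈ S, i) * ((p + 2 * j).choose (2 * j)))
        = (p + 2 * j).choose (2 * j) * (2 * j)! * p ! := by rw [hD1]; ring
      _ = (p + 2 * j)! := h1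
      _ = p ! * ∏ i ∈ Icc 1 (2 * j), (p + i) := (fact_prod _).symm
      _ = (p !) * (2 * p * ∏ i ∈ S, (p + i)) := by rw [hsplit]
      _ = p * (p !) * (2 * ∏ i ∈ S, (p + i)) := by ring
  have hc2 : j ! * ((p - 1).choose j) = ∏ i ∈ range j, (p - 1 - i) := by
    rw [← Nat.descFactorial_eq_factorial_mul_choose, Nat.descFactorial_eq_prod_range]
  have IQ : ((3 * j + 1 : ℕ) : ℚ) * ((3 * j).choose j : ℚ) * ((p + 2 * j).choose (3 * j + 1) : ℚ)
      = (p : ℚ) * ((p + 2 * j).choose (2 * j) : ℚ) * ((p - 1).choose j : ℚ) := by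
    rw [Nat.cast_choose ℚ (show j ≤ 3 * j by omega),
      Nat.cast_choose ℚ (show 3 * j + 1 ≤ p + 2 * j by omega),
      Nat.cast_choose ℚ (show 2 * j ≤ p + 2 * j by omega),
      Nat.cast_choose ℚ hj2]
    rw [show 3 * j - j = 2 * j from by omega, show p + 2 * j - (3 * j + 1) = p - 1 - j from by omega,
      show p + 2 * j - 2 * j = p from by omega]
    have hf1 : ((3 * j + 1)! : ℚ) = ((3 * j + 1 : ℕ) : ℚ) * ((3 * j)! : ℚ) := by
      exact_mod_cast congrArg (Nat.cast : ℕ → ℚ) (Nat.factorial_succ (3 * j))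
    have hf2 : (p ! : ℚ) = (p : ℚ) * ((p - 1)! : ℚ) := by
      have h := Nat.factorial_succ (p - 1)
      rw [show p - 1 + 1 = p from by omega] at h
      exact_mod_cast congrArg (Nat.cast : ℕ → ℚ) h
    have n1 : ((3 * j)! : ℚ) ≠ 0 := Nat.cast_ne_zero.mpr (Nat.factorial_ne_zero _)
    have n2 : (j ! : ℚ) ≠ 0 := Nat.cast_ne_zero.mpr (Nat.factorial_ne_zero _)
    have n3 : ((2 * j)! : ℚ) ≠ 0 := Nat.cast_ne_zero.mpr (Nat.factorial_ne_zero _)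
    have n4 : ((3 * j + 1)! : ℚ) ≠ 0 := Nat.cast_ne_zero.mpr (Nat.factorial_ne_zero _)
    have n5 : ((p - 1 - j)! : ℚ) ≠ 0 := Nat.cast_ne_zero.mpr (Nat.factorial_ne_zero _)
    have n6 : (p ! : ℚ) ≠ 0 := Nat.cast_ne_zero.mpr (Nat.factorial_ne_zero _)
    have n7 : ((p - 1)! : ℚ) ≠ 0 := Nat.cast_ne_zero.mpr (Nat.factorial_ne_zero _)
    rw [hf1, hf2]
    field_simp
  haveI : Fact p.Prime := ⟨hp⟩
  have hSnd : ∀ i ∈ S, ¬ p ∣ i := by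
    intro i hi hdvd
    rw [hS, Finset.mem_erase, Finset.mem_Icc] at hi
    obtain ⟨k, rfl⟩ := hdvd
    rcases Nat.lt_or_ge k 2 with hk | hk
    · interval_cases k <;> omega
    · have : p * 2 ≤ p * k := Nat.mul_le_mul_left p hk
      omega
  have hSne : ∀ i ∈ S, ((i : ZMod p)) ≠ 0 := fun i hi h =>
    hSnd i hi ((ZMod.natCast_eq_zero_iff i p).mp h)
  have hd1K : (∏ i ∈ S, (i : ZMod p)) ≠ 0 := Finset.prod_ne_zero_iff.mpr hSne
  have hjfK : ((j ! : ℕ) : ZMod p) ≠ 0 := by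
    rw [Ne, ZMod.natCast_eq_zero_iff, Nat.Prime.dvd_factorial hp]
    omega
  have hc1K : ((p + 2 * j).choose (2 * j) : ZMod p) = 2 := by
    have h := congrArg (Nat.cast : ℕ → ZMod p) hc1
    push_cast at h
    rw [ZMod.natCast_self] at h
    simp only [zero_add] at h
    exact mul_left_cancel₀ hd1K (by rw [h]; ring)
  have hfacK : ∀ i ∈ range j, ((p - 1 - i : ℕ) : ZMod p) = -((i : ZMod p) + 1) := by
    intro i hi
    rw [stmt2_castfac p i (by rw [Finset.mem_range] at hi; omega), ZMod.natCast_self, zero_add]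
  have hc2K : (((p - 1).choose j : ℕ) : ZMod p) = (-1) ^ j := by
    have h := congrArg (Nat.cast : ℕ → ZMod p) hc2
    rw [Nat.cast_prod, Finset.prod_congr rfl hfacK, stmt2_negprod, Nat.cast_mul] at h
    exact mul_left_cancel₀ hjfK (by rw [h]; ring)
  set T : ℤ := ((p + 2 * j).choose (2 * j) : ℤ) * ((p - 1).choose j : ℤ) - 2 * (-1) ^ j with hT
  have hAB : ((3 * j).choose j : ℚ) * ((p + 2 * j).choose (3 * j + 1) : ℚ)
      - 2 * (p : ℚ) * (-1) ^ j / (3 * (j : ℚ) + 1)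
      = (p : ℚ) * ((T : ℤ) : ℚ) / ((3 * j + 1 : ℕ) : ℚ) := by
    rw [hT]
    have IQ' := IQ
    push_cast at IQ' ⊢
    have hne : 3 * (j : ℚ) + 1 ≠ 0 := by positivity
    field_simp
    linear_combination IQ'
  by_cases hdc : p ∣ 3 * j + 1
  · -- case 3j+1 = 2p : need p^2 ∣ T
    have h2p : 3 * j + 1 = 2 * p := by
      obtain ⟨k, hk⟩ := hdc
      rcases Nat.lt_or_ge k 2 with h | h
      · interval_cases k <;> omega
      · rcases Nat.lt_or_ge k 3 with h3 | h3
        · interval_cases k <;> omega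
        · have := Nat.mul_le_mul_left p h3
          omega
    have hx2 : ((p : ZMod (p ^ 2))) * (p : ZMod (p ^ 2)) = 0 := by
      have h := ZMod.natCast_self (p ^ 2)
      push_cast at h
      rw [← pow_two]
      exact h
    have hA1 : (∏ i ∈ S, (i : ZMod (p ^ 2))) * ((p + 2 * j).choose (2 * j) : ZMod (p ^ 2))
        = 2 * ((∏ i ∈ S, (i : ZMod (p ^ 2)))
            + (p : ZMod (p ^ 2)) * ∑ i ∈ S, ∏ k ∈ S.erase i, (k : ZMod (p ^ 2))) := by
      have h := congrArg (Nat.cast : ℕ → ZMod (p ^ 2)) hc1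
      push_cast at h
      rw [stmt2_prod_add_expand _ hx2 S (fun k => (k : ZMod (p ^ 2)))] at h
      exact h
    have hA2 : ((j ! : ℕ) : ZMod (p ^ 2)) * ((p - 1).choose j : ZMod (p ^ 2))
        = (-1) ^ j * ((j ! : ℕ) : ZMod (p ^ 2))
          + (p : ZMod (p ^ 2)) * ∑ i ∈ range j, ∏ k ∈ (range j).erase i,
              (-((k : ZMod (p ^ 2)) + 1)) := by
      have h := congrArg (Nat.cast : ℕ → ZMod (p ^ 2)) hc2
      rw [Nat.cast_mul, Nat.cast_prod,
        Finset.prod_congr rfl (fun i hi =>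
          stmt2_castfac p i (by rw [Finset.mem_range] at hi; omega)),
        stmt2_prod_add_expand _ hx2 (range j) (fun k => (-((k : ZMod (p ^ 2)) + 1))),
        stmt2_negprod] at h
      exact h
    set E1 : ℤ := ∑ i ∈ S, ∏ k ∈ S.erase i, (k : ℤ) with hE1
    set E2 : ℤ := ∑ i ∈ range j, ∏ k ∈ (range j).erase i, (-((k : ℤ) + 1)) with hE2
    set D1 : ℤ := ∏ i ∈ S, (i : ℤ) with hD1'
    have hX : (p : ℤ) ∣ (2 * (-1) ^ j * (j ! : ℤ) * E1 + 2 * D1 * E2) := by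
      rw [← ZMod.intCast_zmod_eq_zero_iff_dvd]
      push_cast [hE1, hE2, hD1']
      have he1 : (∑ i ∈ S, ∏ k ∈ S.erase i, (k : ZMod p))
          = (∏ i ∈ S, (i : ZMod p)) * ∑ i ∈ S, (i : ZMod p)⁻¹ := by
        rw [Finset.mul_sum]
        refine Finset.sum_congr rfl fun i hi => ?_
        exact (eq_mul_inv_iff_mul_eq₀ (hSne i hi)).mpr (Finset.prod_erase_mul S _ hi)
      have he2 : (∑ i ∈ range j, ∏ k ∈ (range j).erase i, (-((k : ZMod p) + 1)))
          = ((-1) ^ j * ((j ! : ℕ) : ZMod p)) * ∑ i ∈ range j, (-((i : ZMod p) + 1))⁻¹ := by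
        rw [Finset.mul_sum]
        refine Finset.sum_congr rfl fun i hi => ?_
        have hne : -((i : ZMod p) + 1) ≠ 0 := by
          rw [neg_ne_zero]
          have h1 : ((i + 1 : ℕ) : ZMod p) ≠ 0 := by
            rw [Ne, ZMod.natCast_eq_zero_iff]
            intro hd
            have := Nat.le_of_dvd (by omega) hd
            rw [Finset.mem_range] at hi
            omega
          push_cast at h1
          exact h1
        refine (eq_mul_inv_iff_mul_eq₀ hne).mpr ?_
        rw [Finset.prod_erase_mul (range j) _ hi, stmt2_negprod]
      have hpinv : ((p : ZMod p))⁻¹ = 0 := by rw [ZMod.natCast_self, inv_zero]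
      have hsum1 : ∑ i ∈ Icc 1 (2 * j), ((i : ZMod p))⁻¹ = ∑ i ∈ S, ((i : ZMod p))⁻¹ := by
        rw [hS, ← Finset.add_sum_erase _ _ hpmem, hpinv, zero_add]
      have hsplitsum : ∑ i ∈ Icc 1 (2 * j), ((i : ZMod p))⁻¹
          = (∑ i ∈ Icc 1 j, ((i : ZMod p))⁻¹) + ∑ i ∈ Icc (j + 1) (2 * j), ((i : ZMod p))⁻¹ := by
        rw [← Finset.Ico_add_one_right_eq_Icc, ← Finset.Ico_add_one_right_eq_Icc, ← Finset.Ico_add_one_right_eq_Icc,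
          ← Finset.sum_Ico_consecutive _ (by omega : 1 ≤ j + 1) (by omega : j + 1 ≤ 2 * j + 1)]
      have hrange : ∑ i ∈ Icc 1 j, ((i : ZMod p))⁻¹
          = ∑ i ∈ range j, (((i : ZMod p)) + 1)⁻¹ := by
        rw [← Finset.Ico_add_one_right_eq_Icc, Finset.sum_Ico_eq_sum_range]
        refine Finset.sum_congr rfl fun i _ => ?_
        push_cast
        rw [add_comm]
      have hIoc0 : ∑ i ∈ Icc (j + 1) (2 * j), ((i : ZMod p))⁻¹ = 0 := by
        refine Finset.sum_involution (fun a _ => 2 * p - a) ?_ ?_ ?_ ?_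
        · intro a ha
          show ((a : ZMod p))⁻¹ + ((2 * p - a : ℕ) : ZMod p)⁻¹ = 0
          rw [Finset.mem_Icc] at ha
          have hcast : ((2 * p - a : ℕ) : ZMod p) = -(a : ZMod p) := by
            rw [Nat.cast_sub (by omega : a ≤ 2 * p)]
            push_cast [ZMod.natCast_self]
            ring
          rw [hcast, inv_neg]
          ring
        · intro a ha hfa heq
          have heq' : 2 * p - a = a := heq
          rw [Finset.mem_Icc] at ha
          have hap : a = p := by omega
          apply hfa
          rw [hap, ZMod.natCast_self, inv_zero]
        · intro a ha
          show 2 * p - a ∈ Icc (j + 1) (2 * j)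
          rw [Finset.mem_Icc] at ha ⊢
          omega
        · intro a ha
          show 2 * p - (2 * p - a) = a
          have := Finset.mem_Icc.mp ha
          omega
      have hH : (∑ i ∈ S, (i : ZMod p)⁻¹) = ∑ i ∈ range j, (((i : ZMod p)) + 1)⁻¹ :=
        hsum1.symm.trans (hsplitsum.trans (by rw [hIoc0, add_zero, hrange]))
      rw [he1, he2, hH]
      simp only [inv_neg]
      rw [Finset.sum_neg_distrib]
      ring
    obtain ⟨Y, hY⟩ := hX
    have hmain : (((D1 * (j ! : ℤ) * T : ℤ)) : ZMod (p ^ 2)) = 0 := by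
      have hYR := congrArg (Int.cast : ℤ → ZMod (p ^ 2)) hY
      push_cast [hE1, hE2, hD1'] at hYR
      push_cast [hT, hD1']
      linear_combination
        (((j ! : ℕ) : ZMod (p ^ 2)) * ((p - 1).choose j : ZMod (p ^ 2))) * hA1
        + (2 * (∏ i ∈ S, (i : ZMod (p ^ 2)))
            + 2 * (p : ZMod (p ^ 2)) * ∑ i ∈ S, ∏ k ∈ S.erase i, (k : ZMod (p ^ 2))) * hA2
        + (p : ZMod (p ^ 2)) * hYR
        + ((Y : ZMod (p ^ 2))
            + 2 * (∑ i ∈ S, ∏ k ∈ S.erase i, (k : ZMod (p ^ 2)))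
              * (∑ i ∈ range j, ∏ k ∈ (range j).erase i, (-((k : ZMod (p ^ 2)) + 1)))) * hx2
    have hdvd2 : ((p : ℤ) ^ 2) ∣ (D1 * (j ! : ℤ) * T) := by
      have h := (ZMod.intCast_zmod_eq_zero_iff_dvd _ (p ^ 2)).mp hmain
      push_cast at h
      exact h
    have hcopN : Nat.Coprime p ((∏ i ∈ S, i) * j !) :=
      Nat.Coprime.mul_right
        (Nat.Coprime.prod_right fun i hi => (hp.coprime_iff_not_dvd).mpr (hSnd i hi))
        ((hp.coprime_iff_not_dvd).mpr (by rw [Nat.Prime.dvd_factorial hp]; omega))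
    have hcop : IsCoprime ((p : ℤ) ^ 2) (D1 * (j ! : ℤ)) := by
      have h2 := Nat.isCoprime_iff_coprime.mpr hcopN
      have hcast : (((∏ i ∈ S, i) * j ! : ℕ) : ℤ) = D1 * (j ! : ℤ) := by
        push_cast [hD1']
        ring
      rw [hcast] at h2
      exact h2.pow_left
    have hTdvd : ((p : ℤ) ^ 2) ∣ T := by
      exact hcop.dvd_of_dvd_mul_left hdvd2
    obtain ⟨M, hM⟩ := hTdvd
    refine ⟨(M : ℚ) / 2, ?_, ?_⟩
    · rw [hAB, hM]
      have hp0 : (p : ℚ) ≠ 0 := Nat.cast_ne_zero.mpr (by omega)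
      rw [h2p]
      push_cast
      field_simp
    · intro hpden
      have hd := Rat.den_dvd M 2
      rw [Rat.divInt_eq_div] at hd
      have hd2 : (((M : ℚ) / 2).den : ℤ) ∣ 2 := by exact_mod_cast hd
      have : (p : ℤ) ∣ 2 := dvd_trans (Int.natCast_dvd_natCast.mpr hpden) hd2
      have := Int.le_of_dvd (by norm_num) this
      omega
  · -- case p ∤ 3j+1 : p ∣ T suffices
    have hTp : (p : ℤ) ∣ T := by
      rw [← ZMod.intCast_zmod_eq_zero_iff_dvd, hT]
      push_cast
      rw [hc1K, hc2K]
      ring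
    obtain ⟨M, hM⟩ := hTp
    refine ⟨(M : ℚ) / ((3 * j + 1 : ℕ) : ℚ), ?_, ?_⟩
    · rw [hAB, hM]
      have hne : ((3 * j + 1 : ℕ) : ℚ) ≠ 0 := Nat.cast_ne_zero.mpr (by omega)
      push_cast at hne ⊢
      field_simp
    · intro hpden
      have hd := Rat.den_dvd M ((3 * j + 1 : ℕ) : ℤ)
      rw [Rat.divInt_eq_div] at hd
      have hd2 : (((M : ℚ) / ((3 * j + 1 : ℕ) : ℚ)).den : ℤ) ∣ ((3 * j + 1 : ℕ) : ℤ) := by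
        exact_mod_cast hd
      have h3 : (p : ℤ) ∣ ((3 * j + 1 : ℕ) : ℤ) :=
        dvd_trans (Int.natCast_dvd_natCast.mpr hpden) hd2
      exact hdc (Int.natCast_dvd_natCast.mp h3)
end

section
/- For any prime p > 5, H_{⌊p/6⌋} ≡ -2·q_p(2) - (3/2)·q_p(3) (mod p), where q_p(a) = (a^{p-1} - 1)/p is the Fermat quotient. -/
/-- The Fermat quotient `q_p(a) = (a^(p-1) - 1)/p`. -/
def fermatQuot (p : ℕ) (a : ℚ) : ℚ := (a ^ (p - 1) - 1) / p

open Finset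

noncomputable def F (p : ℕ) (n : ℕ) : ZMod p := ∑ j ∈ Ioc 0 n, ((j : ZMod p))⁻¹

lemma prod_expand (P : ℤ) (r c : ℕ → ℤ) (s : Finset ℕ) :
    ∃ k : ℤ, ∏ j ∈ s, (r j + P * c j)
      = ∏ j ∈ s, r j + P * (∑ j ∈ s, c j * ∏ i ∈ s.erase j, r i) + P^2 * k := by
  classical
  induction s using Finset.induction_on with
  | empty => exact ⟨0, by simp⟩
  | @insert j₀ s hj₀ ih =>
    obtain ⟨k, hk⟩ := ih
    refine ⟨c j₀ * (∑ j ∈ s, c j * ∏ i ∈ s.erase j, r i) + k * (r j₀ + P * c j₀), ?_⟩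
    have hsum : ∑ j ∈ insert j₀ s, c j * ∏ i ∈ (insert j₀ s).erase j, r i
        = c j₀ * ∏ i ∈ s, r i + r j₀ * ∑ j ∈ s, c j * ∏ i ∈ s.erase j, r i := by
      rw [Finset.sum_insert hj₀, Finset.erase_insert hj₀]
      congr 1
      rw [Finset.mul_sum]
      apply Finset.sum_congr rfl
      intro j hj
      have hne : j₀ ≠ j := fun h => hj₀ (h ▸ hj)
      rw [Finset.erase_insert_of_ne hne,
        Finset.prod_insert (fun h => hj₀ (Finset.mem_of_mem_erase h))]
      ring
    rw [Finset.prod_insert hj₀, Finset.prod_insert hj₀, hk, hsum]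
    ring

section
variable {p : ℕ} [hp : Fact p.Prime]

lemma two_ne (hp5 : 5 < p) : (2 : ZMod p) ≠ 0 := by
  have : ((2:ℕ) : ZMod p) ≠ 0 := by
    rw [Ne, ZMod.natCast_eq_zero_iff]
    intro h
    have := Nat.le_of_dvd two_pos h
    omega
  simpa using this

lemma sum_univ_zmod (hp5 : 5 < p) : ∑ x : ZMod p, x = 0 := by
  have h : ∑ x : ZMod p, x = ∑ x : ZMod p, -x :=
    Fintype.sum_equiv (Equiv.neg _) _ _ (fun x => rfl) |>.symm
  have h2 : (2 : ZMod p) * ∑ x : ZMod p, x = 0 := by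
    rw [two_mul]
    nth_rewrite 2 [h]
    rw [← Finset.sum_add_distrib]
    simp
  rcases mul_eq_zero.mp h2 with h | h
  · exact absurd h (two_ne hp5)
  · exact h

lemma F_p_sub_one (hp5 : 5 < p) : F p (p - 1) = 0 := by
  have : F p (p-1) = ∑ x : ZMod p, x⁻¹ := by
    rw [F]
    rw [← Finset.sum_subset (Finset.subset_univ ((Ioc 0 (p-1)).image (Nat.cast : ℕ → ZMod p)))]
    · rw [Finset.sum_image]
      intro a ha b hb hab
      simp only [Finset.coe_Ioc, Set.mem_Ioc] at ha hb
      have := hp.out.one_lt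
      rwa [ZMod.natCast_eq_natCast_iff', Nat.mod_eq_of_lt (by omega), Nat.mod_eq_of_lt (by omega)] at hab
    · intro x _ hx
      have : x = 0 := by
        by_contra h0
        apply hx
        simp only [Finset.mem_image, mem_Ioc]
        refine ⟨x.val, ⟨?_, ?_⟩, by simp [ZMod.natCast_val, ZMod.cast_id]⟩
        · have : x.val ≠ 0 := fun h => h0 (by rwa [← ZMod.val_eq_zero])
          omega
        · have := x.val_lt
          omega
      simp [this]
  rw [this]
  have : ∑ x : ZMod p, x⁻¹ = ∑ x : ZMod p, x :=
    Fintype.sum_equiv (inv_involutive.toPerm) _ _ (fun x => by simp)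
  rw [this, sum_univ_zmod hp5]

lemma tail_eq (hp5 : 5 < p) {n : ℕ} (hn : n ≤ p - 1) :
    ∑ j ∈ Ioc n (p-1), ((j : ZMod p))⁻¹ = -F p n := by
  have h := Finset.sum_Ioc_consecutive (fun j => ((j : ZMod p))⁻¹) (Nat.zero_le n) hn
  have h0 := F_p_sub_one hp5
  rw [F] at *
  rw [h0] at h
  exact eq_neg_of_add_eq_zero_right h

lemma F_symm (hp5 : 5 < p) {n : ℕ} (hn : n ≤ p - 1) : F p n = F p (p - 1 - n) := by
  have h := tail_eq hp5 hn
  have h2 : ∑ j ∈ Ioc n (p-1), ((j : ZMod p))⁻¹ = ∑ k ∈ Ioc 0 (p-1-n), -((k : ZMod p))⁻¹ := by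
    apply Finset.sum_nbij' (fun j => p - j) (fun k => p - k)
    · intro a ha; simp only [mem_Ioc] at *; omega
    · intro a ha; simp only [mem_Ioc] at *; omega
    · intro a ha; simp only [mem_Ioc] at ha; omega
    · intro a ha; simp only [mem_Ioc] at ha; omega
    · intro a ha
      simp only [mem_Ioc] at ha
      have hcast : ((p - a : ℕ) : ZMod p) = -(a : ZMod p) := by
        have : ((p - a : ℕ) : ZMod p) + (a : ZMod p) = 0 := by
          rw [← Nat.cast_add]
          rw [Nat.sub_add_cancel (by omega)]
          simp
        exact eq_neg_of_add_eq_zero_left this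
      rw [hcast, inv_neg, neg_neg]
  rw [h2, Finset.sum_neg_distrib] at h
  rw [show (∑ k ∈ Ioc 0 (p-1-n), ((k : ZMod p))⁻¹) = F p (p-1-n) from rfl] at h
  exact (neg_inj.mp h).symm

lemma floor_sum (hp5 : 5 < p) {a : ℕ} (ha0 : 0 < a) (hap : a < p) :
    ∑ j ∈ Ioc 0 (p-1), ((a*j/p : ℕ) : ZMod p) * ((j : ZMod p))⁻¹
      = -∑ i ∈ Ioc 0 (a-1), F p (i*p/a) := by
  have hp0 : 0 < p := by omega
  have hstep : ∀ j ∈ Ioc 0 (p-1), ((a*j/p : ℕ) : ZMod p) * ((j : ZMod p))⁻¹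
      = ∑ i ∈ Ioc 0 (a-1), (if i*p ≤ a*j then ((j : ZMod p))⁻¹ else 0) := by
    intro j hj
    simp only [mem_Ioc] at hj
    have hdiv : a*j/p ≤ a-1 := by
      have h1 : a*j < p*a := by
        have hjp : j < p := by omega
        calc a*j = j*a := by ring
        _ < p*a := (Nat.mul_lt_mul_right ha0).mpr hjp
      have := Nat.div_lt_of_lt_mul h1
      omega
    have hfil : (Ioc 0 (a-1)).filter (fun i => i*p ≤ a*j) = Ioc 0 (a*j/p) := by
      ext i
      simp only [mem_filter, mem_Ioc]
      constructor
      · rintro ⟨⟨h1, h2⟩, h3⟩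
        exact ⟨h1, (Nat.le_div_iff_mul_le hp0).mpr h3⟩
      · rintro ⟨h1, h2⟩
        exact ⟨⟨h1, le_trans h2 hdiv⟩, (Nat.le_div_iff_mul_le hp0).mp h2⟩
    rw [← Finset.sum_filter, hfil, Finset.sum_const, Nat.card_Ioc, nsmul_eq_mul]
    simp
  rw [Finset.sum_congr rfl hstep, Finset.sum_comm]
  rw [← Finset.sum_neg_distrib]
  apply Finset.sum_congr rfl
  intro i hi
  simp only [mem_Ioc] at hi
  have hnd : ¬ a ∣ i*p := by
    intro h
    have hpa : ¬ p ∣ a := fun h' => absurd (Nat.le_of_dvd ha0 h') (not_le.mpr hap)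
    have hcop : Nat.Coprime a p := ((Nat.Prime.coprime_iff_not_dvd hp.out).mpr hpa).symm
    have := Nat.le_of_dvd hi.1 (hcop.dvd_of_dvd_mul_right h)
    omega
  have hq := Nat.div_add_mod (i*p) a
  have hr : i*p % a < a := Nat.mod_lt _ ha0
  have hr0 : i*p % a ≠ 0 := fun h => hnd (Nat.dvd_iff_mod_eq_zero.mpr h)
  have hfil2 : (Ioc 0 (p-1)).filter (fun j => i*p ≤ a*j) = Ioc (i*p/a) (p-1) := by
    ext j
    simp only [mem_filter, mem_Ioc]
    constructor
    · rintro ⟨⟨h1, h2⟩, h3⟩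
      refine ⟨?_, h2⟩
      by_contra hc
      push_neg at hc
      have h4 : a*j ≤ a*(i*p/a) := Nat.mul_le_mul_left a hc
      have h5 : a*(i*p/a) < i*p := by
        conv_rhs => rw [← hq]
        exact Nat.lt_add_of_pos_right (Nat.pos_of_ne_zero hr0)
      exact absurd h3 (not_le.mpr (lt_of_le_of_lt h4 h5))
    · rintro ⟨h1, h2⟩
      refine ⟨⟨lt_of_le_of_lt (Nat.zero_le _) h1, h2⟩, ?_⟩
      have h6 : a*(i*p/a + 1) ≤ a*j := Nat.mul_le_mul_left a h1
      have h5 : i*p < a*(i*p/a + 1) := by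
        conv_lhs => rw [← hq]
        rw [Nat.mul_succ]
        exact Nat.add_lt_add_left hr _
      exact le_of_lt (lt_of_lt_of_le h5 h6)
  rw [← Finset.sum_filter, hfil2]
  apply tail_eq hp5
  have h1 : i*p < a*p := (Nat.mul_lt_mul_right hp0).mpr (by omega)
  have := Nat.div_lt_of_lt_mul h1
  omega

lemma mod_key {u v : ℕ} (h : u*v ≡ 1 [MOD p]) (j : ℕ) : (u*(v*j % p)) % p = j % p := by
  have h1 : u*(v*j % p) ≡ u*v*j [MOD p] := by
    calc u*(v*j % p) ≡ u*(v*j) [MOD p] := Nat.ModEq.mul_left u (Nat.mod_modEq _ _)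
    _ = u*v*j := by ring
  have h2 : u*v*j ≡ 1*j [MOD p] := Nat.ModEq.mul_right j h
  have h3 : u*(v*j % p) ≡ j [MOD p] := by simpa using h1.trans h2
  exact h3

lemma prod_residues {a : ℕ} (ha : ¬ p ∣ a) :
    ∏ j ∈ Ioc 0 (p-1), (a*j % p) = ∏ j ∈ Ioc 0 (p-1), j := by
  have hp1 := hp.out.one_lt
  have haz : (a : ZMod p) ≠ 0 := by
    rwa [Ne, ZMod.natCast_eq_zero_iff]
  set b := ((a : ZMod p)⁻¹).val with hb
  have hbz : (b : ZMod p) = (a : ZMod p)⁻¹ := by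
    rw [hb, ZMod.natCast_val, ZMod.cast_id]
  have hab : a*b ≡ 1 [MOD p] := by
    have : ((a*b : ℕ) : ZMod p) = ((1 : ℕ) : ZMod p) := by
      push_cast
      rw [hbz, mul_inv_cancel₀ haz]
    exact (ZMod.natCast_eq_natCast_iff _ _ _).mp this
  have hba : b*a ≡ 1 [MOD p] := by rwa [mul_comm] at hab
  have hmem : ∀ c j : ℕ, ¬ p ∣ c → j ∈ Ioc 0 (p-1) → c*j % p ∈ Ioc 0 (p-1) := by
    intro c j hc hj
    simp only [mem_Ioc] at hj ⊢
    have hlt : c*j % p < p := Nat.mod_lt _ (by omega)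
    have hne : c*j % p ≠ 0 := by
      intro h0
      rcases (Nat.Prime.dvd_mul hp.out).mp (Nat.dvd_iff_mod_eq_zero.mpr h0) with h | h
      · exact hc h
      · have := Nat.le_of_dvd hj.1 h
        omega
    omega
  have hbnd : ¬ p ∣ b := by
    intro hdvd
    have h0 : ((a : ZMod p))⁻¹ = 0 := by
      rw [← hbz]
      exact (ZMod.natCast_eq_zero_iff _ _).mpr hdvd
    exact haz (inv_eq_zero.mp h0)
  apply Finset.prod_nbij' (fun j => a*j % p) (fun k => b*k % p)
  · exact fun j hj => hmem a j ha hj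
  · exact fun k hk => hmem b k hbnd hk
  · intro j hj
    simp only [mem_Ioc] at hj
    have := mod_key hba j
    rw [this, Nat.mod_eq_of_lt (by omega)]
  · intro k hk
    simp only [mem_Ioc] at hk
    have := mod_key hab k
    rw [this, Nat.mod_eq_of_lt (by omega)]
  · intro j _; rfl

lemma fermat_quot_eq (hp5 : 5 < p) {a : ℕ} (ha0 : 0 < a) (hap : a < p) (Q : ℤ)
    (hQ : (p:ℤ) * Q = (a:ℤ)^(p-1) - 1) :
    ((Q : ZMod p)) * (a : ZMod p)
      = ∑ j ∈ Ioc 0 (p-1), ((a*j/p : ℕ) : ZMod p) * ((j : ZMod p))⁻¹ := by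
  have hpa : ¬ p ∣ a := fun h' => absurd (Nat.le_of_dvd ha0 h') (not_le.mpr hap)
  have haz : (a : ZMod p) ≠ 0 := by rwa [Ne, ZMod.natCast_eq_zero_iff]
  set s : Finset ℕ := Ioc 0 (p-1) with hs
  set r : ℕ → ℤ := fun j => ((a*j % p : ℕ) : ℤ) with hr
  set c : ℕ → ℤ := fun j => ((a*j/p : ℕ) : ℤ) with hc
  have h1 : ∀ j, r j + p * c j = (a:ℤ)*j := by
    intro j
    have := Nat.div_add_mod (a*j) p
    simp only [hr, hc]
    push_cast
    push_cast at this
    linarith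
  obtain ⟨k, hk⟩ := prod_expand p r c s
  have hW : ∏ j ∈ s, r j = ∏ j ∈ s, (j : ℤ) := by
    simp only [hr]
    rw [← Nat.cast_prod, ← Nat.cast_prod, prod_residues hpa]
  have hprod : ∏ j ∈ s, (r j + (p:ℤ) * c j) = (a:ℤ)^(p-1) * ∏ j ∈ s, (j:ℤ) := by
    rw [Finset.prod_congr rfl (fun j _ => h1 j), Finset.prod_mul_distrib,
      Finset.prod_const, hs, Nat.card_Ioc]
    simp
  -- combine in ℤ
  have key : Q * ∏ j ∈ s, (j:ℤ)
      = (∑ j ∈ s, c j * ∏ i ∈ s.erase j, r i) + p * k := by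
    apply mul_left_cancel₀ (show (p:ℤ) ≠ 0 by positivity)
    have h2 : ((a:ℤ)^(p-1) - 1) * ∏ j ∈ s, (j:ℤ) = (p:ℤ) * Q * ∏ j ∈ s, (j:ℤ) := by
      rw [hQ]
    rw [hprod] at hk
    rw [hW] at hk
    nlinarith [hk, h2]
  -- cast to ZMod p
  have keyK := congrArg (fun z : ℤ => (z : ZMod p)) key
  simp only [Int.cast_mul, Int.cast_add, Int.cast_sum, Int.cast_prod,
    Int.cast_natCast, ZMod.natCast_self, zero_mul, add_zero] at keyK
  -- keyK : (Q : ZMod p) * ∏ (j:K) = ∑ j, (c j : K) * ∏_{erase} (r i : K)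
  set W : ZMod p := ∏ j ∈ s, ((j : ℕ) : ZMod p) with hWdef
  set S : ZMod p := ∑ j ∈ s, ((a*j/p : ℕ) : ZMod p) * ((j : ZMod p))⁻¹ with hSdef
  have hjz : ∀ i ∈ s, ((i : ℕ) : ZMod p) ≠ 0 := by
    intro i hi
    simp only [hs, mem_Ioc] at hi
    rw [Ne, ZMod.natCast_eq_zero_iff]
    intro hdvd
    have := Nat.le_of_dvd hi.1 hdvd
    omega
  have hW0 : W ≠ 0 := Finset.prod_ne_zero_iff.mpr hjz
  have hrK : ∀ i : ℕ, ((r i : ℤ) : ZMod p) = (a : ZMod p) * (i : ZMod p) := by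
    intro i
    simp only [hr]
    push_cast
    ring
  have hprodall : ∏ i ∈ s, ((a : ZMod p) * (i : ZMod p)) = W := by
    rw [Finset.prod_mul_distrib, Finset.prod_const, hs, Nat.card_Ioc, Nat.sub_zero,
      ZMod.pow_card_sub_one_eq_one haz, one_mul]
  have hterm : ∀ j ∈ s, ((c j : ℤ) : ZMod p) * ∏ i ∈ s.erase j, ((r i : ℤ) : ZMod p)
      = (W * ((a : ZMod p))⁻¹) * (((a*j/p : ℕ) : ZMod p) * ((j : ZMod p))⁻¹) := by
    intro j hj
    have hjz' : (j : ZMod p) ≠ 0 := hjz j hj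
    have hprodE : ∏ i ∈ s.erase j, ((a : ZMod p) * (i : ZMod p))
        = W * ((a : ZMod p) * (j : ZMod p))⁻¹ := by
      have h3 := Finset.prod_erase_mul s (fun i => (a : ZMod p) * (i : ZMod p)) hj
      rw [hprodall] at h3
      field_simp at h3 ⊢
      rw [h3]
    rw [Finset.prod_congr rfl (fun i _ => hrK i), hprodE]
    have hcK : ((c j : ℤ) : ZMod p) = ((a*j/p : ℕ) : ZMod p) := by simp only [hc, Int.cast_natCast]
    rw [hcK, mul_inv]
    ring
  rw [Finset.sum_congr rfl hterm, ← Finset.mul_sum, ← hSdef] at keyK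
  -- keyK : Q * W = W * a⁻¹ * S
  have final : (Q : ZMod p) * (a : ZMod p) * W = S * W := by
    have := congrArg (fun z => (a : ZMod p) * z) keyK
    calc (Q : ZMod p) * (a : ZMod p) * W = (a : ZMod p) * ((Q:ZMod p) * W) := by ring
    _ = (a : ZMod p) * (W * ((a : ZMod p))⁻¹ * S) := this
    _ = ((a : ZMod p) * ((a : ZMod p))⁻¹) * W * S := by ring
    _ = S * W := by rw [mul_inv_cancel₀ haz]; ring
  exact mul_right_cancel₀ hW0 final

lemma p_mod_6 (hp5 : 5 < p) : p % 6 = 1 ∨ p % 6 = 5 := by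
  have h2 : ¬ 2 ∣ p := fun h => by
    have := (Nat.Prime.eq_one_or_self_of_dvd hp.out 2 h)
    omega
  have h3 : ¬ 3 ∣ p := fun h => by
    have := (Nat.Prime.eq_one_or_self_of_dvd hp.out 3 h)
    omega
  omega

lemma core (hp5 : 5 < p) (Q2 Q3 : ℤ) (hQ2 : (p:ℤ)*Q2 = 2^(p-1)-1)
    (hQ3 : (p:ℤ)*Q3 = 3^(p-1)-1) :
    2 * F p (p/6) + 4*((Q2 : ZMod p)) + 3*((Q3 : ZMod p)) = 0 := by
  have hp6 := p_mod_6 hp5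
  -- Q6
  set Q6 : ℤ := Q2 * 3^(p-1) + Q3 with hQ6def
  have hQ6 : (p:ℤ)*Q6 = 6^(p-1)-1 := by
    have h6 : (6:ℤ)^(p-1) = 2^(p-1)*3^(p-1) := by rw [← mul_pow]; norm_num
    rw [hQ6def, h6]
    linear_combination (3:ℤ)^(p-1) * hQ2 + hQ3
  have h3z : ((3:ℕ) : ZMod p) ≠ 0 := by
    rw [Ne, ZMod.natCast_eq_zero_iff]
    intro h
    have := Nat.le_of_dvd (by omega) h
    omega
  have hQ6cast : ((Q6 : ZMod p)) = (Q2 : ZMod p) + (Q3 : ZMod p) := by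
    have hf : ((3:ℕ) : ZMod p)^(p-1) = 1 := ZMod.pow_card_sub_one_eq_one h3z
    push_cast at hf ⊢
    rw [hQ6def]
    push_cast
    rw [hf]  -- ?
    ring
  -- apply the two big lemmas for a = 2, 3, 6
  have e2 := (fermat_quot_eq hp5 (show 0 < 2 by omega) (show 2 < p by omega) Q2
    (by push_cast; linarith)).trans (floor_sum hp5 (show 0 < 2 by omega) (by omega))
  have e3 := (fermat_quot_eq hp5 (show 0 < 3 by omega) (show 3 < p by omega) Q3
    (by push_cast; linarith)).trans (floor_sum hp5 (show 0 < 3 by omega) (by omega))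
  have e6 := (fermat_quot_eq hp5 (show 0 < 6 by omega) (show 6 < p by omega) Q6
    (by push_cast; linarith)).trans (floor_sum hp5 (show 0 < 6 by omega) (by omega))
  -- evaluate index sums
  have i1 : (Ioc 0 (2-1) : Finset ℕ) = {1} := rfl
  have i2 : (Ioc 0 (3-1) : Finset ℕ) = {1, 2} := rfl
  have i5 : (Ioc 0 (6-1) : Finset ℕ) = {1, 2, 3, 4, 5} := rfl
  rw [i1] at e2
  rw [i2] at e3
  rw [i5] at e6
  rw [Finset.sum_singleton] at e2
  rw [Finset.sum_insert (by decide), Finset.sum_singleton] at e3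
  rw [Finset.sum_insert (by decide), Finset.sum_insert (by decide),
    Finset.sum_insert (by decide), Finset.sum_insert (by decide),
    Finset.sum_singleton] at e6
  have d1 : 1*p/2 = p/2 := by omega
  have d2 : 2*p/6 = p/3 := by omega
  have d3 : 3*p/6 = p/2 := by omega
  have d4 : 4*p/6 = 2*p/3 := by omega
  have s3 : F p (2*p/3) = F p (p/3) := by
    rw [F_symm hp5 (show 2*p/3 ≤ p-1 by omega)]
    congr 1
    omega
  have s6 : F p (5*p/6) = F p (p/6) := by
    rw [F_symm hp5 (show 5*p/6 ≤ p-1 by omega)]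
    congr 1
    omega
  have d5 : 1*p/3 = p/3 := by omega
  have d6 : 1*p/6 = p/6 := by omega
  rw [d1] at e2
  rw [d5, s3] at e3
  rw [d6, d2, d3, d4, s3, s6] at e6
  push_cast at e2 e3 e6
  linear_combination e6 - e3 - e2 - 6*hQ6cast

lemma F_range {p n : ℕ} : F p n = ∑ k ∈ range n, (((k+1 : ℕ) : ZMod p))⁻¹ := by
  rw [F]
  apply Finset.sum_nbij' (fun j => j - 1) (fun k => k + 1)
  · intro a ha; simp only [mem_Ioc, mem_range] at *; omega
  · intro a ha; simp only [mem_Ioc, mem_range] at *; omega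
  · intro a ha; simp only [mem_Ioc] at ha; omega
  · intro a ha; simp only [mem_range] at ha; omega
  · intro a ha
    simp only [mem_Ioc] at ha
    congr 2
    omega

end

theorem stmt_4 (p : ℕ) (hp : p.Prime) (hp5 : 5 < p) :
    pCong p 1 (H (p / 6)) (-2 * fermatQuot p 2 - 3 / 2 * fermatQuot p 3) := by
  haveI : Fact p.Prime := ⟨hp⟩
  set m := p / 6 with hm
  have hmp : m < p := by omega
  -- the Fermat quotients are integers
  have getQ : ∀ a : ℕ, 0 < a → a < p → ∃ Q : ℤ, (p:ℤ) * Q = (a:ℤ)^(p-1) - 1 := by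
    intro a ha0 hap
    have haz : (a : ZMod p) ≠ 0 := by
      rw [Ne, ZMod.natCast_eq_zero_iff]
      exact fun h => absurd (Nat.le_of_dvd ha0 h) (not_le.mpr hap)
    have : (((a:ℤ)^(p-1) - 1 : ℤ) : ZMod p) = 0 := by
      push_cast
      rw [ZMod.pow_card_sub_one_eq_one haz]
      ring
    obtain ⟨Q, hQ⟩ := (ZMod.intCast_zmod_eq_zero_iff_dvd _ _).mp this
    exact ⟨Q, hQ.symm⟩
  obtain ⟨Q2, hQ2⟩ := getQ 2 (by omega) (by omega)
  obtain ⟨Q3, hQ3⟩ := getQ 3 (by omega) (by omega)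
  have hq2 : fermatQuot p 2 = (Q2 : ℚ) := by
    rw [fermatQuot]
    have hpq : ((p:ℚ)) ≠ 0 := by positivity
    rw [eq_comm, eq_div_iff hpq]
    have := congrArg (fun z : ℤ => (z : ℚ)) hQ2
    push_cast at this
    linarith
  have hq3 : fermatQuot p 3 = (Q3 : ℚ) := by
    rw [fermatQuot]
    have hpq : ((p:ℚ)) ≠ 0 := by positivity
    rw [eq_comm, eq_div_iff hpq]
    have := congrArg (fun z : ℤ => (z : ℚ)) hQ3
    push_cast at this
    linarith
  -- write H m * m! as a natural number
  set N1 : ℕ := ∑ k ∈ range m, m.factorial/(k+1) with hN1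
  have hdvd : ∀ k ∈ range m, (k+1) ∣ m.factorial := by
    intro k hk
    simp only [mem_range] at hk
    exact Nat.dvd_factorial (by omega) (by omega)
  have hH : H m * (m.factorial : ℚ) = (N1 : ℚ) := by
    rw [H, Finset.sum_mul, hN1]
    push_cast
    apply Finset.sum_congr rfl
    intro k hk
    rw [Nat.cast_div (hdvd k hk) (by positivity)]
    push_cast
    field_simp
  -- the key divisibility
  set n : ℤ := 2*(N1:ℤ) + (m.factorial : ℤ)*(4*Q2 + 3*Q3) with hn
  set d : ℤ := 2 * (m.factorial : ℤ) with hd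
  have hkey : (H m - (-2 * fermatQuot p 2 - 3 / 2 * fermatQuot p 3)) * (d:ℚ) = (n:ℚ) := by
    rw [hq2, hq3, hd, hn]
    push_cast
    nlinarith [hH]
  have hdnd : ¬ (p:ℤ) ∣ d := by
    rw [hd]
    intro hdv
    have : (p:ℤ) ∣ 2 * (m.factorial : ℤ) := hdv
    have h2 : p ∣ 2 * m.factorial := by exact_mod_cast this
    rcases (Nat.Prime.dvd_mul hp).mp h2 with h | h
    · have := Nat.le_of_dvd (by omega) h; omega
    · exact absurd ((Nat.Prime.dvd_factorial hp).mp h) (by omega)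
  have hfacz : ((m.factorial : ℕ) : ZMod p) ≠ 0 := by
    rw [Ne, ZMod.natCast_eq_zero_iff]
    intro h
    exact absurd ((Nat.Prime.dvd_factorial hp).mp h) (by omega)
  have hpn : (p:ℤ) ∣ n := by
    rw [← ZMod.intCast_zmod_eq_zero_iff_dvd]
    have hN1K : ((N1 : ℕ) : ZMod p) = (m.factorial : ZMod p) * F p m := by
      rw [hN1, F_range]
      push_cast
      rw [Finset.mul_sum]
      apply Finset.sum_congr rfl
      intro k hk
      simp only [mem_range] at hk
      have hkz : (((k+1:ℕ)) : ZMod p) ≠ 0 := by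
        rw [Ne, ZMod.natCast_eq_zero_iff]
        intro h
        have := Nat.le_of_dvd (by omega) h
        omega
      have : ((m.factorial/(k+1) : ℕ) : ZMod p) * ((k+1 : ℕ) : ZMod p)
          = ((m.factorial : ℕ) : ZMod p) := by
        rw [← Nat.cast_mul, Nat.div_mul_cancel (hdvd k (mem_range.mpr hk))]
      push_cast at this hkz ⊢
      rw [eq_mul_inv_iff_mul_eq₀ hkz]
      exact this
    have hc := core hp5 Q2 Q3 hQ2 hQ3
    rw [hn]
    push_cast
    push_cast at hN1K
    rw [hN1K]
    linear_combination (m.factorial : ZMod p) * hc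
  -- conclude
  obtain ⟨t, ht⟩ := hpn
  refine ⟨(t : ℚ) / (d : ℚ), ?_, ?_⟩
  · have hdz : (d : ℚ) ≠ 0 := by
      rw [hd]
      push_cast
      positivity
    rw [pow_one]
    have hx : H m - (-2 * fermatQuot p 2 - 3 / 2 * fermatQuot p 3) = (n:ℚ) / (d:ℚ) := by
      rw [eq_div_iff hdz]
      exact hkey
    rw [hx, ht]
    push_cast
    ring
  · intro hden
    have h1 : ((t : ℚ) / (d : ℚ)) = Rat.divInt t d := by rw [Rat.divInt_eq_div]
    have h2 : (((t : ℚ) / (d : ℚ)).den : ℤ) ∣ d := by rw [h1]; exact Rat.den_dvd t d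
    exact hdnd (dvd_trans (Int.natCast_dvd_natCast.mpr hden) h2)
end

section
/- For any prime p > 5, H_{⌊p/3⌋}^{(2)} ≡ (1/2)·(p/3)·B_{p-2}(1/3) (mod p), where H_n^{(2)} = ∑_{k=1}^{n} 1/k², (p/3) is the Legendre symbol, and B_n(x) is the n-th Bernoulli polynomial. -/
/-- The `n`-th generalized harmonic number of order 2. -/
def H2 (n : ℕ) : ℚ := ∑ k ∈ Finset.range n, (1 : ℚ) / (k + 1) ^ 2

instance : Fact (Nat.Prime 3) := ⟨by norm_num⟩

open Finset Polynomial

section Aux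

variable {p : ℕ} [hp : Fact p.Prime]

lemma not_dvd_den_iff (r : ℚ) : ¬ p ∣ r.den ↔ padicNorm p r ≤ 1 := by
  constructor
  · intro h
    have hden : padicNorm p (r.den : ℚ) = 1 := (padicNorm.nat_eq_one_iff _).2 h
    have : padicNorm p r = padicNorm p (r.num : ℚ) / padicNorm p (r.den : ℚ) := by
      rw [← padicNorm.div, Rat.num_div_den]
    rw [this, hden, div_one]
    exact padicNorm.of_int _
  · intro h hdvd
    have hnum : ¬ (p : ℤ) ∣ r.num := by
      rw [Int.natCast_dvd]
      intro h'
      have hc : Nat.Coprime p p := (r.reduced.coprime_dvd_left h').coprime_dvd_right hdvd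
      exact hp.1.ne_one (by simpa [Nat.Coprime, Nat.gcd_self] using hc)
    have hnum1 : padicNorm p (r.num : ℚ) = 1 := (padicNorm.int_eq_one_iff _).2 hnum
    have hdenlt : padicNorm p (r.den : ℚ) < 1 := (padicNorm.nat_lt_one_iff _).2 hdvd
    have hdenpos : 0 < padicNorm p (r.den : ℚ) := by
      have : (r.den : ℚ) ≠ 0 := by exact_mod_cast r.den_nz
      exact lt_of_le_of_ne (padicNorm.nonneg _) (Ne.symm (padicNorm.nonzero this))
    have : padicNorm p r = padicNorm p (r.num : ℚ) / padicNorm p (r.den : ℚ) := by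
      rw [← padicNorm.div, Rat.num_div_den]
    rw [this, hnum1] at h
    have : (1:ℚ) < 1 / padicNorm p (r.den : ℚ) := by
      rw [lt_div_iff₀ hdenpos, one_mul]; exact hdenlt
    linarith

lemma pCong_iff' (p : ℕ) [hp : Fact p.Prime] (a b : ℚ) :
    pCong p 1 a b ↔ padicNorm p (a - b) ≤ (p : ℚ)⁻¹ := by
  have hp0 : (p : ℚ) ≠ 0 := by exact_mod_cast hp.1.ne_zero
  constructor
  · rintro ⟨r, hr, hden⟩
    rw [hr]
    rw [pow_one]
    rw [padicNorm.mul, padicNorm.padicNorm_p_of_prime]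
    calc (p:ℚ)⁻¹ * padicNorm p r ≤ (p:ℚ)⁻¹ * 1 := by
          apply mul_le_mul_of_nonneg_left ((not_dvd_den_iff r).1 hden)
          positivity
      _ = (p:ℚ)⁻¹ := mul_one _
  · intro h
    refine ⟨(a - b) / p, by rw [pow_one]; field_simp, ?_⟩
    rw [not_dvd_den_iff]
    have : padicNorm p ((a - b) / p) = padicNorm p (a - b) / (p:ℚ)⁻¹ := by
      rw [padicNorm.div, padicNorm.padicNorm_p_of_prime]
    rw [this, div_le_one (by positivity)]
    exact h


lemma sum_range_zmod (i : ℕ) :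
    ∑ k ∈ range p, ((k : ZMod p))^i = ∑ x : ZMod p, x^i := by
  haveI : NeZero p := ⟨hp.1.ne_zero⟩
  refine Finset.sum_nbij' (fun k => ((k : ZMod p))) (fun x => x.val) ?_ ?_ ?_ ?_ ?_
  · intro a _; exact mem_univ _
  · intro a _; exact mem_range.2 (ZMod.val_lt a)
  · intro a ha; exact ZMod.val_cast_of_lt (mem_range.1 ha)
  · intro a _; exact ZMod.natCast_zmod_val a
  · intro a _; rfl

lemma dvd_sum_pow (i : ℕ) (_hi : 0 < i) (hip : i < p - 1) :
    p ∣ ∑ k ∈ range p, k^i := by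
  have h : ((∑ k ∈ range p, k^i : ℕ) : ZMod p) = 0 := by
    push_cast
    rw [sum_range_zmod]
    have hcard : i < Fintype.card (ZMod p) - 1 := by rwa [ZMod.card]
    exact FiniteField.sum_pow_lt_card_sub_one (ZMod p) i hcard
  exact (ZMod.natCast_eq_zero_iff _ _).1 h

lemma padicNorm_bernoulli_le' (p : ℕ) [hp : Fact p.Prime] (i : ℕ) (hip : i < p - 1) :
    padicNorm p (_root_.bernoulli i) ≤ 1 := by
  induction i using Nat.strong_induction_on with
  | _ i IH =>
  rcases Nat.eq_zero_or_pos i with rfl | hi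
  · simp [padicNorm.one]
  have hpp : (2:ℕ) ≤ p := hp.1.two_le
  have hp0 : (p : ℚ) ≠ 0 := by exact_mod_cast hp.1.ne_zero
  have hpinv : (0:ℚ) < (p:ℚ)⁻¹ := by positivity
  -- Faulhaber with n = p, exponent i
  have hF := sum_range_pow p i
  rw [Finset.sum_range_succ] at hF
  have hi1 : ((i:ℚ) + 1) ≠ 0 := by positivity
  have hlast : _root_.bernoulli i * ((i + 1).choose i) * (p : ℚ) ^ (i + 1 - i) / (i + 1)
      = _root_.bernoulli i * p := by
    rw [Nat.choose_succ_self_right]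
    have : i + 1 - i = 1 := by omega
    rw [this, pow_one]
    push_cast
    field_simp
  rw [hlast] at hF
  have key : _root_.bernoulli i * p = (∑ k ∈ range p, (k : ℚ) ^ i)
      - ∑ j ∈ range i, _root_.bernoulli j * ((i + 1).choose j) * (p : ℚ) ^ (i + 1 - j) / (i + 1) := by
    rw [hF]; ring
  have h1 : padicNorm p (∑ k ∈ range p, (k : ℚ) ^ i) ≤ (p:ℚ)⁻¹ := by
    have hcast : (∑ k ∈ range p, (k : ℚ) ^ i) = ((∑ k ∈ range p, k ^ i : ℕ) : ℚ) := by
      push_cast; rfl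
    rw [hcast]
    have hdvd : ((p:ℤ)^1) ∣ ((∑ k ∈ range p, k ^ i : ℕ) : ℤ) := by
      rw [pow_one]
      exact_mod_cast dvd_sum_pow i hi hip
    have := (padicNorm.dvd_iff_norm_le (p := p) (n := 1)
      (z := ((∑ k ∈ range p, k ^ i : ℕ) : ℤ))).1 (by exact_mod_cast hdvd)
    simpa using this
  have h2 : padicNorm p (∑ j ∈ range i, _root_.bernoulli j * ((i + 1).choose j) *
      (p : ℚ) ^ (i + 1 - j) / (i + 1)) ≤ (p:ℚ)⁻¹ := by
    apply padicNorm.sum_le' _ (le_of_lt hpinv)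
    intro j hj
    have hj' : j < i := Finset.mem_range.1 hj
    have hbj : padicNorm p (_root_.bernoulli j) ≤ 1 := IH j hj' (by omega)
    have hch : padicNorm p (((i + 1).choose j : ℚ)) ≤ 1 := padicNorm.of_nat _
    have hi1norm : padicNorm p ((i:ℚ) + 1) = 1 := by
      have : ((i:ℚ) + 1) = ((i + 1 : ℕ) : ℚ) := by push_cast; ring
      rw [this]
      exact (padicNorm.nat_eq_one_iff _).2 (Nat.not_dvd_of_pos_of_lt (by omega) (by omega))
    have hpow : padicNorm p ((p:ℚ) ^ (i + 1 - j)) ≤ (p:ℚ)⁻¹ := by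
      have he : i + 1 - j = (i - j) + 1 := by omega
      rw [he, pow_succ, padicNorm.mul, padicNorm.padicNorm_p_of_prime]
      have : padicNorm p ((p:ℚ) ^ (i - j)) ≤ 1 := by
        have : ((p:ℚ) ^ (i - j)) = ((p ^ (i - j) : ℕ) : ℚ) := by push_cast; rfl
        rw [this]; exact padicNorm.of_nat _
      calc padicNorm p ((p:ℚ) ^ (i-j)) * (p:ℚ)⁻¹ ≤ 1 * (p:ℚ)⁻¹ :=
            mul_le_mul_of_nonneg_right this (le_of_lt hpinv)
        _ = (p:ℚ)⁻¹ := one_mul _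
    rw [padicNorm.div, padicNorm.mul, padicNorm.mul, hi1norm, div_one]
    calc padicNorm p (_root_.bernoulli j) * padicNorm p (((i + 1).choose j : ℚ)) *
          padicNorm p ((p:ℚ) ^ (i + 1 - j))
        ≤ 1 * 1 * (p:ℚ)⁻¹ := by
          apply mul_le_mul (mul_le_mul hbj hch (padicNorm.nonneg _) zero_le_one) hpow
            (padicNorm.nonneg _) (by norm_num)
      _ = (p:ℚ)⁻¹ := by ring
  have hfinal : padicNorm p (_root_.bernoulli i * p) ≤ (p:ℚ)⁻¹ := by
    rw [key]
    exact le_trans padicNorm.sub (max_le h1 h2)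
  rw [padicNorm.mul, padicNorm.padicNorm_p_of_prime] at hfinal
  have hppos : (0:ℚ) < (p:ℚ) := by positivity
  calc padicNorm p (_root_.bernoulli i) = padicNorm p (_root_.bernoulli i) * (p:ℚ)⁻¹ * p := by
        field_simp
    _ ≤ (p:ℚ)⁻¹ * p := mul_le_mul_of_nonneg_right hfinal (le_of_lt hppos)
    _ = 1 := by field_simp


lemma bernoulli_poly_eval_eq (n : ℕ) (x : ℚ) :
    (Polynomial.bernoulli n).eval x
      = ∑ i ∈ range (n + 1), _root_.bernoulli i * (n.choose i) * x ^ (n - i) := by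
  simp [Polynomial.bernoulli, eval_finset_sum, eval_monomial]

lemma padicNorm_pow'' (p : ℕ) [hp : Fact p.Prime] (x : ℚ) (m : ℕ) : padicNorm p (x ^ m) = padicNorm p x ^ m := by
  induction m with
  | zero => simp [padicNorm.one]
  | succ m IH => rw [pow_succ, pow_succ, padicNorm.mul, IH]

lemma padicNorm_bernoulli_eval_le' (p : ℕ) [hp : Fact p.Prime]
    (n : ℕ) (hb : ∀ i ≤ n, padicNorm p (_root_.bernoulli i) ≤ 1)
    (x : ℚ) (hx : padicNorm p x ≤ 1) :
    padicNorm p ((Polynomial.bernoulli n).eval x) ≤ 1 := by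
  rw [bernoulli_poly_eval_eq]
  apply padicNorm.sum_le' _ zero_le_one
  intro i hi
  have hi' : i < n + 1 := Finset.mem_range.1 hi
  rw [padicNorm.mul, padicNorm.mul]
  have h1 : padicNorm p (_root_.bernoulli i) ≤ 1 := hb i (by omega)
  have h2 : padicNorm p ((n.choose i : ℚ)) ≤ 1 := padicNorm.of_nat _
  have h3 : padicNorm p (x ^ (n - i)) ≤ 1 := by
    rw [padicNorm_pow'']
    exact pow_le_one₀ (padicNorm.nonneg _) hx
  calc padicNorm p (_root_.bernoulli i) * padicNorm p ((n.choose i : ℚ)) * padicNorm p (x ^ (n-i))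
      ≤ 1 * 1 * 1 := by
        apply mul_le_mul (mul_le_mul h1 h2 (padicNorm.nonneg _) zero_le_one) h3
          (padicNorm.nonneg _) (by norm_num)
    _ = 1 := by ring

lemma padicNorm_pow_sub_pow_le {x y : ℚ} (hx : padicNorm p x ≤ 1) (hy : padicNorm p y ≤ 1)
    (hxy : padicNorm p (x - y) ≤ (p:ℚ)⁻¹) (m : ℕ) :
    padicNorm p (x ^ m - y ^ m) ≤ (p:ℚ)⁻¹ := by
  have hpinv : (0:ℚ) ≤ (p:ℚ)⁻¹ := by positivity
  have h := geom_sum₂_mul x y m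
  rw [← h, padicNorm.mul]
  have hg : padicNorm p (∑ i ∈ range m, x ^ i * y ^ (m - 1 - i)) ≤ 1 := by
    apply padicNorm.sum_le' _ zero_le_one
    intro i _
    rw [padicNorm.mul, padicNorm_pow'', padicNorm_pow'']
    calc padicNorm p x ^ i * padicNorm p y ^ (m - 1 - i) ≤ 1 * 1 := by
          apply mul_le_mul (pow_le_one₀ (padicNorm.nonneg _) hx)
            (pow_le_one₀ (padicNorm.nonneg _) hy) (pow_nonneg (padicNorm.nonneg _) _) zero_le_one
      _ = 1 := by ring
  calc padicNorm p (∑ i ∈ range m, x ^ i * y ^ (m - 1 - i)) * padicNorm p (x - y)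
      ≤ 1 * (p:ℚ)⁻¹ := mul_le_mul hg hxy (padicNorm.nonneg _) zero_le_one
    _ = (p:ℚ)⁻¹ := one_mul _

lemma padicNorm_bernoulli_eval_sub_le' (p : ℕ) [hp : Fact p.Prime]
    (n : ℕ) (hb : ∀ i ≤ n, padicNorm p (_root_.bernoulli i) ≤ 1) {x y : ℚ} (hx : padicNorm p x ≤ 1) (hy : padicNorm p y ≤ 1)
    (hxy : padicNorm p (x - y) ≤ (p:ℚ)⁻¹) :
    padicNorm p ((Polynomial.bernoulli n).eval x - (Polynomial.bernoulli n).eval y)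
      ≤ (p:ℚ)⁻¹ := by
  have hpinv : (0:ℚ) ≤ (p:ℚ)⁻¹ := by positivity
  rw [bernoulli_poly_eval_eq, bernoulli_poly_eval_eq, ← Finset.sum_sub_distrib]
  apply padicNorm.sum_le' _ hpinv
  intro i hi
  have : _root_.bernoulli i * (n.choose i) * x ^ (n - i)
      - _root_.bernoulli i * (n.choose i) * y ^ (n - i)
      = _root_.bernoulli i * (n.choose i) * (x ^ (n - i) - y ^ (n - i)) := by ring
  rw [this, padicNorm.mul, padicNorm.mul]
  have hi' : i < n + 1 := Finset.mem_range.1 hi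
  have h1 : padicNorm p (_root_.bernoulli i) ≤ 1 := hb i (by omega)
  have h2 : padicNorm p ((n.choose i : ℚ)) ≤ 1 := padicNorm.of_nat _
  have h3 := padicNorm_pow_sub_pow_le (p := p) hx hy hxy (n - i)
  calc padicNorm p (_root_.bernoulli i) * padicNorm p ((n.choose i : ℚ)) *
        padicNorm p (x ^ (n-i) - y ^ (n-i))
      ≤ 1 * 1 * (p:ℚ)⁻¹ := by
        apply mul_le_mul (mul_le_mul h1 h2 (padicNorm.nonneg _) zero_le_one) h3
          (padicNorm.nonneg _) (by norm_num)
    _ = (p:ℚ)⁻¹ := by ring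

theorem bernoulli_comp_one_sub (n : ℕ) :
    (Polynomial.bernoulli n).comp (1 - Polynomial.X)
      = Polynomial.C ((-1:ℚ)^n) * Polynomial.bernoulli n := by
  induction n with
  | zero => simp
  | succ n IH =>
    have hd : Polynomial.derivative ((Polynomial.bernoulli (n+1)).comp (1 - Polynomial.X)
        - Polynomial.C ((-1:ℚ)^(n+1)) * Polynomial.bernoulli (n+1)) = 0 := by
      rw [Polynomial.derivative_sub, Polynomial.derivative_comp_one_sub_X,
        Polynomial.derivative_mul, Polynomial.derivative_C,
        Polynomial.derivative_bernoulli_add_one]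
      simp only [Polynomial.mul_comp, Polynomial.add_comp, Polynomial.one_comp,
        Polynomial.natCast_comp, IH, zero_mul, zero_add]
      rw [pow_succ, map_mul]
      simp only [map_neg, map_one, Polynomial.C_1]
      ring
    obtain ⟨c, hc⟩ : ∃ c, (Polynomial.bernoulli (n+1)).comp (1 - Polynomial.X)
        - Polynomial.C ((-1:ℚ)^(n+1)) * Polynomial.bernoulli (n+1) = Polynomial.C c :=
      ⟨_, Polynomial.eq_C_of_derivative_eq_zero hd⟩
    have heval := congrArg (Polynomial.eval (0:ℚ)) hc
    simp only [Polynomial.eval_sub, Polynomial.eval_comp, Polynomial.eval_mul,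
      Polynomial.eval_C, Polynomial.eval_sub, Polynomial.eval_one, Polynomial.eval_X,
      sub_zero] at heval
    rw [Polynomial.bernoulli_eval_one, Polynomial.bernoulli_eval_zero,
      bernoulli'_eq_bernoulli] at heval
    rw [← heval, sub_self, map_zero] at hc
    exact sub_eq_zero.1 hc

theorem bernoulli_eval_one_sub'' (n : ℕ) (x : ℚ) :
    (Polynomial.bernoulli n).eval (1 - x) = (-1:ℚ)^n * (Polynomial.bernoulli n).eval x := by
  have := congrArg (Polynomial.eval x) (bernoulli_comp_one_sub n)
  simpa [Polynomial.eval_comp] using this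


lemma congP_trans {t a b c : ℚ} (h1 : padicNorm p (a - b) ≤ t)
    (h2 : padicNorm p (b - c) ≤ t) : padicNorm p (a - c) ≤ t := by
  have h : a - c = (a - b) + (b - c) := by ring
  rw [h]; exact le_trans padicNorm.nonarchimedean (max_le h1 h2)


theorem stmt_5 (p : ℕ) (hp : p.Prime) (hp5 : 5 < p) :
    pCong p 1 (H2 (p / 3))
      (1 / 2 * (legendreSym 3 p : ℚ) * (Polynomial.bernoulli (p - 2)).eval (1 / 3 : ℚ)) := by
  haveI hpf : Fact p.Prime := ⟨hp⟩
  have hp6 : p ≠ 6 := by rintro rfl; norm_num at hp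
  have hp7 : 7 ≤ p := by omega
  have h3p : ¬ 3 ∣ p := by
    intro h
    have := (Nat.prime_dvd_prime_iff_eq (by norm_num) hp).1 h
    omega
  have hmod : p % 3 = 1 ∨ p % 3 = 2 := by
    have : p % 3 ≠ 0 := fun h => h3p (Nat.dvd_of_mod_eq_zero h)
    omega
  have hodd : p % 2 = 1 := Nat.odd_iff.1 (hp.odd_of_ne_two (by omega))
  have hoddp2 : Odd (p - 2) := by rw [Nat.odd_iff]; omega
  have hb : ∀ i ≤ p - 2, padicNorm p (_root_.bernoulli i) ≤ 1 :=
    fun i hi => padicNorm_bernoulli_le' p i (by omega)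
  have hp0 : (p:ℚ) ≠ 0 := by exact_mod_cast hp.ne_zero
  have hpinv0 : (0:ℚ) ≤ (p:ℚ)⁻¹ := by positivity
  have hpQ : (7:ℚ) ≤ (p:ℚ) := by exact_mod_cast hp7
  have hnorm3 : padicNorm p (3:ℚ) = 1 := by
    have h1 : ((3:ℕ):ℚ) = (3:ℚ) := by norm_num
    rw [← h1]
    refine (padicNorm.nat_eq_one_iff _).2 ?_
    intro h; have := Nat.le_of_dvd (by norm_num) h; omega
  set n := p / 3 with hn
  set q := p - 3 with hq
  have hn3 : 3 * n + p % 3 = p := Nat.div_add_mod p 3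
  have hnlt : n < p := by omega
  -- Step 1 : H2 n ≡ T0
  set T0 : ℚ := ∑ k ∈ range n, ((k:ℚ)+1)^q with hT0def
  have h1 : padicNorm p (H2 n - T0) ≤ (p:ℚ)⁻¹ := by
    have hH2 : H2 n - T0 = ∑ k ∈ range n, ((1:ℚ)/((k:ℚ)+1)^2 - ((k:ℚ)+1)^q) := by
      rw [H2, hT0def, Finset.sum_sub_distrib]
    rw [hH2]
    apply padicNorm.sum_le' _ hpinv0
    intro k hk
    have hkn : k < n := mem_range.1 hk
    have hklt : k + 1 < p := by omega
    have hnd : ¬ p ∣ (k+1) := Nat.not_dvd_of_pos_of_lt (by omega) hklt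
    have hxnat : ((k:ℚ)+1) = ((k+1:ℕ):ℚ) := by push_cast; ring
    have hxnorm : padicNorm p ((k:ℚ)+1) = 1 := by
      rw [hxnat]; exact (padicNorm.nat_eq_one_iff _).2 hnd
    have hx0 : ((k:ℚ)+1) ≠ 0 := by positivity
    have hiden : (1:ℚ)/((k:ℚ)+1)^2 - ((k:ℚ)+1)^q
        = (1 - ((k:ℚ)+1)^(p-1))/((k:ℚ)+1)^2 := by
      have hsplit : ((k:ℚ)+1)^(p-1) = ((k:ℚ)+1)^q * ((k:ℚ)+1)^2 := by
        rw [← pow_add]; congr 1; omega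
      rw [hsplit]; field_simp
    rw [hiden, padicNorm.div]
    have hdennorm : padicNorm p (((k:ℚ)+1)^2) = 1 := by
      rw [padicNorm_pow'', hxnorm, one_pow]
    rw [hdennorm, div_one]
    have hint : (1:ℚ) - ((k:ℚ)+1)^(p-1) = (((1 - ((k:ℤ)+1)^(p-1)) : ℤ) : ℚ) := by
      push_cast; ring
    rw [hint]
    have hdvd : ((p:ℤ)^1) ∣ (1 - ((k:ℤ)+1)^(p-1)) := by
      rw [pow_one, ← ZMod.intCast_zmod_eq_zero_iff_dvd]
      push_cast
      have hzne : ((k:ZMod p) + 1) ≠ 0 := by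
        have h' : (((k+1:ℕ)) : ZMod p) ≠ 0 := by
          rw [Ne, ZMod.natCast_eq_zero_iff]; exact hnd
        rwa [Nat.cast_add, Nat.cast_one] at h'
      rw [ZMod.pow_card_sub_one_eq_one hzne]
      ring
    have := (padicNorm.dvd_iff_norm_le (p:=p) (n:=1) (z:=1 - ((k:ℤ)+1)^(p-1))).1 hdvd
    simpa using this
  -- Step 2 : T0 = T and Faulhaber
  set T : ℚ := ∑ k ∈ range (n+1), (k:ℚ)^q with hTdef
  have hTT0 : T = T0 := by
    rw [hTdef, hT0def, Finset.sum_range_succ']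
    have hq0 : q ≠ 0 := by omega
    rw [show ((0:ℕ):ℚ) = (0:ℚ) by norm_num, zero_pow hq0, add_zero]
    apply Finset.sum_congr rfl
    intro k _
    push_cast
    ring
  have hFa := Polynomial.sum_range_pow_eq_bernoulli_sub (n+1) q
  have hqs : q.succ = p - 2 := by omega
  rw [hqs] at hFa
  have hbz : _root_.bernoulli (p-2) = 0 := by
    rw [bernoulli_eq_bernoulli'_of_ne_one (by omega)]
    exact bernoulli'_eq_zero_of_odd hoddp2 (by omega)
  rw [hbz, sub_zero] at hFa
  set B : ℚ := (Polynomial.bernoulli (p-2)).eval ((n+1:ℕ):ℚ) with hBdef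
  have hq_cast : (q:ℚ) = (p:ℚ) - 3 := by
    rw [hq]; push_cast [Nat.cast_sub (show 3 ≤ p by omega)]; ring
  have hq1 : ((q:ℚ)+1) ≠ 0 := by rw [hq_cast]; linarith
  have hT : T = B / ((q:ℚ)+1) := by
    rw [eq_div_iff hq1, mul_comm]; exact hFa
  have hBnorm : padicNorm p B ≤ 1 :=
    padicNorm_bernoulli_eval_le' p (p-2) hb _ (padicNorm.of_nat _)
  -- Step 3 : T ≡ -(1/2) * B
  have h3 : padicNorm p (T - (-(1/2) * B)) ≤ (p:ℚ)⁻¹ := by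
    have hcne : (p:ℚ) - 3 + 1 ≠ 0 := by linarith
    have hc : T - (-(1/2)*B) = B * ((p:ℚ) / (2 * ((q:ℚ)+1))) := by
      rw [hT, hq_cast]
      field_simp
      ring
    rw [hc, padicNorm.mul]
    have hnd2 : ¬ p ∣ (2*(p-2)) := by
      intro h
      rcases (Nat.Prime.dvd_mul hp).1 h with h' | h'
      · have := Nat.le_of_dvd (by norm_num) h'; omega
      · have := Nat.le_of_dvd (by omega) h'; omega
    have h2q : (2*((q:ℚ)+1)) = ((2*(p-2) : ℕ) : ℚ) := by
      rw [hq_cast]; push_cast [Nat.cast_sub (show 2 ≤ p by omega)]; ring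
    have hfrac : padicNorm p ((p:ℚ)/(2*((q:ℚ)+1))) = (p:ℚ)⁻¹ := by
      rw [padicNorm.div, padicNorm.padicNorm_p_of_prime, h2q,
        (padicNorm.nat_eq_one_iff _).2 hnd2, div_one]
    rw [hfrac]
    calc padicNorm p B * (p:ℚ)⁻¹ ≤ 1 * (p:ℚ)⁻¹ :=
          mul_le_mul_of_nonneg_right hBnorm hpinv0
      _ = (p:ℚ)⁻¹ := one_mul _
  -- Step 4 : B ≡ eval y for suitable y
  have hhalf : padicNorm p (-(1/2 : ℚ)) = 1 := by
    rw [padicNorm.neg, padicNorm.div, padicNorm.one]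
    have h2 : ((2:ℕ):ℚ) = (2:ℚ) := by norm_num
    rw [← h2, (padicNorm.nat_eq_one_iff _).2 (by intro h; have := Nat.le_of_dvd (by norm_num) h; omega)]
    norm_num
  have hstep4 : ∀ y : ℚ, padicNorm p y ≤ 1 → ((n+1:ℕ):ℚ) - y = (p:ℚ)/3 →
      padicNorm p (-(1/2)*B - (-(1/2)*(Polynomial.bernoulli (p-2)).eval y)) ≤ (p:ℚ)⁻¹ := by
    intro y hy1 hxy
    have hdiff : padicNorm p (B - (Polynomial.bernoulli (p-2)).eval y) ≤ (p:ℚ)⁻¹ := by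
      apply padicNorm_bernoulli_eval_sub_le' p (p-2) hb (padicNorm.of_nat _) hy1
      rw [hxy, padicNorm.div, padicNorm.padicNorm_p_of_prime, hnorm3, div_one]
    have he : -(1/2)*B - (-(1/2)*(Polynomial.bernoulli (p-2)).eval y)
        = (-(1/2 : ℚ)) * (B - (Polynomial.bernoulli (p-2)).eval y) := by ring
    rw [he, padicNorm.mul, hhalf, one_mul]
    exact hdiff
  -- assemble
  rw [pCong_iff' p]
  rw [← hTT0] at h1
  rcases hmod with hcase | hcase
  · -- p ≡ 1 mod 3 : legendre = 1, y = 2/3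
    have hpz : ((p:ℕ) : ZMod 3) = 1 := by
      rw [← ZMod.natCast_mod, hcase]; norm_num
    have hleg : legendreSym 3 (p:ℤ) = 1 :=
      (legendreSym.eq_one_iff' (p := 3) (a := p) (by rw [hpz]; exact one_ne_zero)).2
        (by rw [hpz]; exact IsSquare.one)
    have hnat1 : 3*(n+1) = p + 2 := by omega
    have hxy : ((n+1:ℕ):ℚ) - 2/3 = (p:ℚ)/3 := by
      have h' : ((3*(n+1):ℕ):ℚ) = ((p+2:ℕ):ℚ) := by rw [hnat1]
      push_cast at h'
      field_simp
      push_cast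
      linarith
    have hy1 : padicNorm p (2/3 : ℚ) ≤ 1 := by
      rw [padicNorm.div, hnorm3, div_one]
      have h2 : ((2:ℕ):ℚ) = (2:ℚ) := by norm_num
      rw [← h2]; exact padicNorm.of_nat _
    have h4 := hstep4 (2/3) hy1 hxy
    have hchain := congP_trans (congP_trans h1 h3) h4
    have hrefl : (Polynomial.bernoulli (p-2)).eval (2/3 : ℚ)
        = - (Polynomial.bernoulli (p-2)).eval (1/3 : ℚ) := by
      have := bernoulli_eval_one_sub'' (p-2) (1/3)
      rw [show (1:ℚ) - 1/3 = 2/3 by norm_num, Odd.neg_one_pow hoddp2] at this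
      rw [this]; ring
    have hfin : (1:ℚ) / 2 * (legendreSym 3 (p:ℤ) : ℚ)
          * (Polynomial.bernoulli (p - 2)).eval (1 / 3 : ℚ)
        = -(1/2)*(Polynomial.bernoulli (p-2)).eval (2/3 : ℚ) := by
      rw [hleg, hrefl]; push_cast; ring
    rw [hfin]
    exact hchain
  · -- p ≡ 2 mod 3 : legendre = -1, y = 1/3
    have hpz : ((p:ℕ) : ZMod 3) = 2 := by
      rw [← ZMod.natCast_mod, hcase]; norm_num
    have hleg : legendreSym 3 (p:ℤ) = -1 :=
      (legendreSym.eq_neg_one_iff' (p := 3) (a := p)).2 (by rw [hpz]; decide)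
    have hnat1 : 3*(n+1) = p + 1 := by omega
    have hxy : ((n+1:ℕ):ℚ) - 1/3 = (p:ℚ)/3 := by
      have h' : ((3*(n+1):ℕ):ℚ) = ((p+1:ℕ):ℚ) := by rw [hnat1]
      push_cast at h'
      field_simp
      push_cast
      linarith
    have hy1 : padicNorm p (1/3 : ℚ) ≤ 1 := by
      rw [padicNorm.div, hnorm3, div_one, padicNorm.one]
    have h4 := hstep4 (1/3) hy1 hxy
    have hchain := congP_trans (congP_trans h1 h3) h4
    have hfin : (1:ℚ) / 2 * (legendreSym 3 (p:ℤ) : ℚ)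
          * (Polynomial.bernoulli (p - 2)).eval (1 / 3 : ℚ)
        = -(1/2)*(Polynomial.bernoulli (p-2)).eval (1/3 : ℚ) := by
      rw [hleg]; push_cast; ring
    rw [hfin]
    exact hchain

end Aux
end

section
/- For every positive integer n, ∑_{k=0}^{n} C(n,k)·C(n+k,k)·(-1)^k/(3k+4) = -1/((3n-1)(3n+1)(3n+4)) · ∏_{k=1}^{n} (3k-1)/(3k-2). -/
private def Sf (n : ℕ) : ℚ :=
  ∑ k ∈ Finset.range (n + 1),
    (n.choose k : ℚ) * ((n + k).choose k : ℚ) * (-1) ^ k / (3 * k + 4)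

private def gf (n k : ℕ) : ℚ :=
  match k with
  | 0 => 0
  | j + 1 => 2 * (-1) ^ j * (n.choose j : ℚ) * ((n + j + 1).choose j : ℚ)

private lemma cast_choose_add (a b : ℕ) :
    (((a + b).choose b : ℕ) : ℚ)
      = ((a + b).factorial : ℚ) / ((b.factorial : ℚ) * (a.factorial : ℚ)) := by
  rw [Nat.cast_choose ℚ (Nat.le_add_left b a), Nat.add_sub_cancel]

private lemma wz (n k : ℕ) (hk : k ≤ n + 1) :
    (3 * (n : ℚ) + 7) * (((n+1).choose k : ℚ) * (((n+1) + k).choose k : ℚ) * (-1) ^ k / (3 * k + 4))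
      - (3 * (n : ℚ) - 1) * ((n.choose k : ℚ) * ((n + k).choose k : ℚ) * (-1) ^ k / (3 * k + 4))
      = gf n (k + 1) - gf n k := by
  match k with
  | 0 =>
      simp only [gf, Nat.choose_zero_right, Nat.cast_one, pow_zero, Nat.cast_zero]
      ring
  | (j + 1) =>
    rcases Nat.lt_or_ge j n with hj | hj
    · -- main case : j + 1 ≤ n, write n = m + j + 1
      obtain ⟨m, rfl⟩ : ∃ m, n = m + j + 1 := ⟨n - j - 1, by omega⟩
      simp only [gf]
      have e1 : (m + j + 1 + 1).choose (j+1) = ((m+1) + (j+1)).choose (j+1) := by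
        rw [show m + j + 1 + 1 = (m+1)+(j+1) by ring]
      have e2 : (m + j + 1 + 1 + (j+1)).choose (j+1) = ((m + j + 2) + (j+1)).choose (j+1) := by
        rw [show m + j + 1 + 1 + (j+1) = (m+j+2)+(j+1) by ring]
      have e3 : (m + j + 1).choose (j+1) = (m + (j+1)).choose (j+1) := by
        rw [show m + j + 1 = m + (j+1) by ring]
      have e4 : (m + j + 1 + (j+1)).choose (j+1) = ((m + j + 1) + (j+1)).choose (j+1) := rfl
      have e5 : (m + j + 1).choose j = ((m+1) + j).choose j := by
        rw [show m + j + 1 = (m+1) + j by ring]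
      have e6 : (m + j + 1 + j + 1).choose j = ((m + j + 2) + j).choose j := by
        rw [show m + j + 1 + j + 1 = (m+j+2) + j by ring]
      have e7 : (m + j + 1 + (j+1) + 1).choose (j+1) = ((m + j + 2) + (j+1)).choose (j+1) := by
        rw [show m + j + 1 + (j+1) + 1 = (m+j+2)+(j+1) by ring]
      rw [e1, e2, e3, e5, e6, e7]
      rw [cast_choose_add (m+1) (j+1), cast_choose_add (m+j+2) (j+1),
        cast_choose_add m (j+1), cast_choose_add (m+j+1) (j+1),
        cast_choose_add (m+1) j, cast_choose_add (m+j+2) j]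
      rw [show (m+1)+(j+1) = (m+j+1)+1 by ring, show (m+j+2)+(j+1) = (m+2*j+2)+1 by ring,
        show m+(j+1) = m+j+1 by ring, show (m+j+1)+(j+1) = m+2*j+2 by ring,
        show (m+1)+j = m+j+1 by ring, show (m+j+2)+j = m+2*j+2 by ring]
      rw [Nat.factorial_succ (m+j+1), Nat.factorial_succ (m+2*j+2),
        Nat.factorial_succ j, Nat.factorial_succ m]
      have hja : ((j.factorial : ℕ) : ℚ) ≠ 0 := by positivity
      have hma : ((m.factorial : ℕ) : ℚ) ≠ 0 := by positivity
      have hca : (((m+j+1).factorial : ℕ) : ℚ) ≠ 0 := by positivity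
      have hda : (((m+2*j+2).factorial : ℕ) : ℚ) ≠ 0 := by positivity
      have h4 : (3 * ((j:ℚ)+1) + 4) ≠ 0 := by positivity
      push_cast
      have hj1 : ((j:ℚ)+1) ≠ 0 := by positivity
      have hm1 : ((m:ℚ)+1) ≠ 0 := by positivity
      field_simp
      ring
    · -- boundary case k = n + 1
      have hjn : j = n := by omega
      subst hjn
      simp only [gf, Nat.choose_succ_self, Nat.cast_zero, Nat.choose_self, Nat.cast_one]
      have hs : (j + j + 1).choose (j + 1) = (j + j + 1).choose j := by
        have h := Nat.choose_symm (show j + 1 ≤ j + j + 1 by omega)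
        rw [show j + j + 1 - (j + 1) = j by omega] at h
        exact h.symm
      have h2 : (j + 1 + (j + 1)).choose (j + 1) = 2 * ((j + j + 1).choose j) := by
        rw [show j + 1 + (j + 1) = (j + j + 1) + 1 by ring, Nat.choose_succ_succ', hs]
        ring
      rw [h2]
      push_cast
      have h4 : (3 * ((j : ℚ) + 1) + 4) ≠ 0 := by positivity
      field_simp
      ring

private lemma key (n : ℕ) :
    (3 * (n:ℚ) + 7) * Sf (n+1) = (3 * (n:ℚ) - 1) * Sf n := by
  have tel : ∑ k ∈ Finset.range (n+2), (gf n (k+1) - gf n k) = gf n (n+2) - gf n 0 :=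
    Finset.sum_range_sub (gf n) (n+2)
  have main : ∑ k ∈ Finset.range (n+2),
      ((3 * (n : ℚ) + 7) * (((n+1).choose k : ℚ) * (((n+1) + k).choose k : ℚ) * (-1) ^ k / (3 * k + 4))
        - (3 * (n : ℚ) - 1) * ((n.choose k : ℚ) * ((n + k).choose k : ℚ) * (-1) ^ k / (3 * k + 4)))
      = gf n (n+2) - gf n 0 := by
    rw [← tel]
    refine Finset.sum_congr rfl fun k hk => ?_
    exact wz n k (by have := Finset.mem_range.mp hk; omega)
  have hzero : gf n (n+2) = 0 := by
    simp [gf, Nat.choose_succ_self]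
  have hzero0 : gf n 0 = 0 := rfl
  rw [Finset.sum_sub_distrib, ← Finset.mul_sum, ← Finset.mul_sum, hzero, hzero0] at main
  have hS1 : ∑ k ∈ Finset.range (n+2),
      (((n+1).choose k : ℚ) * (((n+1) + k).choose k : ℚ) * (-1) ^ k / (3 * k + 4)) = Sf (n+1) := rfl
  have hS0 : ∑ k ∈ Finset.range (n+2),
      ((n.choose k : ℚ) * ((n + k).choose k : ℚ) * (-1) ^ k / (3 * k + 4)) = Sf n := by
    rw [Finset.sum_range_succ]
    simp [Sf, Nat.choose_succ_self]
  rw [hS1, hS0] at main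
  linarith [main]

theorem stmt_8 (n : ℕ) (hn : 1 ≤ n) :
    ∑ k ∈ Finset.range (n + 1),
        (n.choose k : ℚ) * ((n + k).choose k : ℚ) * (-1) ^ k / (3 * k + 4)
      = -1 / ((3 * (n : ℚ) - 1) * (3 * n + 1) * (3 * n + 4)) *
          ∏ k ∈ Finset.Icc 1 n, ((3 * (k : ℚ) - 1) / (3 * k - 2)) := by
  induction n, hn using Nat.le_induction with
  | base =>
      norm_num [Finset.sum_range_succ, Finset.Icc_self]
  | succ n hn ih =>
      have hkey := key n
      have hSn : Sf n = -1 / ((3 * (n : ℚ) - 1) * (3 * n + 1) * (3 * n + 4)) *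
          ∏ k ∈ Finset.Icc 1 n, ((3 * (k : ℚ) - 1) / (3 * k - 2)) := ih
      have hgoal : (∑ k ∈ Finset.range (n + 1 + 1),
          ((n+1).choose k : ℚ) * (((n+1) + k).choose k : ℚ) * (-1) ^ k / (3 * k + 4)) = Sf (n+1) := rfl
      rw [hgoal]
      rw [Finset.prod_Icc_succ_top (by omega : 1 ≤ n + 1)]
      set P := ∏ k ∈ Finset.Icc 1 n, ((3 * (k : ℚ) - 1) / (3 * k - 2)) with hP
      have hnq : (1:ℚ) ≤ (n:ℚ) := by exact_mod_cast hn
      have h1 : (3 * (n:ℚ) + 7) ≠ 0 := by positivity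
      have h2 : (3 * (n:ℚ) - 1) ≠ 0 := by nlinarith
      have h3 : (3 * (n:ℚ) + 1) ≠ 0 := by positivity
      have h4 : (3 * (n:ℚ) + 4) ≠ 0 := by positivity
      have h5 : (3 * (n:ℚ) + 2) ≠ 0 := by positivity
      have h2' : (3 * ((n:ℚ) + 1) - 1) ≠ 0 := by nlinarith
      have h3' : (3 * ((n:ℚ) + 1) - 2) ≠ 0 := by nlinarith
      have h4' : (3 * ((n:ℚ) + 1) + 1) ≠ 0 := by positivity
      have h7' : (3 * ((n:ℚ) + 1) + 4) ≠ 0 := by positivity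
      have hS1 : Sf (n+1) = (3 * (n:ℚ) - 1) * Sf n / (3 * (n:ℚ) + 7) := by
        field_simp at hkey ⊢
        linarith [hkey]
      rw [hS1, hSn]
      push_cast
      field_simp
      ring
end

section
/- For every positive integer n, ∑_{j=0}^{n} C(n,j)·C(n+j,j)·(-1)^j·(H_{2j} - H_j)/(3j+4) = -9(2n+1)/(10(3n-1)(3n+4)) + [(2/3)_n / ((3n-1)(3n+1)(3n+4)·(1/3)_n)] · (9/10 + ∑_{k=1}^{n} (1/3)_k/(k·(2/3)_k)). -/
/-- The Pochhammer symbol (shifted factorial) `(a)_n = a(a+1)⋯(a+n-1)`. -/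
def poch (a : ℚ) (n : ℕ) : ℚ := ∏ i ∈ Finset.range n, (a + i)

lemma w_step (j : ℕ) : H (2*(j+1)) - H (j+1) = (H (2*j) - H j) + 1/((2*j+1)*(2*j+2)) := by
  have h2 : 2*(j+1) = (2*j+1)+1 := by ring
  rw [h2]
  simp only [H, Finset.sum_range_succ]
  push_cast
  have h1 : (2*(j:ℚ)+1) ≠ 0 := by positivity
  have h3 : (2*(j:ℚ)+2) ≠ 0 := by positivity
  have h4 : ((j:ℚ)+1) ≠ 0 := by positivity
  field_simp
  ring

def u (n j : ℕ) : ℚ := (-1)^j * (n.choose j) * ((n+1+j).choose j) / ((2*j+1)*(2*j+2))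

lemma cast_choose_succ_right (m j : ℕ) (hj : j ≤ m) :
    ((m.choose (j+1) : ℚ)) * ((j:ℚ)+1) = (m.choose j) * ((m:ℚ)-j) := by
  have h := Nat.choose_succ_right_eq m j
  have h' : (m.choose (j+1) : ℚ) * ((j:ℚ)+1) = (m.choose j : ℚ) * ((m - j : ℕ) : ℚ) := by
    exact_mod_cast h
  rw [Nat.cast_sub hj] at h'
  exact h'

lemma cast_choose_mul_succ (m j : ℕ) (hj : j ≤ m + 1) :
    ((m.choose j : ℚ)) * ((m:ℚ)+1) = ((m+1).choose j) * ((m:ℚ)+1-j) := by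
  have h := Nat.choose_mul_succ_eq m j
  have h' : (m.choose j : ℚ) * ((m:ℚ)+1) = ((m+1).choose j : ℚ) * ((m + 1 - j : ℕ) : ℚ) := by
    exact_mod_cast h
  rw [Nat.cast_sub hj] at h'
  push_cast at h'
  linarith

lemma cast_succ_mul_choose (m j : ℕ) :
    ((m:ℚ)+1) * (m.choose j) = ((m+1).choose (j+1)) * ((j:ℚ)+1) := by
  exact_mod_cast Nat.add_one_mul_choose_eq m j

def f (n j : ℕ) : ℚ :=
  (n.choose j : ℚ) * ((n + j).choose j : ℚ) * (-1) ^ j * (H (2 * j) - H j) / (3 * j + 4)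

def T (n j : ℕ) : ℚ :=
  (-1)^j * ((n+1).choose j) * ((n+1+j).choose j) *
    (-2*(j:ℚ)^2/(((n:ℚ)+1)*((n:ℚ)+1+j))) * (H (2*j) - H j)

lemma f_telescope (n j : ℕ) (hj : j ≤ n+1) :
    (3*(n:ℚ)+7) * f (n+1) j - (3*(n:ℚ)-1) * f n j + 2 * u n j = T n (j+1) - T n j := by
  have hxq : ((n:ℚ)+1) ≠ 0 := by positivity
  have hj1 : ((j:ℚ)+1) ≠ 0 := by positivity
  have h2j1 : (2*(j:ℚ)+1) ≠ 0 := by positivity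
  have h2j2 : (2*(j:ℚ)+2) ≠ 0 := by positivity
  have hn1j : ((n:ℚ)+1+j) ≠ 0 := by positivity
  have hn2j : ((n:ℚ)+2+j) ≠ 0 := by positivity
  have h3j4 : (3*(j:ℚ)+4) ≠ 0 := by positivity
  have e1 : ((n+1).choose (j+1) : ℚ) = ((n+1).choose j) * ((n:ℚ)+1-j) / ((j:ℚ)+1) := by
    rw [eq_div_iff hj1]
    have := cast_choose_succ_right (n+1) j hj
    push_cast at this ⊢; linarith
  have e2 : (n.choose j : ℚ) = ((n+1).choose j) * ((n:ℚ)+1-j) / ((n:ℚ)+1) := by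
    rw [eq_div_iff hxq]
    exact cast_choose_mul_succ n j hj
  have e3 : ((n+j).choose j : ℚ) = ((n+1+j).choose j) * ((n:ℚ)+1) / ((n:ℚ)+1+j) := by
    rw [eq_div_iff hn1j]
    have := cast_choose_mul_succ (n+j) j (by omega)
    rw [show n+j+1 = n+1+j from by omega] at this
    push_cast at this ⊢; linarith
  have e4 : ((n+1+(j+1)).choose (j+1) : ℚ) = ((n+1+j).choose j) * ((n:ℚ)+2+j) / ((j:ℚ)+1) := by
    rw [eq_div_iff hj1]
    have := cast_succ_mul_choose (n+1+j) j
    rw [show n+1+(j+1) = n+1+j+1 from by omega]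
    push_cast at this ⊢; linarith
  simp only [f, T, u, e1, e2, e3, e4, w_step, pow_succ]
  push_cast
  field_simp
  ring

def g (n j : ℕ) : ℚ := (-1)^j * ((n+1).choose j) * ((n+2+j).choose j) * (-(j:ℚ)) / (2*(n+1)*(n+2+j))

lemma u_telescope (n j : ℕ) (hj : j ≤ n+1) :
    ((n:ℚ)+2) * u (n+1) j - ((n:ℚ)+1) * u n j = g n (j+1) - g n j := by
  have hxq : ((n:ℚ)+1) ≠ 0 := by positivity
  have hj1 : ((j:ℚ)+1) ≠ 0 := by positivity
  have h2j1 : (2*(j:ℚ)+1) ≠ 0 := by positivity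
  have h2j2 : (2*(j:ℚ)+2) ≠ 0 := by positivity
  have hn2j : ((n:ℚ)+2+j) ≠ 0 := by positivity
  have hn3j : ((n:ℚ)+3+j) ≠ 0 := by positivity
  have e1 : ((n+1).choose (j+1) : ℚ) = ((n+1).choose j) * ((n:ℚ)+1-j) / ((j:ℚ)+1) := by
    rw [eq_div_iff hj1]
    have := cast_choose_succ_right (n+1) j hj
    push_cast at this ⊢; linarith
  have e2 : (n.choose j : ℚ) = ((n+1).choose j) * ((n:ℚ)+1-j) / ((n:ℚ)+1) := by
    rw [eq_div_iff hxq]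
    exact cast_choose_mul_succ n j hj
  have e3 : ((n+1+j).choose j : ℚ) = ((n+2+j).choose j) * ((n:ℚ)+2) / ((n:ℚ)+2+j) := by
    rw [eq_div_iff hn2j]
    have := cast_choose_mul_succ (n+1+j) j (by omega)
    rw [show n+1+j+1 = n+2+j from by omega] at this
    push_cast at this ⊢; linarith
  have e4 : ((n+2+(j+1)).choose (j+1) : ℚ) = ((n+2+j).choose j) * ((n:ℚ)+3+j) / ((j:ℚ)+1) := by
    rw [eq_div_iff hj1]
    have := cast_succ_mul_choose (n+2+j) j
    rw [show n+2+(j+1) = n+2+j+1 from by omega]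
    push_cast at this ⊢; linarith
  simp only [u, g, e1, e2, e3, e4, pow_succ]
  push_cast
  field_simp
  ring

lemma Usum_eq (n : ℕ) : ∑ j ∈ Finset.range (n+1), u n j = 1/(2*(n:ℚ)+2) := by
  induction n with
  | zero => norm_num [u]
  | succ n ih =>
    have tel : ∑ j ∈ Finset.range (n+2), (((n:ℚ)+2) * u (n+1) j - ((n:ℚ)+1) * u n j)
        = g n (n+2) - g n 0 := by
      rw [← Finset.sum_range_sub (g n) (n+2)]
      refine Finset.sum_congr rfl fun j hj => ?_
      exact u_telescope n j (by simpa using Nat.lt_succ_iff.mp (Finset.mem_range.mp hj))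
    have hg0 : g n 0 = 0 := by norm_num [g]
    have hgtop : g n (n+2) = 0 := by
      simp [g, Nat.choose_eq_zero_of_lt (by omega : n+1 < n+2)]
    have hzero : u n (n+1) = 0 := by
      simp [u, Nat.choose_eq_zero_of_lt (by omega : n < n+1)]
    rw [Finset.sum_sub_distrib, ← Finset.mul_sum, ← Finset.mul_sum] at tel
    have hsum2 : ∑ i ∈ Finset.range (n+2), u n i = 1/(2*(n:ℚ)+2) := by
      rw [Finset.sum_range_succ, hzero, add_zero, ih]
    rw [hsum2, hg0, hgtop] at tel
    rw [show n+1+1 = n+2 from by omega]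
    have hn2 : ((n:ℚ)+2) ≠ 0 := by positivity
    have : ((n:ℚ)+2) * ∑ j ∈ Finset.range (n+2), u (n+1) j = 1/2 := by
      have h1 : ((n:ℚ)+1) * (1/(2*(n:ℚ)+2)) = 1/2 := by
        field_simp
      linarith [tel]
    push_cast
    rw [eq_div_iff (by positivity : 2*((n:ℚ)+1)+2 ≠ 0)]
    field_simp at this ⊢
    linarith

lemma L_step (n : ℕ) :
    (3*(n:ℚ)+7) * (∑ j ∈ Finset.range (n+2), f (n+1) j)
      - (3*(n:ℚ)-1) * (∑ j ∈ Finset.range (n+1), f n j) = -1/((n:ℚ)+1) := by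
  have tel : ∑ j ∈ Finset.range (n+2),
      ((3*(n:ℚ)+7) * f (n+1) j - (3*(n:ℚ)-1) * f n j + 2 * u n j)
      = T n (n+2) - T n 0 := by
    rw [← Finset.sum_range_sub (T n) (n+2)]
    refine Finset.sum_congr rfl fun j hj => ?_
    exact f_telescope n j (by simpa using Nat.lt_succ_iff.mp (Finset.mem_range.mp hj))
  have hT0 : T n 0 = 0 := by norm_num [T]
  have hTtop : T n (n+2) = 0 := by
    simp [T, Nat.choose_eq_zero_of_lt (by omega : n+1 < n+2)]
  have hf0 : f n (n+1) = 0 := by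
    simp [f, Nat.choose_eq_zero_of_lt (by omega : n < n+1)]
  have hu0 : u n (n+1) = 0 := by
    simp [u, Nat.choose_eq_zero_of_lt (by omega : n < n+1)]
  rw [Finset.sum_add_distrib, Finset.sum_sub_distrib, ← Finset.mul_sum, ← Finset.mul_sum,
    ← Finset.mul_sum] at tel
  have hfn : ∑ j ∈ Finset.range (n+2), f n j = ∑ j ∈ Finset.range (n+1), f n j := by
    rw [Finset.sum_range_succ, hf0, add_zero]
  have hun : ∑ j ∈ Finset.range (n+2), u n j = 1/(2*(n:ℚ)+2) := by
    rw [Finset.sum_range_succ, hu0, add_zero, Usum_eq]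
  rw [hfn, hun, hT0, hTtop] at tel
  have hn1 : ((n:ℚ)+1) ≠ 0 := by positivity
  rw [neg_div, eq_comm, neg_eq_iff_eq_neg, div_eq_iff hn1]
  field_simp at tel ⊢
  linarith

lemma poch_succ (a : ℚ) (n : ℕ) : poch a (n+1) = poch a n * (a + n) :=
  Finset.prod_range_succ _ _

lemma poch_pos {a : ℚ} (ha : 0 < a) (n : ℕ) : 0 < poch a n :=
  Finset.prod_pos fun i _ => by positivity

def Rhs (n : ℕ) : ℚ :=
  -(9 * (2 * (n : ℚ) + 1)) / (10 * (3 * n - 1) * (3 * n + 4))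
    + poch (2 / 3) n / ((3 * (n : ℚ) - 1) * (3 * n + 1) * (3 * n + 4) * poch (1 / 3) n) *
      (9 / 10 + ∑ k ∈ Finset.Icc 1 n, poch (1 / 3) k / (k * poch (2 / 3) k))

lemma Rhs_step (n : ℕ) (hn : 1 ≤ n) :
    (3*(n:ℚ)+7) * Rhs (n+1) - (3*(n:ℚ)-1) * Rhs n = -1/((n:ℚ)+1) := by
  have hn1 : (1:ℚ) ≤ (n:ℚ) := by exact_mod_cast hn
  have hp : poch (1/3) n ≠ 0 := ne_of_gt (poch_pos (by norm_num) n)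
  have hq : poch (2/3) n ≠ 0 := ne_of_gt (poch_pos (by norm_num) n)
  have h1 : (3*(n:ℚ)-1) ≠ 0 := by linarith
  have h2 : (3*(n:ℚ)+1) ≠ 0 := by linarith
  have h3 : (3*(n:ℚ)+2) ≠ 0 := by linarith
  have h4 : (3*(n:ℚ)+4) ≠ 0 := by linarith
  have h5 : (3*(n:ℚ)+7) ≠ 0 := by linarith
  have h6 : ((n:ℚ)+1) ≠ 0 := by linarith
  have h7 : ((1:ℚ)/3+(n:ℚ)) ≠ 0 := by
    intro h; nlinarith [h]
  have h8 : ((2:ℚ)/3+(n:ℚ)) ≠ 0 := by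
    intro h; nlinarith [h]
  have h9 : (3*((n:ℚ)+1)-1) ≠ 0 := by linarith
  have h10 : (3*((n:ℚ)+1)+1) ≠ 0 := by linarith
  have h11 : (3*((n:ℚ)+1)+4) ≠ 0 := by linarith
  simp only [Rhs, Finset.sum_Icc_succ_top (by omega : 1 ≤ n+1), poch_succ]
  push_cast
  field_simp
  ring

lemma key_s9 (n : ℕ) (hn : 1 ≤ n) : ∑ j ∈ Finset.range (n+1), f n j = Rhs n := by
  induction n, hn using Nat.le_induction with
  | base =>
    norm_num [f, Rhs, H, poch, Finset.sum_range_succ, Finset.Icc_self, Finset.sum_singleton]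
  | succ n hn ih =>
    have h1 := L_step n
    have h2 := Rhs_step n hn
    have h5 : (3*(n:ℚ)+7) ≠ 0 := by positivity
    have h6 : (3*(n:ℚ)+7) * (∑ j ∈ Finset.range (n+2), f (n+1) j)
        = (3*(n:ℚ)+7) * Rhs (n+1) := by
      linear_combination h1 - h2 + (3*(n:ℚ)-1)*ih
    have h7 := mul_left_cancel₀ h5 h6
    rw [show n+1+1 = n+2 from by omega]
    exact h7

theorem stmt_9 (n : ℕ) (hn : 1 ≤ n) :
    ∑ j ∈ Finset.range (n + 1),
        (n.choose j : ℚ) * ((n + j).choose j : ℚ) * (-1) ^ j * (H (2 * j) - H j) / (3 * j + 4)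
      = -(9 * (2 * (n : ℚ) + 1)) / (10 * (3 * n - 1) * (3 * n + 4))
        + poch (2 / 3) n / ((3 * (n : ℚ) - 1) * (3 * n + 1) * (3 * n + 4) * poch (1 / 3) n) *
          (9 / 10 + ∑ k ∈ Finset.Icc 1 n, poch (1 / 3) k / (k * poch (2 / 3) k)) := by
  have h := key_s9 n hn
  simp only [f, Rhs] at h
  exact h
end

section
/- For every positive integer n and integer j with 0 ≤ 2j ≤ n-1, ∑_{k=2j}^{n-1} k³·C(k+j, 3j) = [j(j+1)(j+3) + n(2-j²)(3j+1) - n²(j+2)(3j+1)(3j+2) + n³(j+1)(3j+1)(3j+2)] / [(j+1)(3j+2)(3j+4)] · C(n+j, 3j+1). -/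
theorem stmt_10 (n j : ℕ) (hn : 1 ≤ n) (hj : 2 * j ≤ n - 1) :
    ∑ k ∈ Finset.Icc (2 * j) (n - 1), (k : ℚ) ^ 3 * ((k + j).choose (3 * j) : ℚ)
      = ((j : ℚ) * (j + 1) * (j + 3) + n * (2 - (j : ℚ) ^ 2) * (3 * j + 1)
          - (n : ℚ) ^ 2 * (j + 2) * (3 * j + 1) * (3 * j + 2)
          + (n : ℚ) ^ 3 * (j + 1) * (3 * j + 1) * (3 * j + 2))
        / ((j + 1) * (3 * (j : ℚ) + 2) * (3 * j + 4)) * ((n + j).choose (3 * j + 1) : ℚ) := by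
  have h : 2 * j + 1 ≤ n := by omega
  clear hn hj
  have hj1 : (j : ℚ) + 1 ≠ 0 := by positivity
  have hj2 : 3 * (j : ℚ) + 2 ≠ 0 := by positivity
  have hj4 : 3 * (j : ℚ) + 4 ≠ 0 := by positivity
  have hj3 : 3 * (j : ℚ) + 1 ≠ 0 := by positivity
  induction n, h using Nat.le_induction with
  | base =>
    have e1 : 2 * j + 1 - 1 = 2 * j := rfl
    rw [e1, Finset.Icc_self, Finset.sum_singleton]
    have e2 : 2 * j + j = 3 * j := by ring
    have e3 : 2 * j + 1 + j = 3 * j + 1 := by ring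
    rw [e2, e3, Nat.choose_self, Nat.choose_self]
    push_cast
    field_simp
    ring
  | succ n hn ih =>
    obtain ⟨m, rfl⟩ : ∃ m, n = m + 1 := ⟨n - 1, by omega⟩
    simp only [Nat.add_sub_cancel] at ih ⊢
    rw [Finset.sum_Icc_succ_top (by omega : 2 * j ≤ m + 1), ih]
    have hb : ((m + 1 + j).choose (3 * j + 1) : ℚ) * (3 * j + 1)
        = ((m + 1 + j).choose (3 * j) : ℚ) * (((m : ℚ) + 1) - 2 * j) := by
      have h1 := Nat.choose_succ_right_eq (m + 1 + j) (3 * j)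
      have h2 : m + 1 + j - 3 * j = m + 1 - 2 * j := by omega
      rw [h2] at h1
      have h3 : ((m + 1 - 2 * j : ℕ) : ℚ) = ((m : ℚ) + 1) - 2 * j := by
        have h4 : 2 * j ≤ m + 1 := by omega
        push_cast [h4]; ring
      calc ((m + 1 + j).choose (3 * j + 1) : ℚ) * (3 * j + 1)
          = (((m + 1 + j).choose (3 * j + 1) * (3 * j + 1) : ℕ) : ℚ) := by push_cast; ring
        _ = (((m + 1 + j).choose (3 * j) * (m + 1 - 2 * j) : ℕ) : ℚ) := by rw [h1]
        _ = ((m + 1 + j).choose (3 * j) : ℚ) * (((m : ℚ) + 1) - 2 * j) := by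
            push_cast [h3]; ring
    have hpas : ((m + 1 + 1 + j).choose (3 * j + 1) : ℚ)
        = ((m + 1 + j).choose (3 * j) : ℚ) + ((m + 1 + j).choose (3 * j + 1) : ℚ) := by
      have e : m + 1 + 1 + j = (m + 1 + j) + 1 := by ring
      rw [e, Nat.choose_succ_succ']
      push_cast; ring
    have hb' : ((m + 1 + j).choose (3 * j + 1) : ℚ)
        = ((m + 1 + j).choose (3 * j) : ℚ) * (((m : ℚ) + 1) - 2 * j) / (3 * j + 1) := by
      field_simp
      linarith [hb]
    rw [hpas, hb']
    push_cast
    field_simp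
    ring
end

section
/- For every positive integer n and integer j with 0 ≤ j ≤ n-1, ∑_{k=j}^{n-1} k³·C(k+2j, 3j) = [j(1+2j) + 2n(j+1)(3j+1) - 2n²(3j+1)(3j+2) + n³(3j+1)(3j+2)] / [(3j+2)(3j+4)] · C(n+2j, 3j+1). -/
theorem stmt_11 (n j : ℕ) (hn : 1 ≤ n) (hj : j ≤ n - 1) :
    ∑ k ∈ Finset.Icc j (n - 1), (k : ℚ) ^ 3 * ((k + 2 * j).choose (3 * j) : ℚ)
      = ((j : ℚ) * (1 + 2 * j) + 2 * n * (j + 1) * (3 * j + 1)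
          - 2 * (n : ℚ) ^ 2 * (3 * j + 1) * (3 * j + 2)
          + (n : ℚ) ^ 3 * (3 * j + 1) * (3 * j + 2))
        / ((3 * (j : ℚ) + 2) * (3 * j + 4)) * ((n + 2 * j).choose (3 * j + 1) : ℚ) := by
  have hn' : j + 1 ≤ n := by omega
  clear hn hj
  induction n, hn' using Nat.le_induction with
  | base =>
    have h1 : j + 1 - 1 = j := by omega
    rw [h1, Finset.Icc_self, Finset.sum_singleton]
    have h2 : j + 2 * j = 3 * j := by ring
    have h3 : (j + 1) + 2 * j = 3 * j + 1 := by ring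
    rw [h2, h3, Nat.choose_self, Nat.choose_self]
    push_cast
    have hd1 : (3 * (j : ℚ) + 2) ≠ 0 := by positivity
    have hd2 : (3 * (j : ℚ) + 4) ≠ 0 := by positivity
    field_simp
    ring
  | succ n hn ih =>
    have h1 : n + 1 - 1 = n := by omega
    have h2 : n - 1 + 1 = n := by omega
    rw [h1, ← h2, Finset.sum_Icc_succ_top (by omega : j ≤ n - 1 + 1), h2, ih]
    have hkey : ((n + 2 * j).choose (3 * j + 1) : ℚ) * (3 * (j : ℚ) + 1)
        = ((n + 2 * j).choose (3 * j) : ℚ) * ((n : ℚ) - j) := by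
      have := Nat.choose_succ_right_eq (n + 2 * j) (3 * j)
      have hsub : n + 2 * j - 3 * j = n - j := by omega
      rw [hsub] at this
      have : (((n + 2 * j).choose (3 * j + 1) * (3 * j + 1) : ℕ) : ℚ)
          = (((n + 2 * j).choose (3 * j) * (n - j) : ℕ) : ℚ) := by rw [this]
      push_cast [Nat.cast_sub (by omega : j ≤ n)] at this
      linarith [this]
    have hsucc : ((n + 1 + 2 * j).choose (3 * j + 1) : ℚ)
        = ((n + 2 * j).choose (3 * j) : ℚ) + ((n + 2 * j).choose (3 * j + 1) : ℚ) := by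
      have h3 : n + 1 + 2 * j = (n + 2 * j) + 1 := by ring
      rw [h3, Nat.choose_succ_succ]
      push_cast
      ring
    rw [hsucc]
    set a : ℚ := ((n + 2 * j).choose (3 * j) : ℚ) with ha
    set b : ℚ := ((n + 2 * j).choose (3 * j + 1) : ℚ) with hb
    have hd1 : (3 * (j : ℚ) + 2) ≠ 0 := by positivity
    have hd2 : (3 * (j : ℚ) + 4) ≠ 0 := by positivity
    have hd3 : (3 * (j : ℚ) + 1) ≠ 0 := by positivity
    have hb' : b = a * ((n : ℚ) - j) / (3 * (j : ℚ) + 1) := by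
      field_simp
      linarith [hkey]
    rw [hb']
    push_cast
    field_simp
    ring
end

section
/- For every nonnegative integer n, ∑_{k=0}^{n} C(n,k)²·C(2k,k)·C(2n-2k, n-k) = ∑_{k=0}^{n} (-1)^k·C(n+2k, 3k)·C(2k,k)²·C(3k,k)·16^{n-k}. -/
open Nat Finset
set_option maxHeartbeats 1600000

noncomputable def f1 (n k : ℕ) : ℚ :=
  (n.choose k : ℚ)^2 * ((2*k).choose k : ℚ) * ((2*n - 2*k).choose (n-k) : ℚ)

noncomputable def f2 (n k : ℕ) : ℚ :=
  (-1)^k * ((n+2*k).choose (3*k) : ℚ) * ((2*k).choose k : ℚ)^2 * ((3*k).choose k : ℚ) * 16^(n-k)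

def pp (n k : ℚ) : ℚ :=
  224*k^3 - 744*k^4 + 712*k^5 - 256*k^6 + 32*k^7
  + n*(1312*k^3 - 3268*k^4 + 2448*k^5 - 688*k^6 + 64*k^7)
  + n^2*(3032*k^3 - 5616*k^4 + 3112*k^5 - 608*k^6 + 32*k^7)
  + n^3*(3568*k^3 - 4708*k^4 + 1728*k^5 - 176*k^6)
  + n^4*(2264*k^3 - 1920*k^4 + 352*k^5)
  + n^5*(736*k^3 - 304*k^4) + n^6*(96*k^3)

noncomputable def g1 (n k : ℕ) : ℚ :=
  -(pp n k) * ((n+2).choose k : ℚ)^2 * ((2*k).choose k : ℚ) * ((2*(n+2-k)).choose (n+2-k) : ℚ)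
    / (4*((n:ℚ)+1)^2*((n:ℚ)+2)^2*(2*(n:ℚ)-2*(k:ℚ)+1)*(2*(n:ℚ)-2*(k:ℚ)+3))

noncomputable def g2 (n k : ℕ) : ℚ :=
  -768 * (k:ℚ)^4 * (3*(n:ℚ)+5) * (-1)^k * ((n+2+2*k).choose (3*k) : ℚ)
      * ((2*k).choose k : ℚ)^2 * ((3*k).choose k : ℚ) * 16^(n+2-k)
    / (256*((n:ℚ)+2*(k:ℚ)+1)*((n:ℚ)+2*(k:ℚ)+2))

noncomputable def T1 (k m : ℕ) : ℚ :=
  ((k+m)! : ℚ)^2 * ((2*k)! : ℚ) * ((2*m)! : ℚ) / (((k)! : ℚ)^4 * ((m)! : ℚ)^4)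

noncomputable def T2 (k m : ℕ) : ℚ :=
  (-1)^k * ((3*k+m)! : ℚ) * ((2*k)! : ℚ) * 16^m / (((k)! : ℚ)^5 * ((m)! : ℚ))

lemma fact1 (a : ℕ) : ((a+1)! : ℚ) = ((a:ℚ)+1)*((a)! : ℚ) := by
  rw [Nat.factorial_succ]; push_cast; ring

lemma fact2 (a : ℕ) : ((a+2)! : ℚ) = ((a:ℚ)+2)*((a:ℚ)+1)*((a)! : ℚ) := by
  rw [show a+2 = (a+1)+1 by omega, fact1, fact1]; push_cast; ring

lemma fact3 (a : ℕ) : ((a+3)! : ℚ) = ((a:ℚ)+3)*((a:ℚ)+2)*((a:ℚ)+1)*((a)! : ℚ) := by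
  rw [show a+3 = (a+2)+1 by omega, fact1, fact2]; push_cast; ring

lemma fact4 (a : ℕ) : ((a+4)! : ℚ) = ((a:ℚ)+4)*((a:ℚ)+3)*((a:ℚ)+2)*((a:ℚ)+1)*((a)! : ℚ) := by
  rw [show a+4 = (a+3)+1 by omega, fact1, fact3]; push_cast; ring

lemma fkm (k m : ℕ) : ((k+m)! : ℚ) ≠ 0 := by exact_mod_cast (k+m).factorial_ne_zero
lemma fk (k : ℕ) : ((k)! : ℚ) ≠ 0 := by exact_mod_cast k.factorial_ne_zero

-- term lemmas for f1 / g1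
lemma f1_eq0 (k m : ℕ) : f1 (k+m) k = T1 k m := by
  unfold f1 T1
  rw [show 2*(k+m) - 2*k = 2*m by omega, show (k+m) - k = m by omega,
      Nat.cast_choose ℚ (show k ≤ k+m by omega),
      Nat.cast_choose ℚ (show m ≤ 2*m by omega),
      Nat.cast_choose ℚ (show k ≤ 2*k by omega),
      show k+m-k = m by omega, show 2*m-m = m by omega, show 2*k-k = k by omega]
  field_simp

lemma f1_eq1 (k m : ℕ) :
    f1 (k+m+1) k = T1 k m * (((k:ℚ)+m+1)^2*2*(2*(m:ℚ)+1)/(((m:ℚ)+1)^3)) := by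
  unfold f1 T1
  rw [show 2*(k+m+1) - 2*k = 2*m+2 by omega, show (k+m+1) - k = m+1 by omega,
      Nat.cast_choose ℚ (show k ≤ k+m+1 by omega),
      Nat.cast_choose ℚ (show m+1 ≤ 2*m+2 by omega),
      Nat.cast_choose ℚ (show k ≤ 2*k by omega),
      show k+m+1-k = m+1 by omega, show 2*m+2-(m+1) = m+1 by omega, show 2*k-k = k by omega,
      show (2*m+2) = (2*m)+2 by omega, fact2, fact1, fact1]
  have h1 := fk k; have h2 := fk m; have h3 := fkm k m
  have h4 : ((m:ℚ)+1) ≠ 0 := by positivity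
  have h5 := fk (2*k); have h6 := fk (2*m)
  push_cast
  field_simp

lemma f1_eq2 (k m : ℕ) :
    f1 (k+m+2) k = T1 k m *
      (4*((k:ℚ)+m+2)^2*((k:ℚ)+m+1)^2*(2*(m:ℚ)+3)*(2*(m:ℚ)+1)/(((m:ℚ)+2)^3*((m:ℚ)+1)^3)) := by
  unfold f1 T1
  rw [show 2*(k+m+2) - 2*k = 2*m+4 by omega, show (k+m+2) - k = m+2 by omega,
      Nat.cast_choose ℚ (show k ≤ k+m+2 by omega),
      Nat.cast_choose ℚ (show m+2 ≤ 2*m+4 by omega),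
      Nat.cast_choose ℚ (show k ≤ 2*k by omega),
      show k+m+2-k = m+2 by omega, show 2*m+4-(m+2) = m+2 by omega, show 2*k-k = k by omega,
      show (2*m+4) = (2*m)+4 by omega, fact4, fact2, fact2]
  have h1 := fk k; have h2 := fk m; have h3 := fkm k m
  have h4 : ((m:ℚ)+1) ≠ 0 := by positivity
  have h4' : ((m:ℚ)+2) ≠ 0 := by positivity
  have h5 := fk (2*k); have h6 := fk (2*m)
  push_cast
  field_simp
  ring

lemma g1_eq0 (k m : ℕ) :
    g1 (k+m) k = T1 k m * (-(pp ((k:ℚ)+m) k) / (((m:ℚ)+1)^3*((m:ℚ)+2)^3)) := by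
  unfold g1 T1
  rw [show (k+m)+2-k = m+2 by omega, show 2*(m+2) = (2*m)+4 by omega,
      Nat.cast_choose ℚ (show k ≤ (k+m)+2 by omega),
      Nat.cast_choose ℚ (show m+2 ≤ (2*m)+4 by omega),
      Nat.cast_choose ℚ (show k ≤ 2*k by omega),
      show (k+m)+2-k = m+2 by omega, show (2*m)+4-(m+2) = m+2 by omega, show 2*k-k = k by omega,
      fact4, fact2, fact2]
  have h1 := fk k; have h2 := fk m; have h3 := fkm k m
  have h4 : ((m:ℚ)+1) ≠ 0 := by positivity
  have h4' : ((m:ℚ)+2) ≠ 0 := by positivity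
  have h5 := fk (2*k); have h6 := fk (2*m)
  have h7 : ((k:ℚ)+m+1) ≠ 0 := by positivity
  have h8 : ((k:ℚ)+m+2) ≠ 0 := by positivity
  have h9 : (2*(m:ℚ)+1) ≠ 0 := by positivity
  have h10 : (2*(m:ℚ)+3) ≠ 0 := by positivity
  push_cast
  rw [show 2*((k:ℚ)+(m:ℚ))-2*(k:ℚ)+1 = 2*(m:ℚ)+1 by ring,
      show 2*((k:ℚ)+(m:ℚ))-2*(k:ℚ)+3 = 2*(m:ℚ)+3 by ring]
  field_simp
  ring

lemma g1_eq1 (k m : ℕ) :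
    g1 (k+m) (k+1) = T1 k m *
      (-(pp ((k:ℚ)+m) ((k:ℚ)+1)) * (2*(k:ℚ)+1)
        / (((k:ℚ)+1)^3*((m:ℚ)+1)^3*(2*(m:ℚ)-1))) := by
  unfold g1 T1
  rw [show (k+m)+2-(k+1) = m+1 by omega, show 2*(m+1) = (2*m)+2 by omega,
      show 2*(k+1) = (2*k)+2 by omega,
      Nat.cast_choose ℚ (show k+1 ≤ (k+m)+2 by omega),
      Nat.cast_choose ℚ (show m+1 ≤ (2*m)+2 by omega),
      Nat.cast_choose ℚ (show k+1 ≤ (2*k)+2 by omega),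
      show (k+m)+2-(k+1) = m+1 by omega, show (2*m)+2-(m+1) = m+1 by omega,
      show (2*k)+2-(k+1) = k+1 by omega,
      fact2, fact2, fact2, fact1, fact1]
  have h1 := fk k; have h2 := fk m; have h3 := fkm k m
  have h4 : ((m:ℚ)+1) ≠ 0 := by positivity
  have h4' : ((k:ℚ)+1) ≠ 0 := by positivity
  have h5 := fk (2*k); have h6 := fk (2*m)
  have h7 : ((k:ℚ)+m+1) ≠ 0 := by positivity
  have h8 : ((k:ℚ)+m+2) ≠ 0 := by positivity
  have h9 : (2*(m:ℚ)+1) ≠ 0 := by positivity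
  have h11 : (2*(k:ℚ)+1) ≠ 0 := by positivity
  have h10 : (2*(m:ℚ)-1) ≠ 0 := by
    rcases Nat.eq_zero_or_pos m with h|h
    · subst h; norm_num
    · have : (1:ℚ) ≤ m := by exact_mod_cast h
      intro hh; linarith
  push_cast
  rw [show 2*((k:ℚ)+(m:ℚ))-2*((k:ℚ)+1)+1 = 2*(m:ℚ)-1 by ring,
      show 2*((k:ℚ)+(m:ℚ))-2*((k:ℚ)+1)+3 = 2*(m:ℚ)+1 by ring]
  field_simp
  ring

lemma T1_ne (k m : ℕ) : T1 k m ≠ 0 := by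
  unfold T1
  have h1 := fk k; have h2 := fk m; have h3 := fkm k m
  have h5 := fk (2*k); have h6 := fk (2*m)
  positivity

lemma key1_main (n k m : ℕ) (h : n = k + m) :
    ((n:ℚ)+2)^3 * f1 (n+2) k
      - 2*(2*(n:ℚ)+3)*(5*(n:ℚ)^2+15*(n:ℚ)+12) * f1 (n+1) k
      + 64*((n:ℚ)+1)^3 * f1 n k
    = g1 n (k+1) - g1 n k := by
  subst h
  rw [f1_eq2, f1_eq1, f1_eq0, g1_eq1, g1_eq0]
  have h4 : ((m:ℚ)+1) ≠ 0 := by positivity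
  have h4' : ((m:ℚ)+2) ≠ 0 := by positivity
  have hk1 : ((k:ℚ)+1) ≠ 0 := by positivity
  have h10 : (2*(m:ℚ)-1) ≠ 0 := by
    rcases Nat.eq_zero_or_pos m with h|h
    · subst h; norm_num
    · have : (1:ℚ) ≤ m := by exact_mod_cast h
      intro hh; linarith
  have hT := T1_ne k m
  have h10' : (m:ℚ)*2 - 1 ≠ 0 := by rwa [mul_comm]
  unfold pp
  push_cast
  field_simp
  ring

lemma key1_b1 (n : ℕ) :
    ((n:ℚ)+2)^3 * f1 (n+2) (n+1)
      - 2*(2*(n:ℚ)+3)*(5*(n:ℚ)^2+15*(n:ℚ)+12) * f1 (n+1) (n+1)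
      + 64*((n:ℚ)+1)^3 * f1 n (n+1)
    = g1 n ((n+1)+1) - g1 n (n+1) := by
  unfold f1 g1
  simp only [show (n+1)+1 = n+2 by omega, show 2*(n+2) - 2*(n+1) = 2 by omega,
    show (n+2)-(n+1) = 1 by omega, show 2*(n+1) - 2*(n+1) = 0 by omega,
    show (n+1)-(n+1) = 0 by omega, show n+2-(n+2) = 0 by omega,
    show 2*1 = 2 by omega, show 2*0 = 0 by omega,
    Nat.choose_self, Nat.choose_eq_zero_of_lt (show n < n+1 by omega),
    show (n+2).choose (n+1) = n+2 from by
      rw [show n+2 = (n+1)+1 by omega, Nat.choose_succ_self_right],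
    show Nat.choose 2 1 = 2 by decide, show Nat.choose 0 0 = 1 by decide]
  rw [show 2*(n+1) = 2*n+2 by omega, show 2*(n+2) = 2*n+4 by omega,
      Nat.cast_choose ℚ (show n+1 ≤ 2*n+2 by omega),
      Nat.cast_choose ℚ (show n+2 ≤ 2*n+4 by omega),
      show 2*n+2-(n+1) = n+1 by omega, show 2*n+4-(n+2) = n+2 by omega,
      show (2:ℕ)*n+4 = (2*n+2)+2 by omega]
  simp only [fact2, fact1]
  have h1 := fk (n+1); have h2 := fk (2*n+2); have h3 := fk n
  have h4 : ((n:ℚ)+1) ≠ 0 := by positivity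
  have h5 : ((n:ℚ)+2) ≠ 0 := by positivity
  unfold pp
  push_cast
  rw [show 2*(n:ℚ)-2*((n:ℚ)+1)+1 = -1 by ring, show 2*(n:ℚ)-2*((n:ℚ)+1)+3 = 1 by ring,
      show 2*(n:ℚ)-2*((n:ℚ)+2)+1 = -3 by ring, show 2*(n:ℚ)-2*((n:ℚ)+2)+3 = -1 by ring]
  field_simp
  ring

lemma key1_b2 (n : ℕ) :
    ((n:ℚ)+2)^3 * f1 (n+2) (n+2)
      - 2*(2*(n:ℚ)+3)*(5*(n:ℚ)^2+15*(n:ℚ)+12) * f1 (n+1) (n+2)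
      + 64*((n:ℚ)+1)^3 * f1 n (n+2)
    = g1 n ((n+2)+1) - g1 n (n+2) := by
  unfold f1 g1
  simp only [show (n+2)+1 = n+3 by omega,
    show 2*(n+2) - 2*(n+2) = 0 by omega, show (n+2)-(n+2) = 0 by omega,
    show n+2-(n+2) = 0 by omega, show 2*0 = 0 by omega,
    Nat.choose_eq_zero_of_lt (show n < n+2 by omega),
    Nat.choose_eq_zero_of_lt (show n+1 < n+2 by omega),
    Nat.choose_eq_zero_of_lt (show n+2 < n+3 by omega),
    Nat.choose_self, show Nat.choose 0 0 = 1 by decide]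
  have h4 : ((n:ℚ)+1) ≠ 0 := by positivity
  have h5 : ((n:ℚ)+2) ≠ 0 := by positivity
  unfold pp
  push_cast
  rw [show 2*(n:ℚ)-2*((n:ℚ)+2)+1 = -3 by ring, show 2*(n:ℚ)-2*((n:ℚ)+2)+3 = -1 by ring,
      show 2*(n:ℚ)-2*((n:ℚ)+3)+1 = -5 by ring, show 2*(n:ℚ)-2*((n:ℚ)+3)+3 = -3 by ring]
  field_simp
  ring

lemma key1 (n k : ℕ) (hk : k ≤ n+2) :
    ((n:ℚ)+2)^3 * f1 (n+2) k
      - 2*(2*(n:ℚ)+3)*(5*(n:ℚ)^2+15*(n:ℚ)+12) * f1 (n+1) k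
      + 64*((n:ℚ)+1)^3 * f1 n k
    = g1 n (k+1) - g1 n k := by
  rcases (show k ≤ n ∨ k = n+1 ∨ k = n+2 by omega) with h|h|h
  · exact key1_main n k (n-k) (by omega)
  · subst h; exact key1_b1 n
  · subst h; exact key1_b2 n

-- term lemmas for f2 / g2
lemma f2_eq0 (k m : ℕ) : f2 (k+m) k = T2 k m := by
  unfold f2 T2
  rw [show (k+m)+2*k = 3*k+m by omega, show (k+m)-k = m by omega,
      Nat.cast_choose ℚ (show 3*k ≤ 3*k+m by omega),
      Nat.cast_choose ℚ (show k ≤ 2*k by omega),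
      Nat.cast_choose ℚ (show k ≤ 3*k by omega),
      show 3*k+m-3*k = m by omega, show 2*k-k = k by omega, show 3*k-k = 2*k by omega]
  have h1 := fk k; have h2 := fk m; have h3 := fk (2*k); have h4 := fk (3*k)
  have h5 := fk (3*k+m)
  field_simp

lemma f2_eq1 (k m : ℕ) :
    f2 (k+m+1) k = T2 k m * (16*(3*(k:ℚ)+m+1)/((m:ℚ)+1)) := by
  unfold f2 T2
  rw [show (k+m+1)+2*k = (3*k+m)+1 by omega, show (k+m+1)-k = m+1 by omega,
      Nat.cast_choose ℚ (show 3*k ≤ (3*k+m)+1 by omega),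
      Nat.cast_choose ℚ (show k ≤ 2*k by omega),
      Nat.cast_choose ℚ (show k ≤ 3*k by omega),
      show (3*k+m)+1-3*k = m+1 by omega, show 2*k-k = k by omega,
      show 3*k-k = 2*k by omega, fact1, fact1, pow_succ]
  have h1 := fk k; have h2 := fk m; have h3 := fk (2*k); have h4 := fk (3*k)
  have h5 := fk (3*k+m)
  have h6 : ((m:ℚ)+1) ≠ 0 := by positivity
  push_cast
  field_simp; ring

lemma f2_eq2 (k m : ℕ) :
    f2 (k+m+2) k = T2 k m * (256*(3*(k:ℚ)+m+2)*(3*(k:ℚ)+m+1)/(((m:ℚ)+2)*((m:ℚ)+1))) := by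
  unfold f2 T2
  rw [show (k+m+2)+2*k = (3*k+m)+2 by omega, show (k+m+2)-k = m+2 by omega,
      Nat.cast_choose ℚ (show 3*k ≤ (3*k+m)+2 by omega),
      Nat.cast_choose ℚ (show k ≤ 2*k by omega),
      Nat.cast_choose ℚ (show k ≤ 3*k by omega),
      show (3*k+m)+2-3*k = m+2 by omega, show 2*k-k = k by omega,
      show 3*k-k = 2*k by omega, fact2, fact2, pow_succ, pow_succ]
  have h1 := fk k; have h2 := fk m; have h3 := fk (2*k); have h4 := fk (3*k)
  have h5 := fk (3*k+m)
  have h6 : ((m:ℚ)+1) ≠ 0 := by positivity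
  have h7 : ((m:ℚ)+2) ≠ 0 := by positivity
  push_cast
  field_simp; ring

lemma g2_eq0 (k m : ℕ) :
    g2 (k+m) k = T2 k m * (-768*(k:ℚ)^4*(3*(k:ℚ)+3*(m:ℚ)+5)/(((m:ℚ)+2)*((m:ℚ)+1))) := by
  unfold g2 T2
  rw [show (k+m)+2+2*k = (3*k+m)+2 by omega, show (k+m)+2-k = m+2 by omega,
      Nat.cast_choose ℚ (show 3*k ≤ (3*k+m)+2 by omega),
      Nat.cast_choose ℚ (show k ≤ 2*k by omega),
      Nat.cast_choose ℚ (show k ≤ 3*k by omega),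
      show (3*k+m)+2-3*k = m+2 by omega, show 2*k-k = k by omega,
      show 3*k-k = 2*k by omega, fact2, fact2, pow_succ, pow_succ]
  have h1 := fk k; have h2 := fk m; have h3 := fk (2*k); have h4 := fk (3*k)
  have h5 := fk (3*k+m)
  have h6 : ((m:ℚ)+1) ≠ 0 := by positivity
  have h7 : ((m:ℚ)+2) ≠ 0 := by positivity
  have h8 : 3*(k:ℚ)+(m:ℚ)+1 ≠ 0 := by positivity
  have h9 : 3*(k:ℚ)+(m:ℚ)+2 ≠ 0 := by positivity
  push_cast
  rw [show (k:ℚ)+(m:ℚ)+2*(k:ℚ)+1 = 3*(k:ℚ)+(m:ℚ)+1 by ring,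
      show (k:ℚ)+(m:ℚ)+2*(k:ℚ)+2 = 3*(k:ℚ)+(m:ℚ)+2 by ring]
  field_simp; ring

lemma g2_eq1 (k m : ℕ) :
    g2 (k+m) (k+1) = T2 k m *
      (96*(3*(k:ℚ)+3*(m:ℚ)+5)*(3*(k:ℚ)+m+2)*(3*(k:ℚ)+m+1)*(2*(k:ℚ)+1)/((m:ℚ)+1)) := by
  unfold g2 T2
  rw [show (k+m)+2+2*(k+1) = (3*k+m)+4 by omega, show 3*(k+1) = 3*k+3 by omega,
      show (k+m)+2-(k+1) = m+1 by omega, show 2*(k+1) = 2*k+2 by omega,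
      Nat.cast_choose ℚ (show 3*k+3 ≤ (3*k+m)+4 by omega),
      Nat.cast_choose ℚ (show k+1 ≤ 2*k+2 by omega),
      Nat.cast_choose ℚ (show k+1 ≤ 3*k+3 by omega),
      show (3*k+m)+4-(3*k+3) = m+1 by omega, show 2*k+2-(k+1) = k+1 by omega,
      show 3*k+3-(k+1) = 2*k+2 by omega,
      show (3:ℕ)*k+3 = (3*k)+3 by omega, show (2:ℕ)*k+2 = (2*k)+2 by omega]
  simp only [fact4, fact3, fact2, fact1, pow_succ]
  have h1 := fk k; have h2 := fk m; have h3 := fk (2*k); have h4 := fk (3*k)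
  have h5 := fk (3*k+m)
  have h6 : ((m:ℚ)+1) ≠ 0 := by positivity
  have h7 : ((k:ℚ)+1) ≠ 0 := by positivity
  have h8 : 3*(k:ℚ)+(m:ℚ)+3 ≠ 0 := by positivity
  have h9 : 3*(k:ℚ)+(m:ℚ)+4 ≠ 0 := by positivity
  push_cast
  rw [show (k:ℚ)+(m:ℚ)+2*((k:ℚ)+1)+1 = 3*(k:ℚ)+(m:ℚ)+3 by ring,
      show (k:ℚ)+(m:ℚ)+2*((k:ℚ)+1)+2 = 3*(k:ℚ)+(m:ℚ)+4 by ring]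
  field_simp; ring

lemma key2_main (n k m : ℕ) (h : n = k + m) :
    ((n:ℚ)+2)^3 * f2 (n+2) k
      - 2*(2*(n:ℚ)+3)*(5*(n:ℚ)^2+15*(n:ℚ)+12) * f2 (n+1) k
      + 64*((n:ℚ)+1)^3 * f2 n k
    = g2 n (k+1) - g2 n k := by
  subst h
  rw [f2_eq2, f2_eq1, f2_eq0, g2_eq1, g2_eq0]
  have h4 : ((m:ℚ)+1) ≠ 0 := by positivity
  have h4' : ((m:ℚ)+2) ≠ 0 := by positivity
  push_cast
  field_simp
  ring

lemma key2_b1 (n : ℕ) :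
    ((n:ℚ)+2)^3 * f2 (n+2) (n+1)
      - 2*(2*(n:ℚ)+3)*(5*(n:ℚ)^2+15*(n:ℚ)+12) * f2 (n+1) (n+1)
      + 64*((n:ℚ)+1)^3 * f2 n (n+1)
    = g2 n ((n+1)+1) - g2 n (n+1) := by
  unfold f2 g2
  simp only [show (n+1)+1 = n+2 by omega,
    show (n+2)+2*(n+1) = 3*(n+1)+1 by omega,
    show (n+1)+2*(n+1) = 3*(n+1) by omega,
    show n+2+2*(n+1) = 3*(n+1)+1 by omega,
    show n+2+2*(n+2) = 3*(n+2) by omega,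
    show (n+2)-(n+1) = 1 by omega, show (n+1)-(n+1) = 0 by omega,
    show n+2-(n+1) = 1 by omega, show n+2-(n+2) = 0 by omega,
    Nat.choose_self, Nat.choose_succ_self_right,
    Nat.choose_eq_zero_of_lt (show n+2*(n+1) < 3*(n+1) by omega),
    pow_zero, pow_one]
  rw [show 2*(n+1) = 2*n+2 by omega, show 2*(n+2) = (2*n+2)+2 by omega,
      show 3*(n+1) = 3*n+3 by omega, show 3*(n+2) = (3*n+3)+3 by omega,
      Nat.cast_choose ℚ (show n+1 ≤ 2*n+2 by omega),
      Nat.cast_choose ℚ (show n+2 ≤ (2*n+2)+2 by omega),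
      Nat.cast_choose ℚ (show n+1 ≤ 3*n+3 by omega),
      Nat.cast_choose ℚ (show n+2 ≤ (3*n+3)+3 by omega),
      show 2*n+2-(n+1) = n+1 by omega, show (2*n+2)+2-(n+2) = (n+1)+1 by omega,
      show 3*n+3-(n+1) = 2*n+2 by omega, show (3*n+3)+3-(n+2) = (2*n+2)+2 by omega]
  simp only [fact4, fact3, fact2, fact1]
  have h1 := fk (n+1); have h2 := fk (2*n+2); have h3 := fk (3*n+3)
  have h4 : ((n:ℚ)+1) ≠ 0 := by positivity
  have h5 : ((n:ℚ)+2) ≠ 0 := by positivity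
  have e1 : ((-1:ℚ))^(n+1) = -(-1)^n := by rw [pow_succ]; ring
  have e2 : ((-1:ℚ))^(n+2) = (-1)^n := by rw [pow_succ, pow_succ]; ring
  rw [e1, e2]
  push_cast
  have d1 : (n:ℚ)+2*((n:ℚ)+1)+1 ≠ 0 := by positivity
  have d2 : (n:ℚ)+2*((n:ℚ)+1)+2 ≠ 0 := by positivity
  have d3 : (n:ℚ)+2*((n:ℚ)+2)+1 ≠ 0 := by positivity
  have d4 : (n:ℚ)+2*((n:ℚ)+2)+2 ≠ 0 := by positivity
  field_simp
  ring

lemma key2_b2 (n : ℕ) :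
    ((n:ℚ)+2)^3 * f2 (n+2) (n+2)
      - 2*(2*(n:ℚ)+3)*(5*(n:ℚ)^2+15*(n:ℚ)+12) * f2 (n+1) (n+2)
      + 64*((n:ℚ)+1)^3 * f2 n (n+2)
    = g2 n ((n+2)+1) - g2 n (n+2) := by
  unfold f2 g2
  simp only [show (n+2)+1 = n+3 by omega,
    show (n+2)+2*(n+2) = 3*(n+2) by omega,
    show n+2+2*(n+2) = 3*(n+2) by omega,
    show (n+2)-(n+2) = 0 by omega, show n+2-(n+2) = 0 by omega,
    Nat.choose_self,
    Nat.choose_eq_zero_of_lt (show n+2*(n+2) < 3*(n+2) by omega),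
    Nat.choose_eq_zero_of_lt (show (n+1)+2*(n+2) < 3*(n+2) by omega),
    Nat.choose_eq_zero_of_lt (show n+2+2*(n+3) < 3*(n+3) by omega),
    pow_zero]
  have e2 : ((-1:ℚ))^(n+2) = (-1)^n := by rw [pow_succ, pow_succ]; ring
  rw [e2]
  push_cast
  have h4 : ((n:ℚ)+1) ≠ 0 := by positivity
  have h5 : ((n:ℚ)+2) ≠ 0 := by positivity
  have d3 : (n:ℚ)+2*((n:ℚ)+2)+1 ≠ 0 := by positivity
  have d4 : (n:ℚ)+2*((n:ℚ)+2)+2 ≠ 0 := by positivity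
  have d5 : (n:ℚ)+2*((n:ℚ)+3)+1 ≠ 0 := by positivity
  have d6 : (n:ℚ)+2*((n:ℚ)+3)+2 ≠ 0 := by positivity
  field_simp
  ring

lemma key2 (n k : ℕ) (hk : k ≤ n+2) :
    ((n:ℚ)+2)^3 * f2 (n+2) k
      - 2*(2*(n:ℚ)+3)*(5*(n:ℚ)^2+15*(n:ℚ)+12) * f2 (n+1) k
      + 64*((n:ℚ)+1)^3 * f2 n k
    = g2 n (k+1) - g2 n k := by
  rcases (show k ≤ n ∨ k = n+1 ∨ k = n+2 by omega) with h|h|h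
  · exact key2_main n k (n-k) (by omega)
  · subst h; exact key2_b1 n
  · subst h; exact key2_b2 n

noncomputable def S1 (n : ℕ) : ℚ := ∑ k ∈ Finset.range (n+1), f1 n k
noncomputable def S2 (n : ℕ) : ℚ := ∑ k ∈ Finset.range (n+1), f2 n k

lemma f1_zero (n k : ℕ) (h : n < k) : f1 n k = 0 := by
  unfold f1; rw [Nat.choose_eq_zero_of_lt h]; push_cast; ring

lemma f2_zero (n k : ℕ) (h : n < k) : f2 n k = 0 := by
  unfold f2; rw [Nat.choose_eq_zero_of_lt (show n+2*k < 3*k by omega)]; push_cast; ring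

lemma S1_ext (m N : ℕ) (h : m+1 ≤ N) : S1 m = ∑ k ∈ Finset.range N, f1 m k := by
  unfold S1
  refine Finset.sum_subset (Finset.range_subset_range.2 h) ?_
  intro x _ hx
  exact f1_zero m x (by simp only [Finset.mem_range] at hx; omega)

lemma S2_ext (m N : ℕ) (h : m+1 ≤ N) : S2 m = ∑ k ∈ Finset.range N, f2 m k := by
  unfold S2
  refine Finset.sum_subset (Finset.range_subset_range.2 h) ?_
  intro x _ hx
  exact f2_zero m x (by simp only [Finset.mem_range] at hx; omega)

lemma g1_zero (n : ℕ) : g1 n 0 = 0 := by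
  unfold g1 pp; norm_num

lemma g1_top (n : ℕ) : g1 n (n+3) = 0 := by
  unfold g1
  rw [Nat.choose_eq_zero_of_lt (show n+2 < n+3 by omega)]
  push_cast; ring

lemma g2_zero (n : ℕ) : g2 n 0 = 0 := by
  unfold g2; norm_num

lemma g2_top (n : ℕ) : g2 n (n+3) = 0 := by
  unfold g2
  rw [Nat.choose_eq_zero_of_lt (show n+2+2*(n+3) < 3*(n+3) by omega)]
  push_cast; ring

lemma rec1 (n : ℕ) :
    ((n:ℚ)+2)^3 * S1 (n+2)
      = 2*(2*(n:ℚ)+3)*(5*(n:ℚ)^2+15*(n:ℚ)+12) * S1 (n+1) - 64*((n:ℚ)+1)^3 * S1 n := by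
  have h1 : S1 (n+2) = ∑ k ∈ Finset.range (n+3), f1 (n+2) k := S1_ext (n+2) (n+3) (by omega)
  have h2 : S1 (n+1) = ∑ k ∈ Finset.range (n+3), f1 (n+1) k := S1_ext (n+1) (n+3) (by omega)
  have h3 : S1 n = ∑ k ∈ Finset.range (n+3), f1 n k := S1_ext n (n+3) (by omega)
  have big : ∑ k ∈ Finset.range (n+3),
      (((n:ℚ)+2)^3 * f1 (n+2) k
        - 2*(2*(n:ℚ)+3)*(5*(n:ℚ)^2+15*(n:ℚ)+12) * f1 (n+1) k
        + 64*((n:ℚ)+1)^3 * f1 n k) = 0 := by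
    rw [Finset.sum_congr rfl (fun k hk => key1 n k (by simp only [Finset.mem_range] at hk; omega)),
        Finset.sum_range_sub (g1 n), g1_top, g1_zero]
    ring
  simp only [Finset.sum_add_distrib, Finset.sum_sub_distrib, ← Finset.mul_sum] at big
  rw [h1, h2, h3]
  linarith [big]

lemma rec2 (n : ℕ) :
    ((n:ℚ)+2)^3 * S2 (n+2)
      = 2*(2*(n:ℚ)+3)*(5*(n:ℚ)^2+15*(n:ℚ)+12) * S2 (n+1) - 64*((n:ℚ)+1)^3 * S2 n := by
  have h1 : S2 (n+2) = ∑ k ∈ Finset.range (n+3), f2 (n+2) k := S2_ext (n+2) (n+3) (by omega)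
  have h2 : S2 (n+1) = ∑ k ∈ Finset.range (n+3), f2 (n+1) k := S2_ext (n+1) (n+3) (by omega)
  have h3 : S2 n = ∑ k ∈ Finset.range (n+3), f2 n k := S2_ext n (n+3) (by omega)
  have big : ∑ k ∈ Finset.range (n+3),
      (((n:ℚ)+2)^3 * f2 (n+2) k
        - 2*(2*(n:ℚ)+3)*(5*(n:ℚ)^2+15*(n:ℚ)+12) * f2 (n+1) k
        + 64*((n:ℚ)+1)^3 * f2 n k) = 0 := by
    rw [Finset.sum_congr rfl (fun k hk => key2 n k (by simp only [Finset.mem_range] at hk; omega)),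
        Finset.sum_range_sub (g2 n), g2_top, g2_zero]
    ring
  simp only [Finset.sum_add_distrib, Finset.sum_sub_distrib, ← Finset.mul_sum] at big
  rw [h1, h2, h3]
  linarith [big]

lemma base0 : S1 0 = S2 0 := by
  unfold S1 S2 f1 f2
  simp [Finset.sum_range_succ]

lemma base1 : S1 1 = S2 1 := by
  unfold S1 S2 f1 f2
  simp [Finset.sum_range_succ]
  norm_num [Nat.choose]

lemma SS (n : ℕ) : S1 n = S2 n ∧ S1 (n+1) = S2 (n+1) := by
  induction n with
  | zero => exact ⟨base0, base1⟩
  | succ n ih =>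
    refine ⟨ih.2, ?_⟩
    have h3 : ((n:ℚ)+2)^3 ≠ 0 := by positivity
    have key : ((n:ℚ)+2)^3 * S1 (n+2) = ((n:ℚ)+2)^3 * S2 (n+2) := by
      rw [rec1, rec2, ih.1, ih.2]
    exact mul_left_cancel₀ h3 key

theorem stmt_12 (n : ℕ) :
    ∑ k ∈ Finset.range (n + 1),
        ((n.choose k : ℤ) ^ 2 * ((2 * k).choose k : ℤ) * ((2 * n - 2 * k).choose (n - k) : ℤ))
      = ∑ k ∈ Finset.range (n + 1),
        ((-1) ^ k * ((n + 2 * k).choose (3 * k) : ℤ) * ((2 * k).choose k : ℤ) ^ 2 *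
          ((3 * k).choose k : ℤ) * 16 ^ (n - k)) := by
  have h := (SS n).1
  unfold S1 S2 f1 f2 at h
  exact_mod_cast h
end
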